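/- arXiv:2401.16358 — 6 statements merged into one kernel-verified Lean document; each statement's English description precedes it below -/
import Mathlib

section
/- Let p ∈ Ass_R(M). Set X_p := {q ∈ Ass_R(M) : p ⊊ q}; let V := R if X_p = ∅, and V := ∏_{q ∈ X_p} q otherwise. Then v_p(M) = inf{u ∈ ℤ : there exists a homogeneous element x of M of degree u such that p·x = 0 and x ∉ Γ_V(M)}; in other words, v_p(M) equals the initial degree of the graded R-module ann_M(p)/(ann_M(p) ∩ Γ_V(M)). -/
open Submodule

section AuxLemmas

variable {R M : Type*} [CommRing R] [AddCommGroup M] [Module R M]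

/-- Annihilators of elements of a submodule agree with the ambient ones. -/
lemma aux_ann_submodule (N : Submodule R M) (y : N) :
    (Submodule.span R {y}).annihilator = (Submodule.span R {(y : M)}).annihilator := by
  ext r
  rw [Submodule.mem_annihilator_span_singleton, Submodule.mem_annihilator_span_singleton]
  constructor
  · intro h
    have := congrArg (Subtype.val) h
    simpa using this
  · intro h
    ext
    simpa using h

/-- An associated prime of `M` is associated to a submodule `N` or to `M ⧸ N`. -/
lemma aux_assPrime_or [IsNoetherianRing R] {p : Ideal R} (h : IsAssociatedPrime p M) (N : Submodule R M) :
    IsAssociatedPrime p N ∨ IsAssociatedPrime p (M ⧸ N) := by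
  obtain ⟨hprime, x, hx⟩ := isAssociatedPrime_iff.mp h
  have hmem : ∀ r : R, r ∈ p ↔ r • x = 0 := by
    intro r
    rw [hx, Submodule.mem_colon_singleton, Submodule.mem_bot]
  by_cases hb : Submodule.span R {x} ⊓ N = ⊥
  · right
    refine isAssociatedPrime_iff.mpr ⟨hprime, Submodule.Quotient.mk x, ?_⟩
    ext r
    rw [Submodule.mem_colon_singleton, Submodule.mem_bot, ← Submodule.Quotient.mk_smul,
      Submodule.Quotient.mk_eq_zero]
    constructor
    · intro hr
      rw [(hmem r).mp hr]
      exact N.zero_mem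
    · intro hr
      have hmem2 : r • x ∈ Submodule.span R {x} ⊓ N :=
        ⟨Submodule.smul_mem _ r (Submodule.mem_span_singleton_self x), hr⟩
      rw [hb, Submodule.mem_bot] at hmem2
      exact (hmem r).mpr hmem2
  · left
    obtain ⟨y, hy, hy0⟩ := Submodule.ne_bot_iff _ |>.mp hb
    obtain ⟨hyx, hyN⟩ := Submodule.mem_inf.mp hy
    obtain ⟨r, rfl⟩ := Submodule.mem_span_singleton.mp hyx
    have hrp : r ∉ p := fun hr => hy0 ((hmem r).mp hr)
    refine isAssociatedPrime_iff.mpr ⟨hprime, ⟨r • x, hyN⟩, ?_⟩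
    rw [Submodule.bot_colon', aux_ann_submodule]
    ext s
    rw [Submodule.mem_annihilator_span_singleton]
    constructor
    · intro hs
      rw [smul_smul]
      exact (hmem _).mp (Ideal.mul_mem_right r p hs)
    · intro hs
      rw [smul_smul] at hs
      rcases hprime.mem_or_mem ((hmem _).mpr hs) with h | h
      · exact h
      · exact absurd h hrp

end AuxLemmas

section Finiteness

variable (R M : Type*) [CommRing R] [IsNoetherianRing R]
  [AddCommGroup M] [Module R M] [Module.Finite R M]

/-- Finiteness of the set of associated primes over a Noetherian ring. -/
lemma aux_associatedPrimes_finite : (associatedPrimes R M).Finite := by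
  have key : ∀ N : Submodule R M, (associatedPrimes R (M ⧸ N)).Finite := by
    intro N
    induction N using IsNoetherian.induction with
    | _ N ih =>
      rcases Set.eq_empty_or_nonempty (associatedPrimes R (M ⧸ N)) with hE | ⟨p, hp⟩
      · rw [hE]; exact Set.finite_empty
      obtain ⟨hprime, xbar, hx⟩ := isAssociatedPrime_iff.mp hp
      obtain ⟨x, rfl⟩ := Submodule.Quotient.mk_surjective N xbar
      have hmem : ∀ r : R, r ∈ p ↔ r • (Submodule.Quotient.mk x : M ⧸ N) = 0 := by
        intro r
        rw [hx, Submodule.mem_colon_singleton, Submodule.mem_bot]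
      have hxN : x ∉ N := by
        intro hxN
        have : (Submodule.Quotient.mk x : M ⧸ N) = 0 :=
          (Submodule.Quotient.mk_eq_zero N).mpr hxN
        have h1 : (1 : R) ∈ p := by rw [hmem]; rw [this, smul_zero]
        exact hprime.ne_top ((Ideal.eq_top_iff_one p).mpr h1)
      set J := N ⊔ Submodule.span R {x} with hJdef
      have hNJ : N < J := by
        refine lt_of_le_of_ne le_sup_left ?_
        intro hEq
        apply hxN
        rw [hEq]
        exact Submodule.mem_sup_right (Submodule.mem_span_singleton_self x)
      have hJfin := ih J hNJ
      have hker : LinearMap.ker (LinearMap.toSpanSingleton R (M ⧸ N)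
          (Submodule.Quotient.mk x)) = p := by
        ext r
        rw [LinearMap.mem_ker, LinearMap.toSpanSingleton_apply, hmem]
      have e1 : (R ⧸ p) ≃ₗ[R] ↥(Submodule.span R {(Submodule.Quotient.mk x : M ⧸ N)}) :=
        (Submodule.quotEquivOfEq p _ hker.symm).trans
          ((LinearMap.quotKerEquivRange _).trans
            (LinearEquiv.ofEq _ _ (LinearMap.span_singleton_eq_range R (M ⧸ N)
              (Submodule.Quotient.mk x)).symm))
      have hsingleton :
          associatedPrimes R ↥(Submodule.span R {(Submodule.Quotient.mk x : M ⧸ N)}) = {p} := by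
        rw [← LinearEquiv.AssociatedPrimes.eq e1,
          associatedPrimes.eq_singleton_of_isPrimary hprime.isPrimary, hprime.radical]
      have hmap : J.map N.mkQ = Submodule.span R {(Submodule.Quotient.mk x : M ⧸ N)} := by
        have hNbot : N.map N.mkQ = ⊥ := by
          rw [Submodule.eq_bot_iff]
          rintro z ⟨w, hw, rfl⟩
          simpa [Submodule.mkQ_apply, Submodule.Quotient.mk_eq_zero] using hw
        rw [hJdef, Submodule.map_sup, hNbot, bot_sup_eq, Submodule.map_span,
          Set.image_singleton, Submodule.mkQ_apply]
      have e2 : ((M ⧸ N) ⧸ Submodule.span R {(Submodule.Quotient.mk x : M ⧸ N)}) ≃ₗ[R]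
          (M ⧸ J) :=
        (Submodule.quotEquivOfEq _ _ hmap.symm).trans
          (Submodule.quotientQuotientEquivQuotient N J hNJ.le)
      have hsub : associatedPrimes R (M ⧸ N) ⊆
          insert p (associatedPrimes R (M ⧸ J)) := by
        intro q hq
        rcases aux_assPrime_or hq (Submodule.span R {(Submodule.Quotient.mk x : M ⧸ N)})
          with hql | hqr
        · left
          have : q ∈ associatedPrimes R
              ↥(Submodule.span R {(Submodule.Quotient.mk x : M ⧸ N)}) := hql
          rw [hsingleton] at this
          exact this
        · right
          rw [← LinearEquiv.AssociatedPrimes.eq e2]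
          exact hqr
      exact (Set.Finite.insert p hJfin).subset hsub
  have := key ⊥
  have e : (M ⧸ (⊥ : Submodule R M)) ≃ₗ[R] M := Submodule.quotEquivOfEqBot ⊥ rfl
  rwa [LinearEquiv.AssociatedPrimes.eq e] at this

end Finiteness

/-- Let `R` be a commutative Noetherian ℕ-graded ring (encoded as a ℤ-graded
ring whose negatively graded components vanish), and `M` a finitely generated ℤ-graded
`R`-module.  Let `p ∈ Ass_R(M)`, let `Xp := {q ∈ Ass_R(M) | p ⊊ q}`, and let
`V := ∏_{q ∈ Xp} q` (which is the unit ideal `R` when `Xp = ∅`, by the convention of the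
finitary product).  Let `Γ := Γ_V(M) = ⋃_{n ≥ 1} (0 :_M V^n)`.  Then the v-number
`v_p(M) = inf{u | ∃ homogeneous x ∈ M_u, p = (0 :_R x)}` equals the initial degree of
`ann_M(p)/(ann_M(p) ∩ Γ_V(M))`, i.e. the infimum of the degrees `u` for which there is a
homogeneous `x ∈ M_u` with `p • x = 0` and `x ∉ Γ_V(M)`. -/
theorem v_number_eq_indeg_ann_mod_gamma
    {R M : Type*} [CommRing R] [IsNoetherianRing R]
    [AddCommGroup M] [Module R M] [Module.Finite R M]
    (𝒜 : ℤ → AddSubgroup R) (ℳ : ℤ → AddSubgroup M)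
    [GradedRing 𝒜] [DirectSum.Decomposition ℳ]
    (hsmul : ∀ (i j : ℤ), ∀ r ∈ 𝒜 i, ∀ x ∈ ℳ j, r • x ∈ ℳ (i + j))
    (hA : ∀ i : ℤ, i < 0 → 𝒜 i = ⊥)
    (p : Ideal R) (hp : p ∈ associatedPrimes R M)
    (Xp : Set (Ideal R)) (hXp : Xp = {q | q ∈ associatedPrimes R M ∧ p < q})
    (V : Ideal R) (hV : V = ∏ᶠ q ∈ Xp, q)
    (Γ : Set M) (hΓ : Γ = {x : M | ∃ n : ℕ, 1 ≤ n ∧ ∀ r ∈ V ^ n, r • x = 0}) :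
    sInf {u : ℤ | ∃ x ∈ ℳ u, p = (Submodule.span R {x}).annihilator}
      = sInf {u : ℤ | ∃ x ∈ ℳ u, (∀ r ∈ p, r • x = 0) ∧ x ∉ Γ} := by
  classical
  have hpprime : p.IsPrime := hp.isPrime
  -- Finiteness of `Xp` and basic properties of `V`.
  have hassfin : (associatedPrimes R M).Finite := aux_associatedPrimes_finite R M
  have hXpfin : Xp.Finite := hassfin.subset (by rw [hXp]; exact fun q hq => hq.1)
  have hVprod : V = ∏ q ∈ hXpfin.toFinset, q := by
    rw [hV, ← finprod_mem_coe_finset, hXpfin.coe_toFinset]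
  have hF2 : ∀ q ∈ Xp, V ≤ q := by
    intro q hq
    rw [hVprod, ← Finset.mul_prod_erase _ _ (hXpfin.mem_toFinset.mpr hq)]
    exact Ideal.mul_le_left
  have hF3 : ¬ V ≤ p := by
    intro hle
    rw [hVprod] at hle
    obtain ⟨q, hq, hqp⟩ := (Ideal.IsPrime.prod_le hpprime).mp hle
    rw [Set.Finite.mem_toFinset, hXp] at hq
    exact absurd (lt_of_lt_of_le hq.2 hqp) (lt_irrefl p)
  -- The torsion submodule `Γ'` with carrier `Γ`.
  have hΓmem : ∀ x : M, x ∈ Γ ↔ ∃ n : ℕ, 1 ≤ n ∧ ∀ r ∈ V ^ n, r • x = 0 := by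
    intro x; rw [hΓ]; rfl
  let Γ' : Submodule R M :=
    { carrier := Γ
      zero_mem' := (hΓmem 0).mpr ⟨1, le_refl 1, fun r _ => smul_zero r⟩
      add_mem' := by
        intro a b ha hb
        obtain ⟨n, hn, hka⟩ := (hΓmem a).mp ha
        obtain ⟨m, hm, hkb⟩ := (hΓmem b).mp hb
        refine (hΓmem (a + b)).mpr ⟨n + m, le_trans hn (Nat.le_add_right n m), ?_⟩
        intro r hr
        rw [smul_add, hka r (Ideal.pow_le_pow_right (Nat.le_add_right n m) hr),
          hkb r (Ideal.pow_le_pow_right (Nat.le_add_left m n) hr), add_zero]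
      smul_mem' := by
        intro c x hx
        obtain ⟨n, hn, hk⟩ := (hΓmem x).mp hx
        refine (hΓmem (c • x)).mpr ⟨n, hn, ?_⟩
        intro r hr
        rw [smul_comm, hk r hr, smul_zero] }
  have hΓ'mem : ∀ x : M, x ∈ Γ' ↔ x ∈ Γ := fun _ => Iff.rfl
  -- Uniform torsion exponent on `Γ'`.
  obtain ⟨n₀, hn₀, hkey⟩ : ∃ n₀ : ℕ, 1 ≤ n₀ ∧ ∀ m ∈ Γ', ∀ r ∈ V ^ n₀, r • m = 0 := by
    obtain ⟨s, hs⟩ := (IsNoetherian.noetherian Γ' : Γ'.FG)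
    have hgen : ∀ g : {g // g ∈ s}, ∃ n : ℕ, 1 ≤ n ∧ ∀ r ∈ V ^ n, r • (g : M) = 0 := by
      rintro ⟨g, hg⟩
      have : g ∈ Γ' := hs ▸ Submodule.subset_span hg
      exact (hΓmem g).mp this
    choose f hf1 hf2 using hgen
    refine ⟨max 1 (s.attach.sup f), le_max_left _ _, ?_⟩
    have hbound : ∀ m ∈ (s : Set M), ∀ r ∈ V ^ max 1 (s.attach.sup f), r • m = 0 := by
      intro m hm r hr
      have hle : f ⟨m, hm⟩ ≤ max 1 (s.attach.sup f) :=
        le_trans (Finset.le_sup (Finset.mem_attach s ⟨m, hm⟩)) (le_max_right _ _)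
      exact hf2 ⟨m, hm⟩ r (Ideal.pow_le_pow_right hle hr)
    intro m hm r hr
    have hsle : (s : Set M) ⊆ {m : M | ∀ r ∈ V ^ max 1 (s.attach.sup f), r • m = 0} := by
      intro g hg; exact fun r hr => hbound g hg r hr
    -- the set of elements killed by `V ^ n` is a submodule
    let K : Submodule R M :=
      { carrier := {m : M | ∀ r ∈ V ^ max 1 (s.attach.sup f), r • m = 0}
        zero_mem' := fun r _ => smul_zero r
        add_mem' := by
          intro a b ha hb r hr
          rw [smul_add, ha r hr, hb r hr, add_zero]
        smul_mem' := by
          intro c x hx r hr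
          rw [smul_comm, hx r hr, smul_zero] }
    have : Γ' ≤ K := by
      rw [← hs]
      exact Submodule.span_le.mpr hsle
    exact this hm r hr
  have hn₀ne : n₀ ≠ 0 := Nat.one_le_iff_ne_zero.mp hn₀
  -- The two sets of degrees coincide.
  have hsets : {u : ℤ | ∃ x ∈ ℳ u, p = (Submodule.span R {x}).annihilator}
      = {u : ℤ | ∃ x ∈ ℳ u, (∀ r ∈ p, r • x = 0) ∧ x ∉ Γ} := by
    ext u
    constructor
    · rintro ⟨x, hx, he⟩
      refine ⟨x, hx, ?_, ?_⟩
      · intro r hr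
        rw [he] at hr
        exact (Submodule.mem_annihilator_span_singleton x r).mp hr
      · intro hxΓ
        obtain ⟨n, hn1, hk⟩ := (hΓmem x).mp hxΓ
        have hVnp : V ^ n ≤ p := by
          intro r hr
          rw [he]
          exact (Submodule.mem_annihilator_span_singleton x r).mpr (hk r hr)
        exact hF3 ((Ideal.IsPrime.pow_le_iff (Nat.one_le_iff_ne_zero.mp hn1)).mp hVnp)
    · rintro ⟨x, hx, hp0, hxΓ⟩
      have hpI : p ≤ (Submodule.span R {x}).annihilator := by
        intro r hr
        exact (Submodule.mem_annihilator_span_singleton x r).mpr (hp0 r hr)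
      -- We claim the annihilator equals `p`.
      by_cases heq : p = (Submodule.span R {x}).annihilator
      · exact ⟨x, hx, heq⟩
      exfalso
      have hplt : p < (Submodule.span R {x}).annihilator := lt_of_le_of_ne hpI heq
      -- The image of `x` in `M ⧸ Γ'` is nonzero.
      have hxbar : (Submodule.Quotient.mk x : M ⧸ Γ') ≠ 0 := by
        intro h
        exact hxΓ ((Submodule.Quotient.mk_eq_zero Γ').mp h)
      obtain ⟨q, hq, hannq⟩ :=
        exists_le_isAssociatedPrime_of_isNoetherianRing R (Submodule.Quotient.mk x : M ⧸ Γ')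
          hxbar
      have hqprime : q.IsPrime := hq.isPrime
      have hIbar : (Submodule.span R {x}).annihilator ≤
          (Submodule.span R {(Submodule.Quotient.mk x : M ⧸ Γ')}).annihilator := by
        intro r hr
        rw [Submodule.mem_annihilator_span_singleton] at hr ⊢
        rw [← Submodule.Quotient.mk_smul, hr, Submodule.Quotient.mk_zero]
      have hpq : p < q := lt_of_lt_of_le hplt (le_trans hIbar (by rw [← Submodule.bot_colon']; exact hannq))
      -- Pick the associated element `ȳ` for `q`.
      obtain ⟨hqprime', ybar, hy⟩ := isAssociatedPrime_iff.mp hq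
      obtain ⟨y, rfl⟩ := Submodule.Quotient.mk_surjective Γ' ybar
      have hymem : ∀ r : R, r ∈ q ↔ r • y ∈ Γ' := by
        intro r
        rw [hy, Submodule.mem_colon_singleton, Submodule.mem_bot, ← Submodule.Quotient.mk_smul,
          Submodule.Quotient.mk_eq_zero]
      have hybar0 : (Submodule.Quotient.mk y : M ⧸ Γ') ≠ 0 := by
        intro h
        rw [h] at hy
        rw [Submodule.colon_singleton_zero] at hy
        exact hqprime.ne_top hy
      by_cases hVq : V ≤ q
      · -- then `y` itself is `V`-power torsion, contradiction with `ȳ ≠ 0`.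
        apply hybar0
        rw [Submodule.Quotient.mk_eq_zero]
        refine (hΓmem y).mpr ⟨n₀ + 1, le_trans hn₀ (Nat.le_succ n₀), ?_⟩
        intro r hr
        rw [pow_succ] at hr
        refine Submodule.mul_induction_on hr ?_ ?_
        · intro a ha b hb
          have hby : b • y ∈ Γ' := (hymem b).mp (hVq hb)
          rw [mul_smul]
          exact hkey (b • y) hby a ha
        · intro z w hz hw
          rw [add_smul, hz, hw, add_zero]
      · -- otherwise `q` is an associated prime of `M` itself, lying in `Xp`.
        have hVn₀q : ¬ V ^ n₀ ≤ q := fun h =>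
          hVq ((Ideal.IsPrime.pow_le_iff hn₀ne).mp h)
        obtain ⟨v, hv1, hv2⟩ := SetLike.not_le_iff_exists.mp hVn₀q
        have hqM : IsAssociatedPrime q M := by
          refine isAssociatedPrime_iff.mpr ⟨hqprime, v • y, ?_⟩
          ext r
          rw [Submodule.mem_colon_singleton, Submodule.mem_bot]
          constructor
          · intro hr
            have hry : r • y ∈ Γ' := (hymem r).mp hr
            rw [smul_comm]
            exact hkey (r • y) hry v hv1
          · intro hr
            rw [smul_smul] at hr
            have : r * v ∈ q := (hymem (r * v)).mpr (by rw [hr]; exact Γ'.zero_mem)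
            rcases hqprime.mem_or_mem this with h | h
            · exact h
            · exact absurd h hv2
        have hqXp : q ∈ Xp := by
          rw [hXp]; exact ⟨hqM, hpq⟩
        exact hVq (hF2 q hqXp)
  rw [hsets]
end

section
/- Assume R is standard graded (generated as an R_0-algebra by its degree-1 component) and set R_+ := ⨁_{n ≥ 1} R_n. If p ∈ Ass_R(M) satisfies R_+ ⊆ p, then v_p(M) ≤ end(Γ_{R_+}(M)), where end(Γ_{R_+}(M)) := sup{n ∈ ℤ : the degree-n component of Γ_{R_+}(M) is nonzero}. -/
open scoped Pointwise

section Helpers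

variable {R M : Type*} [CommRing R] [AddCommGroup M] [Module R M]
variable (𝒜 : ℤ → AddSubgroup R) (ℳ : ℤ → AddSubgroup M)
variable [GradedRing 𝒜] [DirectSum.Decomposition ℳ]

/-- degree-`n` projection as an additive hom -/
noncomputable def projM (n : ℤ) : M →+ M :=
  AddMonoidHom.mk' (fun m => (DirectSum.decompose ℳ m n : M)) (fun a b => by
    simp [DirectSum.decompose_add, DirectSum.add_apply])

@[simp] lemma projM_apply (n : ℤ) (m : M) :
    projM ℳ n m = (DirectSum.decompose ℳ m n : M) := rfl

lemma proj_smul_homog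
    (hsmul : ∀ (i j : ℤ), ∀ r ∈ 𝒜 i, ∀ x ∈ ℳ j, r • x ∈ ℳ (i + j))
    {j : ℤ} {r : R} (hr : r ∈ 𝒜 j) (x : M) (n : ℤ) :
    (DirectSum.decompose ℳ (r • x) n : M) = r • (DirectSum.decompose ℳ x (n - j) : M) := by
  classical
  conv_lhs => rw [← DirectSum.sum_support_decompose ℳ x]
  rw [Finset.smul_sum, ← projM_apply, map_sum]
  have key : ∀ i ∈ (DirectSum.decompose ℳ x).support,
      projM ℳ n (r • (DirectSum.decompose ℳ x i : M))
        = if i = n - j then r • (DirectSum.decompose ℳ x i : M) else 0 := by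
    intro i _
    have hmem : r • (DirectSum.decompose ℳ x i : M) ∈ ℳ (j + i) :=
      hsmul j i r hr _ (DirectSum.decompose ℳ x i).2
    by_cases h : i = n - j
    · rw [if_pos h]
      have hin : j + i = n := by omega
      rw [hin] at hmem
      exact DirectSum.decompose_of_mem_same ℳ hmem
    · rw [if_neg h]
      exact DirectSum.decompose_of_mem_ne ℳ hmem (by omega)
  rw [Finset.sum_congr rfl key, Finset.sum_ite_eq' _ (n - j)]
  by_cases h : n - j ∈ (DirectSum.decompose ℳ x).support
  · rw [if_pos h]
  · rw [if_neg h]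
    rw [DFinsupp.notMem_support_iff] at h
    rw [h]
    simp

lemma proj_smul_homog'
    (hsmul : ∀ (i j : ℤ), ∀ r ∈ 𝒜 i, ∀ x ∈ ℳ j, r • x ∈ ℳ (i + j))
    {j : ℤ} {r : R} (hr : r ∈ 𝒜 j) (x : M) (n i : ℤ) (h : n - j = i) :
    (DirectSum.decompose ℳ (r • x) n : M) = r • (DirectSum.decompose ℳ x i : M) := by
  subst h
  exact proj_smul_homog 𝒜 ℳ hsmul hr x n

lemma proj_smul_homogM
    (hsmul : ∀ (i j : ℤ), ∀ r ∈ 𝒜 i, ∀ x ∈ ℳ j, r • x ∈ ℳ (i + j))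
    {d : ℤ} {y : M} (hy : y ∈ ℳ d) (r : R) (n : ℤ) :
    (DirectSum.decompose ℳ (r • y) n : M)
      = (DirectSum.decompose 𝒜 r (n - d) : R) • y := by
  classical
  conv_lhs => rw [← DirectSum.sum_support_decompose 𝒜 r]
  rw [Finset.sum_smul, ← projM_apply, map_sum]
  have key : ∀ j ∈ (DirectSum.decompose 𝒜 r).support,
      projM ℳ n ((DirectSum.decompose 𝒜 r j : R) • y)
        = if j = n - d then (DirectSum.decompose 𝒜 r j : R) • y else 0 := by
    intro j _
    have hmem : (DirectSum.decompose 𝒜 r j : R) • y ∈ ℳ (j + d) :=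
      hsmul j d _ (DirectSum.decompose 𝒜 r j).2 y hy
    by_cases h : j = n - d
    · rw [if_pos h]
      have hin : j + d = n := by omega
      rw [hin] at hmem
      exact DirectSum.decompose_of_mem_same ℳ hmem
    · rw [if_neg h]
      exact DirectSum.decompose_of_mem_ne ℳ hmem (by omega)
  rw [Finset.sum_congr rfl key, Finset.sum_ite_eq' _ (n - d)]
  by_cases h : n - d ∈ (DirectSum.decompose 𝒜 r).support
  · rw [if_pos h]
  · rw [if_neg h]
    rw [DFinsupp.notMem_support_iff] at h
    rw [h]
    simp


set_option linter.unusedSectionVars false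

lemma homog_mem_plus {Rplus : Ideal R}
    (hRplus : Rplus = Ideal.span {r : R | ∃ n : ℤ, 1 ≤ n ∧ r ∈ 𝒜 n})
    {m : ℤ} (hm : 1 ≤ m) {r : R} (hr : r ∈ 𝒜 m) : r ∈ Rplus := by
  rw [hRplus]
  exact Ideal.subset_span ⟨m, hm, hr⟩

lemma homog_mem_pow
    (hstd : ∀ n : ℤ, 0 ≤ n →
      (𝒜 (n + 1) : Set R) ⊆ ↑(AddSubgroup.closure ((𝒜 n : Set R) * (𝒜 1 : Set R))))
    {Rplus : Ideal R}
    (hRplus : Rplus = Ideal.span {r : R | ∃ n : ℤ, 1 ≤ n ∧ r ∈ 𝒜 n}) :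
    ∀ (n : ℕ) {r : R}, r ∈ 𝒜 ((n : ℤ) + 1) → r ∈ Rplus ^ (n + 1) := by
  intro n
  induction n with
  | zero =>
    intro r hr
    rw [pow_one]
    exact homog_mem_plus 𝒜 hRplus le_rfl (by simpa using hr)
  | succ n ih =>
    intro r hr
    have h1 : r ∈ AddSubgroup.closure ((𝒜 ((n : ℤ) + 1) : Set R) * (𝒜 1 : Set R)) := by
      have := hstd ((n : ℤ) + 1) (by omega)
      apply this
      have he : ((n : ℤ) + 1) + 1 = ((n + 1 : ℕ) : ℤ) + 1 := by push_cast; ring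
      rw [he]
      exact hr
    have h2 : AddSubgroup.closure ((𝒜 ((n : ℤ) + 1) : Set R) * (𝒜 1 : Set R))
        ≤ (Rplus ^ (n + 1 + 1)).toAddSubgroup := by
      rw [AddSubgroup.closure_le]
      rintro z ⟨a, ha, b, hb, rfl⟩
      have hA : a ∈ Rplus ^ (n + 1) := ih ha
      have hB : b ∈ Rplus := homog_mem_plus 𝒜 hRplus le_rfl hb
      have : a * b ∈ Rplus ^ (n + 1) * Rplus := Ideal.mul_mem_mul hA hB
      rwa [← pow_succ] at this
    exact h2 h1

lemma homog_mem_pow' 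
    (hstd : ∀ n : ℤ, 0 ≤ n →
      (𝒜 (n + 1) : Set R) ⊆ ↑(AddSubgroup.closure ((𝒜 n : Set R) * (𝒜 1 : Set R))))
    {Rplus : Ideal R}
    (hRplus : Rplus = Ideal.span {r : R | ∃ n : ℤ, 1 ≤ n ∧ r ∈ 𝒜 n})
    {k : ℕ} {m : ℤ} (hm : (k : ℤ) ≤ m) (hk : 1 ≤ k) {r : R} (hr : r ∈ 𝒜 m) :
    r ∈ Rplus ^ k := by
  have h1 : 1 ≤ m := by omega
  obtain ⟨n, hn⟩ : ∃ n : ℕ, m = (n : ℤ) + 1 := ⟨(m - 1).toNat, by omega⟩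
  have : r ∈ Rplus ^ (n + 1) := homog_mem_pow 𝒜 hstd hRplus n (hn ▸ hr)
  exact Ideal.pow_le_pow_right (by omega) this


lemma support_nonneg (hA : ∀ i : ℤ, i < 0 → 𝒜 i = ⊥) (r : R) {j : ℤ}
    (hj : DirectSum.decompose 𝒜 r j ≠ 0) : 0 ≤ j := by
  by_contra h
  apply hj
  have h0 : (DirectSum.decompose 𝒜 r j : R) ∈ 𝒜 j := (DirectSum.decompose 𝒜 r j).2
  set v : R := (DirectSum.decompose 𝒜 r j : R) with hv
  rw [hA j (by omega)] at h0
  ext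
  rw [← hv]
  simpa using h0

lemma proj_span_finset [∀ (i : ℤ) (x : 𝒜 i), Decidable (x ≠ 0)]
    (hsmul : ∀ (i j : ℤ), ∀ r ∈ 𝒜 i, ∀ x ∈ ℳ j, r • x ∈ ℳ (i + j))
    (hA : ∀ i : ℤ, i < 0 → 𝒜 i = ⊥)
    {Y : Finset M} {x : M} (hx : x ∈ Submodule.span R (Y : Set M)) (n : ℤ) :
    ∃ f : M → R, (DirectSum.decompose ℳ x n : M)
      = ∑ y ∈ Y, ∑ j ∈ DFinsupp.support (DirectSum.decompose 𝒜 (f y)),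
          (DirectSum.decompose 𝒜 (f y) j : R) • (DirectSum.decompose ℳ y (n - j) : M) := by
  classical
  obtain ⟨f, -, hf⟩ := Submodule.mem_span_finset.mp hx
  refine ⟨f, ?_⟩
  rw [← hf, ← projM_apply, map_sum]
  refine Finset.sum_congr rfl (fun y _ => ?_)
  conv_lhs => rw [show f y • y = ∑ j ∈ DFinsupp.support (DirectSum.decompose 𝒜 (f y)),
      (DirectSum.decompose 𝒜 (f y) j : R) • y by
    rw [← Finset.sum_smul, DirectSum.sum_support_decompose]]
  rw [map_sum]
  refine Finset.sum_congr rfl (fun j hj => ?_)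
  rw [projM_apply, proj_smul_homog 𝒜 ℳ hsmul (DirectSum.decompose 𝒜 (f y) j).2]

lemma bound_below
    (hsmul : ∀ (i j : ℤ), ∀ r ∈ 𝒜 i, ∀ x ∈ ℳ j, r • x ∈ ℳ (i + j))
    (hA : ∀ i : ℤ, i < 0 → 𝒜 i = ⊥) [Module.Finite R M] :
    ∃ δ : ℤ, ∀ n : ℤ, n < δ → ∀ x ∈ ℳ n, x = 0 := by
  classical
  obtain ⟨G, hG⟩ := (Module.Finite.fg_top : (⊤ : Submodule R M).FG)
  set Gs : Finset ℤ := G.biUnion (fun g => DFinsupp.support (DirectSum.decompose ℳ g)) with hGs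
  refine ⟨-(Gs.sup fun j => j.natAbs : ℕ), fun n hn x hx => ?_⟩
  have hδ : ∀ j ∈ Gs, -((Gs.sup fun j => j.natAbs : ℕ) : ℤ) ≤ j := fun j hj => by
    have h1 : j.natAbs ≤ Gs.sup (fun j => j.natAbs) := Finset.le_sup hj
    omega
  have hxt : x ∈ Submodule.span R (G : Set M) := by rw [hG]; exact Submodule.mem_top
  obtain ⟨f, hf⟩ := proj_span_finset 𝒜 ℳ hsmul hA hxt n
  rw [← DirectSum.decompose_of_mem_same ℳ hx, hf]
  refine Finset.sum_eq_zero (fun g hg => Finset.sum_eq_zero (fun j hj => ?_))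
  have hj0 : 0 ≤ j := support_nonneg 𝒜 hA (f g) (DFinsupp.mem_support_iff.mp hj)
  have hns : n - j ∉ DFinsupp.support (DirectSum.decompose ℳ g) := by
    intro hmem
    have := hδ (n - j) (Finset.mem_biUnion.mpr ⟨g, hg, hmem⟩)
    omega
  rw [DFinsupp.notMem_support_iff] at hns
  rw [hns]
  simp


lemma bound_above [IsNoetherianRing R] [Module.Finite R M]
    (hsmul : ∀ (i j : ℤ), ∀ r ∈ 𝒜 i, ∀ x ∈ ℳ j, r • x ∈ ℳ (i + j))
    (hA : ∀ i : ℤ, i < 0 → 𝒜 i = ⊥)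
    (hstd : ∀ n : ℤ, 0 ≤ n →
      (𝒜 (n + 1) : Set R) ⊆ ↑(AddSubgroup.closure ((𝒜 n : Set R) * (𝒜 1 : Set R))))
    {Rplus : Ideal R}
    (hRplus : Rplus = Ideal.span {r : R | ∃ n : ℤ, 1 ≤ n ∧ r ∈ 𝒜 n}) :
    ∃ D : ℤ, ∀ n : ℤ, D < n → ∀ x ∈ ℳ n,
      (∃ k : ℕ, ∀ r ∈ Rplus ^ k, r • x = 0) → x = 0 := by
  classical
  set TorS : Set M := {y | (∃ d, y ∈ ℳ d) ∧ ∃ k : ℕ, ∀ r ∈ Rplus ^ k, r • y = 0} with hTorS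
  obtain ⟨G, hG⟩ := (IsNoetherian.noetherian (Submodule.span R TorS) :
      (Submodule.span R TorS).FG)
  have hGspan : ∀ g ∈ G, ∃ t : Finset M, ↑t ⊆ TorS ∧ g ∈ Submodule.span R (t : Set M) :=
    fun g hg => Submodule.mem_span_finite_of_mem_span
      (hG ▸ Submodule.subset_span hg : g ∈ Submodule.span R TorS)
  choose t ht1 ht2 using hGspan
  set Y : Finset M := G.attach.biUnion (fun g => t g.1 g.2) with hY
  have hYsub : (Y : Set M) ⊆ TorS := by
    intro y hy
    obtain ⟨g, _, hgy⟩ := Finset.mem_biUnion.mp hy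
    exact ht1 g.1 g.2 hgy
  have hNY : Submodule.span R TorS ≤ Submodule.span R (Y : Set M) := by
    rw [← hG, Submodule.span_le]
    intro g hg
    refine Submodule.span_mono ?_ (ht2 g hg)
    intro z hz
    exact Finset.mem_coe.mpr (Finset.mem_biUnion.mpr ⟨⟨g, hg⟩, Finset.mem_attach _ _, hz⟩)
  have hprop : ∀ y ∈ Y, ∃ d : ℤ, ∃ k : ℕ, y ∈ ℳ d ∧ ∀ r ∈ Rplus ^ (k + 1), r • y = 0 := by
    intro y hy
    obtain ⟨⟨d, hd⟩, k, hk⟩ := hYsub hy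
    exact ⟨d, k, hd, fun r hr => hk r (Ideal.pow_le_pow_right (by omega) hr)⟩
  choose dd kk hdd hkk using hprop
  set D : ℕ := Y.attach.sup (fun y => (dd y.1 y.2).natAbs) with hD
  set K : ℕ := Y.attach.sup (fun y => kk y.1 y.2 + 1) with hK
  refine ⟨(D : ℤ) + (K : ℤ), fun n hn x hx hker => ?_⟩
  have hxY : x ∈ Submodule.span R (Y : Set M) :=
    hNY (Submodule.subset_span ⟨⟨n, hx⟩, hker⟩)
  obtain ⟨f, hf⟩ := proj_span_finset 𝒜 ℳ hsmul hA hxY n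
  rw [← DirectSum.decompose_of_mem_same ℳ hx, hf]
  refine Finset.sum_eq_zero (fun y hy => Finset.sum_eq_zero (fun j hj => ?_))
  by_cases hcase : n - j = dd y hy
  · -- key case
    have hdb : ((dd y hy).natAbs) ≤ D := Finset.le_sup (f := fun y => (dd y.1 y.2).natAbs)
      (Finset.mem_attach _ (⟨y, hy⟩ : {z // z ∈ Y}))
    have hkb : kk y hy + 1 ≤ K := Finset.le_sup (f := fun y => kk y.1 y.2 + 1)
      (Finset.mem_attach _ (⟨y, hy⟩ : {z // z ∈ Y}))
    have hjK : ((kk y hy + 1 : ℕ) : ℤ) ≤ j := by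
      have : (dd y hy : ℤ) ≤ ((dd y hy).natAbs : ℤ) := Int.le_natAbs
      omega
    have hcoef : (DirectSum.decompose 𝒜 (f y) j : R) ∈ Rplus ^ (kk y hy + 1) :=
      homog_mem_pow' 𝒜 hstd hRplus hjK (by omega) (DirectSum.decompose 𝒜 (f y) j).2
    rw [hcase, DirectSum.decompose_of_mem_same ℳ (hdd y hy)]
    exact hkk y hy _ hcoef
  · rw [DirectSum.decompose_of_mem_ne ℳ (hdd y hy) (Ne.symm hcase)]
    simp

end Helpers

/-- Let `R` be a commutative Noetherian ℕ-graded ring (encoded as a ℤ-graded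
ring with vanishing negative components) which is standard graded (each `R_{n+1} = R_n · R_1`
for `n ≥ 0`), and `M` a finitely generated ℤ-graded `R`-module.  Let `R_+ := ⨁_{n ≥ 1} R_n`
(as an ideal).  If `p ∈ Ass_R(M)` satisfies `R_+ ⊆ p`, then
`v_p(M) ≤ end(Γ_{R_+}(M))`, where `v_p(M)` is the least degree of a homogeneous `x ∈ M` with
`p = (0 :_R x)`, and `end(Γ_{R_+}(M))` is the supremum of the degrees `n` for which the
degree-`n` component of `Γ_{R_+}(M) = ⋃_{k ≥ 1} (0 :_M R_+^k)` is nonzero. -/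
theorem v_number_le_end_gamma
    {R M : Type*} [CommRing R] [IsNoetherianRing R]
    [AddCommGroup M] [Module R M] [Module.Finite R M]
    (𝒜 : ℤ → AddSubgroup R) (ℳ : ℤ → AddSubgroup M)
    [GradedRing 𝒜] [DirectSum.Decomposition ℳ]
    (hsmul : ∀ (i j : ℤ), ∀ r ∈ 𝒜 i, ∀ x ∈ ℳ j, r • x ∈ ℳ (i + j))
    (hA : ∀ i : ℤ, i < 0 → 𝒜 i = ⊥)
    (hstd : ∀ n : ℤ, 0 ≤ n →
      (𝒜 (n + 1) : Set R) ⊆ ↑(AddSubgroup.closure ((𝒜 n : Set R) * (𝒜 1 : Set R))))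
    (Rplus : Ideal R) (hRplus : Rplus = Ideal.span {r : R | ∃ n : ℤ, 1 ≤ n ∧ r ∈ 𝒜 n})
    (p : Ideal R) (hp : p ∈ associatedPrimes R M) (hpplus : Rplus ≤ p) :
    sInf {u : ℤ | ∃ x ∈ ℳ u, p = (Submodule.span R {x}).annihilator}
      ≤ sSup {n : ℤ | ∃ x ∈ ℳ n, x ≠ 0 ∧ ∃ k : ℕ, 1 ≤ k ∧ ∀ r ∈ Rplus ^ k, r • x = 0} := by
  classical
  obtain ⟨hpprime, x, hx⟩ := isAssociatedPrime_iff.mp hp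
  rw [Submodule.bot_colon'] at hx
  have hx0 : x ≠ 0 := by
    rintro rfl
    exact hpprime.ne_top (by
      rw [hx, Submodule.span_zero_singleton, Submodule.annihilator_bot])
  -- Step A : Rplus annihilates every homogeneous component of x
  have stepA : ∀ i : ℤ, Rplus ≤ (Submodule.span R {(DirectSum.decompose ℳ x i : M)}).annihilator := by
    intro i
    rw [hRplus, Ideal.span_le]
    rintro r ⟨m, hm, hr⟩
    rw [SetLike.mem_coe, Submodule.mem_annihilator_span_singleton]
    have hrp : r ∈ p := hpplus (homog_mem_plus 𝒜 hRplus hm hr)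
    have hrx : r • x = 0 := Submodule.mem_annihilator_span_singleton x r |>.mp (hx ▸ hrp)
    have h := proj_smul_homog' 𝒜 ℳ hsmul hr x (i + m) i (by ring)
    rw [hrx] at h
    simpa using h.symm
  -- Step B : p ≤ annihilator of every homogeneous component of x
  have stepB : ∀ i : ℤ, p ≤ (Submodule.span R {(DirectSum.decompose ℳ x i : M)}).annihilator := by
    intro i a ha
    rw [Submodule.mem_annihilator_span_singleton]
    have hax : a • x = 0 := Submodule.mem_annihilator_span_singleton x a |>.mp (hx ▸ ha)
    have hsum : a • (DirectSum.decompose ℳ x i : M)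
        = ∑ j ∈ DFinsupp.support (DirectSum.decompose 𝒜 a),
            (DirectSum.decompose 𝒜 a j : R) • (DirectSum.decompose ℳ x i : M) := by
      conv_lhs => rw [← DirectSum.sum_support_decompose 𝒜 a]
      rw [Finset.sum_smul]
    rw [hsum]
    refine Finset.sum_eq_zero (fun j hj => ?_)
    have hj0 : 0 ≤ j := support_nonneg 𝒜 hA a (DFinsupp.mem_support_iff.mp hj)
    rcases eq_or_lt_of_le hj0 with hj1 | hj1
    · -- j = 0
      subst hj1
      have hsum2 : a • x = ∑ j ∈ DFinsupp.support (DirectSum.decompose 𝒜 a),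
          (DirectSum.decompose 𝒜 a j : R) • x := by
        conv_lhs => rw [← DirectSum.sum_support_decompose 𝒜 a]
        rw [Finset.sum_smul]
      have h00 : (DirectSum.decompose 𝒜 a 0 : R) • x = 0 := by
        have hz := Finset.sum_eq_single_of_mem
          (f := fun j => (DirectSum.decompose 𝒜 a j : R) • x) 0 hj
          (fun b hb hb0 => by
            have hb1 : 1 ≤ b := by
              have := support_nonneg 𝒜 hA a (DFinsupp.mem_support_iff.mp hb)
              omega
            have hbp : (DirectSum.decompose 𝒜 a b : R) ∈ p :=
              hpplus (homog_mem_plus 𝒜 hRplus hb1 (DirectSum.decompose 𝒜 a b).2)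
            exact Submodule.mem_annihilator_span_singleton x _ |>.mp (hx ▸ hbp))
        rw [← hsum2, hax] at hz
        exact hz.symm
      have h := proj_smul_homog' 𝒜 ℳ hsmul (DirectSum.decompose 𝒜 a 0).2 x i i (by ring)
      rw [h00] at h
      simpa using h.symm
    · -- 1 ≤ j : positive degree, use Step A
      have : (DirectSum.decompose 𝒜 a j : R) ∈ Rplus :=
        homog_mem_plus 𝒜 hRplus hj1 (DirectSum.decompose 𝒜 a j).2
      exact Submodule.mem_annihilator_span_singleton _ _ |>.mp (stepA i this)
  -- Step C : some component has annihilator exactly p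
  have hsupp : (DFinsupp.support (DirectSum.decompose ℳ x)).Nonempty := by
    rw [Finset.nonempty_iff_ne_empty]
    intro hemp
    apply hx0
    conv_lhs => rw [← DirectSum.sum_support_decompose ℳ x]
    rw [hemp, Finset.sum_empty]
  have hinf : ((DFinsupp.support (DirectSum.decompose ℳ x)).inf
      fun i => (Submodule.span R {(DirectSum.decompose ℳ x i : M)}).annihilator) ≤ p := by
    intro a ha
    have hz : ∀ i ∈ DFinsupp.support (DirectSum.decompose ℳ x),
        a • (DirectSum.decompose ℳ x i : M) = 0 := fun i hi => by
      have hle := Finset.inf_le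
        (f := fun i => (Submodule.span R {(DirectSum.decompose ℳ x i : M)}).annihilator) hi
      exact Submodule.mem_annihilator_span_singleton _ _ |>.mp (hle ha)
    have : a • x = 0 := by
      conv_lhs => rw [← DirectSum.sum_support_decompose ℳ x]
      rw [Finset.smul_sum]
      exact Finset.sum_eq_zero hz
    rw [hx]
    exact Submodule.mem_annihilator_span_singleton x a |>.mpr this
  obtain ⟨i, hiS, hile⟩ := (Ideal.IsPrime.inf_le' hpprime).mp hinf
  have heq : p = (Submodule.span R {(DirectSum.decompose ℳ x i : M)}).annihilator :=
    le_antisymm (stepB i) hile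
  have hxine : (DirectSum.decompose ℳ x i : M) ≠ 0 := by
    intro h
    rw [DFinsupp.mem_support_iff] at hiS
    exact hiS (by ext; simpa using h)
  -- memberships
  have hiInS : i ∈ {u : ℤ | ∃ x ∈ ℳ u, p = (Submodule.span R {x}).annihilator} :=
    ⟨_, (DirectSum.decompose ℳ x i).2, heq⟩
  have hiInT : i ∈ {n : ℤ | ∃ x ∈ ℳ n, x ≠ 0 ∧
      ∃ k : ℕ, 1 ≤ k ∧ ∀ r ∈ Rplus ^ k, r • x = 0} := by
    refine ⟨_, (DirectSum.decompose ℳ x i).2, hxine, 1, le_rfl, ?_⟩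
    intro r hr
    rw [pow_one] at hr
    exact Submodule.mem_annihilator_span_singleton _ _ |>.mp (stepA i hr)
  -- bounds
  obtain ⟨δ, hδ⟩ := bound_below 𝒜 ℳ hsmul hA
  obtain ⟨D, hD⟩ := bound_above 𝒜 ℳ hsmul hA hstd hRplus
  have hbb : BddBelow {u : ℤ | ∃ x ∈ ℳ u, p = (Submodule.span R {x}).annihilator} := by
    refine ⟨δ, fun u hu => ?_⟩
    obtain ⟨z, hz, hzp⟩ := hu
    by_contra h
    have hz0 : z = 0 := hδ u (by omega) z hz
    subst hz0
    exact hpprime.ne_top (by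
      rw [hzp, Submodule.span_zero_singleton, Submodule.annihilator_bot])
  have hba : BddAbove {n : ℤ | ∃ x ∈ ℳ n, x ≠ 0 ∧
      ∃ k : ℕ, 1 ≤ k ∧ ∀ r ∈ Rplus ^ k, r • x = 0} := by
    refine ⟨D, fun n hn => ?_⟩
    obtain ⟨z, hz, hz0, k, _, hk⟩ := hn
    by_contra h
    exact hz0 (hD n (by omega) z hz ⟨k, hk⟩)
  exact le_trans (csInf_le hbb hiInS) (le_csSup hba hiInT)
end

section
/- Assume R is standard graded (generated as an R_0-algebra by its degree-1 component) and set R_+ := ⨁_{n ≥ 1} R_n. If M ≠ 0 and depth(R_+, M) = 0, i.e. every element of R_+ is a zerodivisor on M, then there exists r ∈ Ass_R(M) with R_+ ⊆ r, and v(M) ≤ end(Γ_{R_+}(M)), where end(Γ_{R_+}(M)) := sup{n ∈ ℤ : the degree-n component of Γ_{R_+}(M) is nonzero}. -/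
open scoped Pointwise

set_option linter.unusedSectionVars false
set_option maxHeartbeats 1000000

section Graded
variable {R M : Type*} [CommRing R]
    [AddCommGroup M] [Module R M]
    (𝒜 : ℤ → AddSubgroup R) (ℳ : ℤ → AddSubgroup M)
    [GradedRing 𝒜] [DirectSum.Decomposition ℳ]

/-- homogeneous scalar times anything: components shift -/
lemma aux_decompose_smul_left
    (hsmul : ∀ (i j : ℤ), ∀ r ∈ 𝒜 i, ∀ x ∈ ℳ j, r • x ∈ ℳ (i + j))
    {e : ℤ} {r : R} (hr : r ∈ 𝒜 e) (g : M) (n : ℤ) :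
    (DirectSum.decompose ℳ (r • g) n : M) = r • (DirectSum.decompose ℳ g (n - e) : M) := by
  induction g using DirectSum.Decomposition.inductionOn ℳ with
  | zero => simp
  | @homogeneous j m =>
      have hm : (m : M) ∈ ℳ j := m.2
      have hmem : r • (m : M) ∈ ℳ (e + j) := hsmul e j r hr (m : M) hm
      by_cases h : n = e + j
      · subst h
        rw [DirectSum.decompose_of_mem_same ℳ hmem]
        rw [show e + j - e = j by ring, DirectSum.decompose_of_mem_same ℳ hm]
      · rw [DirectSum.decompose_of_mem_ne ℳ hmem (Ne.symm h)]
        rw [DirectSum.decompose_of_mem_ne ℳ hm (by omega), smul_zero]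
  | add m m' hm hm' =>
      rw [smul_add, DirectSum.decompose_add]
      push_cast [DirectSum.add_apply]
      rw [hm, hm', DirectSum.decompose_add, DirectSum.add_apply]
      push_cast
      rw [smul_add]

/-- anything times homogeneous element: components come from scalar components -/
lemma aux_decompose_smul_right
    (hsmul : ∀ (i j : ℤ), ∀ r ∈ 𝒜 i, ∀ x ∈ ℳ j, r • x ∈ ℳ (i + j))
    {d : ℤ} {g : M} (hg : g ∈ ℳ d) (r : R) (n : ℤ) :
    (DirectSum.decompose ℳ (r • g) n : M) = (DirectSum.decompose 𝒜 r (n - d) : R) • g := by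
  induction r using DirectSum.Decomposition.inductionOn 𝒜 with
  | zero => simp
  | @homogeneous e a =>
      have ha : (a : R) ∈ 𝒜 e := a.2
      have hmem : (a : R) • g ∈ ℳ (e + d) := hsmul e d a ha g hg
      by_cases h : n = e + d
      · subst h
        rw [DirectSum.decompose_of_mem_same ℳ hmem]
        rw [show e + d - d = e by ring, DirectSum.decompose_of_mem_same 𝒜 ha]
      · rw [DirectSum.decompose_of_mem_ne ℳ hmem (Ne.symm h)]
        rw [DirectSum.decompose_of_mem_ne 𝒜 ha (show e ≠ n - d by omega), zero_smul]
  | add a a' ha ha' =>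
      rw [add_smul, DirectSum.decompose_add]
      push_cast [DirectSum.add_apply]
      rw [ha, ha', DirectSum.decompose_add, DirectSum.add_apply]
      push_cast
      rw [add_smul]

/-- a homogeneous killer kills all components -/
lemma aux_kill_components
    (hsmul : ∀ (i j : ℤ), ∀ r ∈ 𝒜 i, ∀ x ∈ ℳ j, r • x ∈ ℳ (i + j))
    {e : ℤ} {r : R} (hr : r ∈ 𝒜 e) {g : M} (hg : r • g = 0) (n : ℤ) :
    r • (DirectSum.decompose ℳ g n : M) = 0 := by
  have := aux_decompose_smul_left 𝒜 ℳ hsmul hr g (e + n)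
  rw [hg, show e + n - e = n by ring] at this
  simpa using this.symm

/-- if homogeneous scalars of matching degrees kill all components of the
generators, then a homogeneous element of the span vanishes -/
lemma aux_span_vanish
    (hsmul : ∀ (i j : ℤ), ∀ r ∈ 𝒜 i, ∀ x ∈ ℳ j, r • x ∈ ℳ (i + j))
    (G : Finset M) (x : M) (n : ℤ) (hx : x ∈ ℳ n)
    (hsp : x ∈ Submodule.span R (G : Set M))
    (h : ∀ g ∈ G, ∀ e : ℤ, ∀ s ∈ 𝒜 (n - e), s • (DirectSum.decompose ℳ g e : M) = 0) :
    x = 0 := by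
  classical
  obtain ⟨c, -, hc⟩ := Submodule.mem_span_finset.mp hsp
  set φ : M →+ M :=
    { toFun := fun y => (DirectSum.decompose ℳ y n : M)
      map_zero' := by simp
      map_add' := by
        intro y z
        show (DirectSum.decompose ℳ (y + z) n : M) = _
        rw [DirectSum.decompose_add, DirectSum.add_apply]
        push_cast
        ring } with hφ
  have hx0 : x = φ x := by
    simp only [hφ, AddMonoidHom.coe_mk, ZeroHom.coe_mk]
    rw [DirectSum.decompose_of_mem_same ℳ hx]
  rw [hx0, ← hc, map_sum]
  refine Finset.sum_eq_zero ?_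
  intro g hg
  have hgd := DirectSum.sum_support_decompose ℳ g
  have : c g • g = ∑ e ∈ DFinsupp.support (DirectSum.decompose ℳ g),
      c g • (DirectSum.decompose ℳ g e : M) := by
    rw [← Finset.smul_sum, hgd]
  rw [show φ (c g • g) = (DirectSum.decompose ℳ (c g • g) n : M) from rfl, this]
  have hdec : (DirectSum.decompose ℳ (∑ e ∈ DFinsupp.support (DirectSum.decompose ℳ g),
      c g • (DirectSum.decompose ℳ g e : M)) n : M)
      = ∑ e ∈ DFinsupp.support (DirectSum.decompose ℳ g),
        (DirectSum.decompose ℳ (c g • (DirectSum.decompose ℳ g e : M)) n : M) := by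
    rw [DirectSum.decompose_sum, DFinsupp.finset_sum_apply]
    push_cast
    rfl
  rw [hdec]
  refine Finset.sum_eq_zero ?_
  intro e he
  rw [aux_decompose_smul_right 𝒜 ℳ hsmul (SetLike.coe_mem _) (c g) n]
  exact h g hg e _ (SetLike.coe_mem _)

end Graded

section Pow
variable {R : Type*} [CommRing R] (𝒜 : ℤ → AddSubgroup R) [GradedRing 𝒜]

lemma aux_A_subset_pow
    (hstd : ∀ n : ℤ, 0 ≤ n →
      (𝒜 (n + 1) : Set R) ⊆ ↑(AddSubgroup.closure ((𝒜 n : Set R) * (𝒜 1 : Set R))))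
    (Rplus : Ideal R) (hRplus : Rplus = Ideal.span {r : R | ∃ n : ℤ, 1 ≤ n ∧ r ∈ 𝒜 n}) :
    ∀ e : ℕ, 1 ≤ e → ∀ r ∈ 𝒜 (e : ℤ), r ∈ Rplus ^ e := by
  intro e
  induction e with
  | zero => omega
  | succ e ih =>
      intro _ r hr
      by_cases he : e = 0
      · subst he
        rw [pow_one]
        rw [hRplus]
        exact Ideal.subset_span ⟨1, le_refl 1, by simpa using hr⟩
      · have he1 : 1 ≤ e := Nat.one_le_iff_ne_zero.mpr he
        have hsub := hstd (e : ℤ) (by positivity)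
        have hr' : r ∈ AddSubgroup.closure ((𝒜 (e:ℤ) : Set R) * (𝒜 1 : Set R)) := by
          apply hsub
          simpa [Int.natCast_succ] using hr
        have hclos : AddSubgroup.closure ((𝒜 (e:ℤ) : Set R) * (𝒜 1 : Set R)) ≤
            (Rplus ^ (e + 1)).toAddSubgroup := by
          rw [AddSubgroup.closure_le]
          rintro z hz
          obtain ⟨a, ha, b, hb, rfl⟩ := Set.mem_mul.mp hz
          have haP : a ∈ Rplus ^ e := ih he1 a ha
          have hbP : b ∈ Rplus := by
            rw [hRplus]; exact Ideal.subset_span ⟨1, le_refl 1, hb⟩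
          have : a * b ∈ Rplus ^ e * Rplus := Ideal.mul_mem_mul haP hbP
          rwa [← pow_succ] at this
        exact hclos hr'
end Pow

section AssFin
variable {R : Type*} [CommRing R] {M : Type*} [AddCommGroup M] [Module R M]

lemma aux_colon_eq (x : M) :
    (⊥ : Submodule R M).colon {x} = (Submodule.span R {x}).annihilator := by
  ext r
  rw [Submodule.mem_colon_singleton, Submodule.mem_annihilator_span_singleton,
    Submodule.mem_bot]

lemma aux_isAss_iff [IsNoetherianRing R] {I : Ideal R} :
    IsAssociatedPrime I M ↔ I.IsPrime ∧ ∃ x : M, I = (Submodule.span R {x}).annihilator := by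
  rw [isAssociatedPrime_iff]
  simp_rw [aux_colon_eq]

lemma aux_ass_subset_union [IsNoetherianRing R] (N : Submodule R M) :
    associatedPrimes R M ⊆ associatedPrimes R N ∪ associatedPrimes R (M ⧸ N) := by
  rintro p hp'
  obtain ⟨hp, x, rfl⟩ := aux_isAss_iff.mp hp'
  by_cases hc : ∃ c : R, c • x ∈ N ∧ c • x ≠ 0
  · left
    obtain ⟨c, hcN, hc0⟩ := hc
    refine aux_isAss_iff.mpr ⟨hp, ⟨c • x, hcN⟩, ?_⟩
    ext r
    rw [Submodule.mem_annihilator_span_singleton, Submodule.mem_annihilator_span_singleton]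
    constructor
    · intro hr
      ext
      simp only [SetLike.mk_smul_mk, smul_comm r c x, hr, smul_zero, ZeroMemClass.coe_zero]
    · intro hr
      have h2 : (r * c) • x = 0 := by
        have h1 := congrArg (Subtype.val) hr
        simpa [mul_smul] using h1
      have h3 : r * c ∈ (Submodule.span R {x}).annihilator :=
        (Submodule.mem_annihilator_span_singleton x (r * c)).mpr h2
      rcases hp.mem_or_mem h3 with h | h
      · rwa [Submodule.mem_annihilator_span_singleton] at h
      · exact absurd ((Submodule.mem_annihilator_span_singleton x c).mp h) hc0
  · right
    push_neg at hc
    refine aux_isAss_iff.mpr ⟨hp, Submodule.Quotient.mk x, ?_⟩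
    ext r
    rw [Submodule.mem_annihilator_span_singleton, Submodule.mem_annihilator_span_singleton,
      ← Submodule.Quotient.mk_smul, Submodule.Quotient.mk_eq_zero]
    exact ⟨fun h => h ▸ N.zero_mem, fun h => hc r h⟩

lemma aux_ass_span_singleton [IsNoetherianRing R] {x : M}
    (hx : ((Submodule.span R {x}).annihilator).IsPrime) :
    associatedPrimes R (Submodule.span R {x}) ⊆ {(Submodule.span R {x}).annihilator} := by
  rintro p hp'
  obtain ⟨hp, y, rfl⟩ := aux_isAss_iff.mp hp'
  obtain ⟨c, hcx⟩ := Submodule.mem_span_singleton.mp y.2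
  have hy0 : y ≠ 0 := by
    rintro rfl
    rw [Submodule.span_zero_singleton, Submodule.annihilator_bot] at hp
    exact hp.ne_top rfl
  have hc0 : c ∉ (Submodule.span R {x}).annihilator := by
    intro h
    rw [Submodule.mem_annihilator_span_singleton] at h
    apply hy0
    ext
    rw [← hcx, h]; rfl
  have key : ∀ r : R, r • y = 0 ↔ r * c ∈ (Submodule.span R {x}).annihilator := by
    intro r
    rw [Submodule.mem_annihilator_span_singleton, mul_smul]
    constructor
    · intro h
      have : (r • y : Submodule.span R {x}) = 0 := h
      have := congrArg (Subtype.val) this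
      rw [SetLike.val_smul, ← hcx] at this
      simpa using this
    · intro h
      ext
      rw [SetLike.val_smul, ← hcx]
      simpa using h
  simp only [Set.mem_singleton_iff]
  ext r
  rw [Submodule.mem_annihilator_span_singleton, key r]
  constructor
  · intro h
    rcases hx.mem_or_mem h with h | h
    · exact h
    · exact absurd h hc0
  · intro h
    exact Ideal.mul_mem_right c _ h

lemma aux_ass_finite [IsNoetherianRing R] [Module.Finite R M] :
    (associatedPrimes R M).Finite := by
  have hNoeth : IsNoetherian R M := isNoetherian_of_isNoetherianRing_of_finite R M
  obtain ⟨N, hN, hmax⟩ := set_has_maximal_iff_noetherian.mpr hNoeth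
      {N : Submodule R M | (associatedPrimes R N).Finite}
      ⟨⊥, by
        have : Subsingleton (⊥ : Submodule R M) := inferInstance
        rw [Set.mem_setOf_eq, associatedPrimes.eq_empty_of_subsingleton]
        exact Set.finite_empty⟩
  by_cases hNt : N = ⊤
  · have e : (⊤ : Submodule R M) ≃ₗ[R] M := Submodule.topEquiv
    have := LinearEquiv.AssociatedPrimes.eq e
    rw [← this]
    subst hNt
    exact hN
  · exfalso
    have hlt : N < ⊤ := lt_top_iff_ne_top.mpr hNt
    have : Nontrivial (M ⧸ N) := Submodule.Quotient.nontrivial_iff.mpr hNt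
    obtain ⟨q, hq⟩ := associatedPrimes.nonempty R (M ⧸ N)
    obtain ⟨hqp, xb, hxb⟩ := aux_isAss_iff.mp hq
    obtain ⟨x, rfl⟩ := Submodule.Quotient.mk_surjective N xb
    have hxN : x ∉ N := by
      intro h
      rw [(Submodule.Quotient.mk_eq_zero N).mpr h, Submodule.span_zero_singleton,
        Submodule.annihilator_bot] at hxb
      exact hqp.ne_top hxb
    set N' : Submodule R M := N ⊔ Submodule.span R {x} with hN'
    have hle : N ≤ N' := le_sup_left
    have hltN : N < N' := by
      refine lt_of_le_of_ne hle ?_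
      intro h
      apply hxN
      rw [h]
      exact Submodule.mem_sup_right (Submodule.mem_span_singleton_self x)
    apply hmax N' _ hltN
    -- show Ass N' finite
    set φ : N' →ₗ[R] M ⧸ N := (N.mkQ).comp N'.subtype with hφ
    have hker : LinearMap.ker φ = Submodule.comap N'.subtype N := by
      ext z
      simp [hφ, Submodule.Quotient.mk_eq_zero]
    have hrange : LinearMap.range φ = Submodule.span R {Submodule.Quotient.mk (p := N) x} := by
      rw [hφ, LinearMap.range_comp, Submodule.range_subtype, hN', Submodule.map_sup,
        Submodule.map_span]
      have h1 : Submodule.map N.mkQ N = ⊥ := by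
        rw [eq_bot_iff]
        rintro y ⟨z, hz, rfl⟩
        simpa [Submodule.Quotient.mk_eq_zero] using hz
      rw [h1, bot_sup_eq, Set.image_singleton]
      rfl
    have e1 : (N' ⧸ LinearMap.ker φ) ≃ₗ[R] LinearMap.range φ := φ.quotKerEquivRange
    have e2 : (LinearMap.range φ : Submodule R (M ⧸ N)) ≃ₗ[R]
        (Submodule.span R {Submodule.Quotient.mk (p := N) x} : Submodule R (M ⧸ N)) :=
      LinearEquiv.ofEq _ _ hrange
    have hassq : associatedPrimes R (N' ⧸ Submodule.comap N'.subtype N) ⊆ {q} := by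
      rw [← hker]
      rw [LinearEquiv.AssociatedPrimes.eq e1, LinearEquiv.AssociatedPrimes.eq e2]
      exact hxb ▸ aux_ass_span_singleton (hxb ▸ hqp)
    have hassN : (associatedPrimes R (Submodule.comap N'.subtype N)).Finite := by
      have e3 : (Submodule.comap N'.subtype N) ≃ₗ[R] N :=
        Submodule.comapSubtypeEquivOfLe hle
      rw [LinearEquiv.AssociatedPrimes.eq e3]
      exact hN
    have := aux_ass_subset_union (M := N') (Submodule.comap N'.subtype N)
    exact Set.Finite.subset (hassN.union ((Set.finite_singleton q).subset hassq)) this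

lemma aux_exists_ass_ge [IsNoetherianRing R] [Module.Finite R M] (I : Ideal R)
    (hI : ∀ r ∈ I, ∃ x : M, x ≠ 0 ∧ r • x = 0) : ∃ q ∈ associatedPrimes R M, I ≤ q := by
  classical
  have hfin := aux_ass_finite (R := R) (M := M)
  have hsub : (I : Set R) ⊆ ⋃ p ∈ hfin.toFinset, ((fun p : Ideal R => p) p : Set R) := by
    intro r hr
    obtain ⟨x, hx0, hrx⟩ := hI r hr
    obtain ⟨P, hP, hle⟩ := exists_le_isAssociatedPrime_of_isNoetherianRing R x hx0
    exact Set.mem_biUnion (hfin.mem_toFinset.2 hP)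
      (hle (by rw [aux_colon_eq]; exact (Submodule.mem_annihilator_span_singleton x r).mpr hrx))
  obtain ⟨p, hps, hIp⟩ := (Ideal.subset_union_prime (f := fun p : Ideal R => p) ⊥ ⊥
    (fun p hp _ _ => (hfin.mem_toFinset.1 hp).isPrime)).mp hsub
  exact ⟨p, hfin.mem_toFinset.1 hps, hIp⟩

end AssFin

/-- Let `R` be a commutative Noetherian ℕ-graded ring (encoded as a ℤ-graded
ring with vanishing negative components) which is standard graded, `M ≠ 0` a finitely
generated ℤ-graded `R`-module, and `R_+ := ⨁_{n ≥ 1} R_n`.  If `depth(R_+, M) = 0`, i.e.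
every element of `R_+` is a zerodivisor on `M`, then there is an associated prime
`r ∈ Ass_R(M)` with `R_+ ⊆ r`, and `v(M) ≤ end(Γ_{R_+}(M))`, where
`v(M) = inf{u | ∃ homogeneous x ∈ M_u with (0 :_R x) prime}` and `end(Γ_{R_+}(M))` is the
supremum of the degrees of the nonzero homogeneous elements of
`Γ_{R_+}(M) = ⋃_{k ≥ 1} (0 :_M R_+^k)`. -/
theorem v_number_le_end_gamma_of_depth_zero
    {R M : Type*} [CommRing R] [IsNoetherianRing R]
    [AddCommGroup M] [Module R M] [Module.Finite R M]
    (𝒜 : ℤ → AddSubgroup R) (ℳ : ℤ → AddSubgroup M)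
    [GradedRing 𝒜] [DirectSum.Decomposition ℳ]
    (hsmul : ∀ (i j : ℤ), ∀ r ∈ 𝒜 i, ∀ x ∈ ℳ j, r • x ∈ ℳ (i + j))
    (hA : ∀ i : ℤ, i < 0 → 𝒜 i = ⊥)
    (hstd : ∀ n : ℤ, 0 ≤ n →
      (𝒜 (n + 1) : Set R) ⊆ ↑(AddSubgroup.closure ((𝒜 n : Set R) * (𝒜 1 : Set R))))
    (Rplus : Ideal R) (hRplus : Rplus = Ideal.span {r : R | ∃ n : ℤ, 1 ≤ n ∧ r ∈ 𝒜 n})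
    (hM : ∃ x : M, x ≠ 0)
    (hdepth : ∀ r ∈ Rplus, ∃ x : M, x ≠ 0 ∧ r • x = 0) :
    (∃ q ∈ associatedPrimes R M, Rplus ≤ q) ∧
    sInf {u : ℤ | ∃ x ∈ ℳ u, (Submodule.span R {x}).annihilator.IsPrime}
      ≤ sSup {n : ℤ | ∃ x ∈ ℳ n, x ≠ 0 ∧ ∃ k : ℕ, 1 ≤ k ∧ ∀ r ∈ Rplus ^ k, r • x = 0} := by
  classical
  obtain ⟨q, hqAss, hRq⟩ := aux_exists_ass_ge Rplus hdepth
  refine ⟨⟨q, hqAss, hRq⟩, ?_⟩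
  obtain ⟨hqp, y, hqy⟩ := aux_isAss_iff.mp hqAss
  have hy0 : y ≠ 0 := by
    rintro rfl
    rw [Submodule.span_zero_singleton, Submodule.annihilator_bot] at hqy
    exact hqp.ne_top hqy
  have hcomp : ∃ m : ℤ, (DirectSum.decompose ℳ y m : M) ≠ 0 := by
    by_contra h
    push_neg at h
    apply hy0
    rw [← DirectSum.sum_support_decompose ℳ y]
    exact Finset.sum_eq_zero fun i _ => h i
  obtain ⟨m, hm⟩ := hcomp
  have hkill : ∀ r ∈ Rplus, r • (DirectSum.decompose ℳ y m : M) = 0 := by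
    have hle : Rplus ≤ (Submodule.span R {(DirectSum.decompose ℳ y m : M)}).annihilator := by
      conv_lhs => rw [hRplus]
      rw [Ideal.span_le]
      rintro r ⟨nn, hnn1, hrn⟩
      rw [SetLike.mem_coe, Submodule.mem_annihilator_span_singleton]
      have hrq : r ∈ q := hRq (hRplus ▸ Ideal.subset_span ⟨nn, hnn1, hrn⟩)
      have hry : r • y = 0 := by
        rw [hqy, Submodule.mem_annihilator_span_singleton] at hrq
        exact hrq
      exact aux_kill_components 𝒜 ℳ hsmul hrn hry m
    intro r hr
    exact (Submodule.mem_annihilator_span_singleton _ r).mp (hle hr)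
  set 𝒮 : Set (Ideal R) := {I : Ideal R | ∃ n : ℤ, ∃ x : M, x ∈ ℳ n ∧ x ≠ 0 ∧
      (∃ k : ℕ, 1 ≤ k ∧ ∀ r ∈ Rplus ^ k, r • x = 0) ∧
      I = (Submodule.span R {x}).annihilator} with h𝒮
  have hseed : (Submodule.span R {(DirectSum.decompose ℳ y m : M)}).annihilator ∈ 𝒮 :=
    ⟨m, _, SetLike.coe_mem _, hm, ⟨1, le_refl 1, by simpa [pow_one] using hkill⟩, rfl⟩
  obtain ⟨p, hp𝒮, hpmax⟩ := set_has_maximal_iff_noetherian.mpr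
      (inferInstance : IsNoetherian R R) 𝒮 ⟨_, hseed⟩
  obtain ⟨n0, x0, hx0m, hx00, ⟨k0, hk01, hk0⟩, hpann⟩ := hp𝒮
  have hphom : Ideal.IsHomogeneous 𝒜 p := by
    intro i r hr
    rw [hpann, Submodule.mem_annihilator_span_singleton] at hr ⊢
    have h1 := aux_decompose_smul_right 𝒜 ℳ hsmul hx0m r (i + n0)
    rw [hr, show i + n0 - n0 = i by ring] at h1
    simpa using h1.symm
  have hpne : p ≠ ⊤ := by
    intro h
    have h1 : (1:R) ∈ p := h ▸ Submodule.mem_top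
    rw [hpann, Submodule.mem_annihilator_span_singleton, one_smul] at h1
    exact hx00 h1
  have hpprime : Ideal.IsPrime p := by
    refine hphom.isPrime_of_homogeneous_mem_or_mem hpne ?_
    rintro a b ⟨ea, ha⟩ ⟨eb, hb⟩ hab
    by_contra hcon
    push_neg at hcon
    obtain ⟨hap, hbp⟩ := hcon
    have hbx : b • x0 ≠ 0 := by
      intro h
      exact hbp (hpann ▸ (Submodule.mem_annihilator_span_singleton x0 b).mpr h)
    have hmem𝒮 : (Submodule.span R {b • x0}).annihilator ∈ 𝒮 := by
      refine ⟨eb + n0, b • x0, hsmul eb n0 b hb x0 hx0m, hbx, ⟨k0, hk01, ?_⟩, rfl⟩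
      intro r hr
      rw [smul_comm, hk0 r hr, smul_zero]
    have hple : p ≤ (Submodule.span R {b • x0}).annihilator := by
      intro r hr
      rw [hpann, Submodule.mem_annihilator_span_singleton] at hr
      rw [Submodule.mem_annihilator_span_singleton, smul_comm, hr, smul_zero]
    have haan : a ∈ (Submodule.span R {b • x0}).annihilator := by
      rw [Submodule.mem_annihilator_span_singleton, smul_smul]
      rw [hpann, Submodule.mem_annihilator_span_singleton] at hab
      exact hab
    have hlt : p < (Submodule.span R {b • x0}).annihilator :=
      lt_of_le_of_ne hple (fun h => hap (h ▸ haan))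
    exact hpmax _ hmem𝒮 hlt
  have hn0S : n0 ∈ {u : ℤ | ∃ x ∈ ℳ u, (Submodule.span R {x}).annihilator.IsPrime} :=
    ⟨x0, hx0m, hpann ▸ hpprime⟩
  have hn0T : n0 ∈ {n : ℤ | ∃ x ∈ ℳ n, x ≠ 0 ∧ ∃ k : ℕ, 1 ≤ k ∧ ∀ r ∈ Rplus ^ k, r • x = 0} :=
    ⟨x0, hx0m, hx00, k0, hk01, hk0⟩
  -- S bounded below
  obtain ⟨F, hF⟩ := Module.Finite.fg_top (R := R) (M := M)
  have hdbound : ∃ d : ℕ, ∀ f ∈ F, ∀ e : ℤ, (DirectSum.decompose ℳ f e : M) ≠ 0 → -(d:ℤ) ≤ e := by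
    refine ⟨F.sup fun f => (DFinsupp.support (DirectSum.decompose ℳ f)).sup fun e => (-e).toNat,
      ?_⟩
    intro f hf e hfe
    have hsupp : e ∈ DFinsupp.support (DirectSum.decompose ℳ f) :=
      DFinsupp.mem_support_iff.mpr (fun h => hfe (by simp [h]))
    have h1 := Finset.le_sup (f := fun e : ℤ => (-e).toNat) hsupp
    have h2 := Finset.le_sup
      (f := fun f => (DFinsupp.support (DirectSum.decompose ℳ f)).sup fun e => (-e).toNat) hf
    have h3 : ((-e).toNat : ℤ) ≤
        ((F.sup fun f => (DFinsupp.support (DirectSum.decompose ℳ f)).sup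
          fun e => (-e).toNat : ℕ) : ℤ) := Nat.cast_le.mpr (le_trans h1 h2)
    have h4 := Int.self_le_toNat (-e)
    omega
  obtain ⟨d, hd⟩ := hdbound
  have hlow : ∀ u : ℤ, u < -(d:ℤ) → ∀ x ∈ ℳ u, x = 0 := by
    intro u hu x hx
    refine aux_span_vanish 𝒜 ℳ hsmul F x u hx (by rw [hF]; exact Submodule.mem_top) ?_
    intro f hf e s hs
    by_cases hfe : (DirectSum.decompose ℳ f e : M) = 0
    · rw [hfe, smul_zero]
    · have he := hd f hf e hfe
      have hneg : u - e < 0 := by omega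
      rw [hA _ hneg] at hs
      rw [AddSubgroup.mem_bot.mp hs, zero_smul]
  have hSbdd : BddBelow {u : ℤ | ∃ x ∈ ℳ u, (Submodule.span R {x}).annihilator.IsPrime} := by
    refine ⟨-(d:ℤ), ?_⟩
    rintro u ⟨x, hxu, hxp⟩
    by_contra h
    push_neg at h
    have hx0 : x = 0 := hlow u h x hxu
    subst hx0
    rw [Submodule.span_zero_singleton, Submodule.annihilator_bot] at hxp
    exact hxp.ne_top rfl
  -- T bounded above
  have hNoethM : IsNoetherian R M := isNoetherian_of_isNoetherianRing_of_finite R M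
  set Γ : Submodule R M :=
    { carrier := {x : M | ∃ k : ℕ, ∀ r ∈ Rplus ^ k, r • x = 0}
      add_mem' := by
        rintro x y ⟨k1, h1⟩ ⟨k2, h2⟩
        refine ⟨max k1 k2, fun r hr => ?_⟩
        rw [smul_add, h1 r (Ideal.pow_le_pow_right (le_max_left k1 k2) hr),
          h2 r (Ideal.pow_le_pow_right (le_max_right k1 k2) hr), add_zero]
      zero_mem' := ⟨0, fun r _ => smul_zero r⟩
      smul_mem' := by
        rintro c x ⟨k, h⟩
        exact ⟨k, fun r hr => by rw [smul_comm, h r hr, smul_zero]⟩ } with hΓ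
  obtain ⟨G, hG⟩ := IsNoetherian.noetherian Γ
  have hGmem : ∀ g ∈ G, ∃ k : ℕ, ∀ r ∈ Rplus ^ k, r • g = 0 := by
    intro g hg
    have : g ∈ Γ := hG ▸ Submodule.subset_span hg
    exact this
  have hKex : ∃ K : ℕ, 1 ≤ K ∧ ∀ g ∈ G, ∀ r ∈ Rplus ^ K, r • g = 0 := by
    set kf : M → ℕ := fun g => if h : ∃ k : ℕ, ∀ r ∈ Rplus ^ k, r • g = 0 then h.choose else 0
      with hkf
    refine ⟨1 + G.sup kf, Nat.le_add_right 1 _, ?_⟩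
    intro g hg r hr
    have hex := hGmem g hg
    have hkg : ∀ r ∈ Rplus ^ (kf g), r • g = 0 := by
      rw [hkf]
      simp only [dif_pos hex]
      exact hex.choose_spec
    refine hkg r (Ideal.pow_le_pow_right ?_ hr)
    calc kf g ≤ G.sup kf := Finset.le_sup hg
    _ ≤ 1 + G.sup kf := Nat.le_add_left _ 1
  obtain ⟨K, hK1, hKkill⟩ := hKex
  have hDex : ∃ D : ℕ, ∀ g ∈ G, ∀ e : ℤ, (DirectSum.decompose ℳ g e : M) ≠ 0 → e ≤ (D:ℤ) := by
    refine ⟨G.sup fun g => (DFinsupp.support (DirectSum.decompose ℳ g)).sup fun e => e.toNat, ?_⟩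
    intro g hg e hge
    have hsupp : e ∈ DFinsupp.support (DirectSum.decompose ℳ g) :=
      DFinsupp.mem_support_iff.mpr (fun h => hge (by simp [h]))
    have h1 := Finset.le_sup (f := fun e : ℤ => e.toNat) hsupp
    have h2 := Finset.le_sup
      (f := fun g => (DFinsupp.support (DirectSum.decompose ℳ g)).sup fun e => e.toNat) hg
    have h3 : ((e.toNat : ℕ) : ℤ) ≤
        ((G.sup fun g => (DFinsupp.support (DirectSum.decompose ℳ g)).sup
          fun e => e.toNat : ℕ) : ℤ) := Nat.cast_le.mpr (le_trans h1 h2)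
    have h4 := Int.self_le_toNat e
    omega
  obtain ⟨D, hD⟩ := hDex
  have hTbdd : BddAbove
      {n : ℤ | ∃ x ∈ ℳ n, x ≠ 0 ∧ ∃ k : ℕ, 1 ≤ k ∧ ∀ r ∈ Rplus ^ k, r • x = 0} := by
    refine ⟨(D:ℤ) + K, ?_⟩
    rintro n ⟨x, hxn, hx0, k, hk1, hk⟩
    by_contra h
    push_neg at h
    apply hx0
    refine aux_span_vanish 𝒜 ℳ hsmul G x n hxn (by rw [hG]; exact ⟨k, hk⟩) ?_
    intro g hg e s hs
    by_cases hge : (DirectSum.decompose ℳ g e : M) = 0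
    · rw [hge, smul_zero]
    · have he := hD g hg e hge
      have hKe : (K:ℤ) ≤ n - e := by omega
      have hsP : s ∈ Rplus ^ K := by
        have h1 : s ∈ Rplus ^ ((n - e).toNat) := by
          refine aux_A_subset_pow 𝒜 hstd Rplus hRplus ((n - e).toNat) (by omega) s ?_
          rwa [Int.toNat_of_nonneg (by omega)]
        exact Ideal.pow_le_pow_right (by omega) h1
      have hsg : s • g = 0 := hKkill g hg s hsP
      exact aux_kill_components 𝒜 ℳ hsmul hs hsg e
  exact le_trans (csInf_le hSbdd hn0S) (le_csSup hTbdd hn0T)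
end

section
/- Either ℒ_{(n,*)} = 0 for all sufficiently large n, or ℒ_{(n,*)} ≠ 0 for all sufficiently large n. In the latter case, the ideal (y_1, …, y_c) of T is not contained in the radical of Ann_T(ℒ); in particular δ := min{j : y_j ∉ √(Ann_T ℒ)} is a well-defined integer with 1 ≤ δ ≤ c. -/
/-- Let `T` be a commutative Noetherian (ℕ×ℕ)-graded ring (encoded as a
(ℤ×ℤ)-graded ring with vanishing components outside ℕ×ℕ), generated as an `R₀`-algebra by
homogeneous elements `x 1, …, x dd` of degrees `(0, f i)` and `y 1, …, y c` of degrees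
`(1, d j)` with `d` monotone, and let `ℒ` be a finitely generated (ℤ×ℤ)-graded `T`-module.
Then either `ℒ_{(n,*)} = 0` for all sufficiently large `n`, or `ℒ_{(n,*)} ≠ 0` for all
sufficiently large `n`; and in the latter case the ideal `(y 1, …, y c)` is not contained in
the radical of `Ann_T(ℒ)`, i.e. there is a `j` with `y j ∉ √(Ann_T ℒ)` (so
`δ = min{j | y j ∉ √(Ann_T ℒ)}` is well defined). -/
theorem eventually_zero_or_eventually_nonzero_rows
    {R₀ T L : Type*} [CommRing R₀] [IsNoetherianRing R₀] [CommRing T] [Algebra R₀ T]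
    [IsNoetherianRing T] [AddCommGroup L] [Module T L] [Module.Finite T L]
    (𝒯 : ℤ × ℤ → AddSubgroup T) [GradedRing 𝒯]
    (ℒ : ℤ × ℤ → AddSubgroup L) [DirectSum.Decomposition ℒ]
    (hsmul : ∀ (i j : ℤ × ℤ), ∀ t ∈ 𝒯 i, ∀ m ∈ ℒ j, t • m ∈ ℒ (i + j))
    (hTnn : ∀ i : ℤ × ℤ, i.1 < 0 ∨ i.2 < 0 → 𝒯 i = ⊥)
    (halg : ∀ r : R₀, algebraMap R₀ T r ∈ 𝒯 (0, 0))
    (dd c : ℕ) (x : Fin dd → T) (y : Fin c → T)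
    (f : Fin dd → ℤ) (d : Fin c → ℤ) (hdmono : Monotone d)
    (hx : ∀ i, x i ∈ 𝒯 (0, f i)) (hy : ∀ j, y j ∈ 𝒯 (1, d j))
    (hgen : Algebra.adjoin R₀ (Set.range x ∪ Set.range y) = ⊤) :
    (∃ n₀ : ℤ, ∀ n ≥ n₀, ∀ l : ℤ, ℒ (n, l) = ⊥) ∨
      ((∃ n₀ : ℤ, ∀ n ≥ n₀, ∃ l : ℤ, ℒ (n, l) ≠ ⊥) ∧
        ∃ j : Fin c, y j ∉ ((⊤ : Submodule T L).annihilator).radical) := by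
  classical
  -- ring-side projection lemma
  have PT : ∀ (a : ℤ × ℤ) (t : T), t ∈ 𝒯 a → ∀ (u : T) (i : ℤ × ℤ),
      (DirectSum.decompose 𝒯 (t * u) (a + i) : T) = t * (DirectSum.decompose 𝒯 u i : T) := by
    intro a t ht u
    induction u using DirectSum.Decomposition.inductionOn 𝒯 with
    | zero => intro i; simp
    | @homogeneous j m =>
      intro i
      have hmem : t * (m : T) ∈ 𝒯 (a + j) := SetLike.mul_mem_graded ht m.2
      by_cases hij : i = j
      · subst hij
        rw [DirectSum.decompose_of_mem_same 𝒯 hmem, DirectSum.decompose_of_mem_same 𝒯 m.2]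
      · rw [DirectSum.decompose_of_mem_ne 𝒯 hmem (by simpa using (Ne.symm hij)),
          DirectSum.decompose_of_mem_ne 𝒯 m.2 (Ne.symm hij), mul_zero]
    | add u v hu hv =>
      intro i
      rw [mul_add, DirectSum.decompose_add, DirectSum.add_apply, DirectSum.decompose_add,
        DirectSum.add_apply]
      push_cast
      rw [hu i, hv i, mul_add]
  -- module-side projection lemma
  have PL : ∀ (a : ℤ × ℤ) (t : T), t ∈ 𝒯 a → ∀ (w : L) (i : ℤ × ℤ),
      (DirectSum.decompose ℒ (t • w) (a + i) : L) = t • (DirectSum.decompose ℒ w i : L) := by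
    intro a t ht w
    induction w using DirectSum.Decomposition.inductionOn ℒ with
    | zero => intro i; simp
    | @homogeneous j m =>
      intro i
      have hmem : t • (m : L) ∈ ℒ (a + j) := hsmul a j t ht m m.2
      by_cases hij : i = j
      · subst hij
        rw [DirectSum.decompose_of_mem_same ℒ hmem, DirectSum.decompose_of_mem_same ℒ m.2]
      · rw [DirectSum.decompose_of_mem_ne ℒ hmem (by simpa using (Ne.symm hij)),
          DirectSum.decompose_of_mem_ne ℒ m.2 (Ne.symm hij), smul_zero]
    | add u v hu hv =>
      intro i
      rw [smul_add, DirectSum.decompose_add, DirectSum.add_apply, DirectSum.decompose_add,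
        DirectSum.add_apply]
      push_cast
      rw [hu i, hv i, smul_add]
  -- sum formula, ring side
  have SUMT : ∀ (t u : T) (a : ℤ × ℤ),
      (DirectSum.decompose 𝒯 (t * u) a : T) =
        ∑ b ∈ (DirectSum.decompose 𝒯 t).support,
          (DirectSum.decompose 𝒯 t b : T) * (DirectSum.decompose 𝒯 u (a - b) : T) := by
    intro t u a
    conv_lhs => rw [← DirectSum.sum_support_decompose 𝒯 t]
    rw [Finset.sum_mul, DirectSum.decompose_sum, DFinsupp.finset_sum_apply,
      AddSubmonoidClass.coe_finset_sum]
    refine Finset.sum_congr rfl fun b _ => ?_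
    have := PT b _ (SetLike.coe_mem (DirectSum.decompose 𝒯 t b)) u (a - b)
    rwa [add_sub_cancel] at this
  -- sum formula, module side
  have SUMM : ∀ (t : T) (w : L) (a : ℤ × ℤ),
      (DirectSum.decompose ℒ (t • w) a : L) =
        ∑ b ∈ (DirectSum.decompose 𝒯 t).support,
          (DirectSum.decompose 𝒯 t b : T) • (DirectSum.decompose ℒ w (a - b) : L) := by
    intro t w a
    conv_lhs => rw [← DirectSum.sum_support_decompose 𝒯 t]
    rw [Finset.sum_smul, DirectSum.decompose_sum, DFinsupp.finset_sum_apply,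
      AddSubmonoidClass.coe_finset_sum]
    refine Finset.sum_congr rfl fun b _ => ?_
    have := PL b _ (SetLike.coe_mem (DirectSum.decompose 𝒯 t b)) w (a - b)
    rwa [add_sub_cancel] at this
  -- vanishing of negative-row components of T
  have TZ : ∀ (t : T) (b : ℤ × ℤ), b.1 < 0 → (DirectSum.decompose 𝒯 t b : T) = 0 := by
    intro t b hb
    have hmem := SetLike.coe_mem (DirectSum.decompose 𝒯 t b)
    simpa [hTnn b (Or.inl hb)] using hmem
  set J : Ideal T := Ideal.span (Set.range y) with hJ
  -- graded pieces in positive rows lie in powers of J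
  have G1 : ∀ (t : T) (b : ℤ × ℤ),
      (DirectSum.decompose 𝒯 t b : T) ∈ J ^ (b.1.toNat) := by
    intro t
    have ht : t ∈ Algebra.adjoin R₀ (Set.range x ∪ Set.range y) := by rw [hgen]; trivial
    induction ht using Algebra.adjoin_induction with
    | mem u hu =>
      intro b
      rw [Set.mem_union] at hu
      rcases hu with ⟨i, rfl⟩ | ⟨j, rfl⟩
      · by_cases hb : ((0 : ℤ), f i) = b
        · rw [← hb]
          simp [pow_zero, Ideal.one_eq_top]
        · rw [DirectSum.decompose_of_mem_ne 𝒯 (hx i) hb]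
          exact zero_mem _
      · by_cases hb : ((1 : ℤ), d j) = b
        · rw [← hb, DirectSum.decompose_of_mem_same 𝒯 (hy j)]
          have hyJ : y j ∈ J := Ideal.subset_span (Set.mem_range_self j)
          simpa using hyJ
        · rw [DirectSum.decompose_of_mem_ne 𝒯 (hy j) hb]
          exact zero_mem _
    | algebraMap r =>
      intro b
      by_cases hb : ((0 : ℤ), (0 : ℤ)) = b
      · rw [← hb]
        simp [pow_zero, Ideal.one_eq_top]
      · rw [DirectSum.decompose_of_mem_ne 𝒯 (halg r) hb]
        exact zero_mem _
    | add u v hu hv ihu ihv =>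
      intro b
      rw [DirectSum.decompose_add, DirectSum.add_apply]
      push_cast
      exact add_mem (ihu b) (ihv b)
    | mul u v hu hv ihu ihv =>
      intro b
      rw [SUMT u v b]
      refine Submodule.sum_mem _ fun e he => ?_
      rcases lt_or_ge e.1 0 with he1 | he1
      · rw [TZ u e he1, zero_mul]; exact zero_mem _
      rcases lt_or_ge (b.1 - e.1) 0 with he2 | he2
      · rw [TZ v (b - e) (by simpa using he2), mul_zero]; exact zero_mem _
      · have h1 := ihu e
        have h2 := ihv (b - e)
        have h3 := Ideal.mul_mem_mul h1 h2
        rw [← pow_add] at h3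
        refine Ideal.pow_le_pow_right ?_ h3
        have : (b - e).1 = b.1 - e.1 := rfl
        omega
  -- graded pieces in rows ≥ 1 decompose as combinations of the y's with homogeneous coefficients
  have G2 : ∀ (b : ℤ × ℤ), 1 ≤ b.1 → ∀ t ∈ 𝒯 b, ∃ u : Fin c → T,
      (∀ j, u j ∈ 𝒯 (b - (1, d j))) ∧ t = ∑ j, y j * u j := by
    intro b hb t ht
    have htJ : t ∈ J := by
      have h0 := G1 t b
      rw [DirectSum.decompose_of_mem_same 𝒯 ht] at h0
      have h1 : J ^ b.1.toNat ≤ J ^ 1 := Ideal.pow_le_pow_right (by omega)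
      simpa [pow_one] using h1 h0
    rw [hJ, Ideal.span, Submodule.mem_span_range_iff_exists_fun] at htJ
    obtain ⟨v, hv⟩ := htJ
    refine ⟨fun j => DirectSum.decompose 𝒯 (v j) (b - ((1 : ℤ), d j)),
      fun j => SetLike.coe_mem _, ?_⟩
    have key : ∀ j : Fin c,
        (DirectSum.decompose 𝒯 (v j • y j) b : T) =
          y j * (DirectSum.decompose 𝒯 (v j) (b - ((1 : ℤ), d j)) : T) := by
      intro j
      have := PT ((1 : ℤ), d j) (y j) (hy j) (v j) (b - ((1 : ℤ), d j))
      rw [add_sub_cancel] at this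
      rw [smul_eq_mul, mul_comm]
      exact this
    calc t = (DirectSum.decompose 𝒯 t b : T) :=
          (DirectSum.decompose_of_mem_same 𝒯 ht).symm
      _ = (DirectSum.decompose 𝒯 (∑ j, v j • y j) b : T) := by rw [hv]
      _ = ∑ j, (DirectSum.decompose 𝒯 (v j • y j) b : T) := by
          rw [DirectSum.decompose_sum, DFinsupp.finset_sum_apply,
            AddSubmonoidClass.coe_finset_sum]
      _ = ∑ j, y j * (DirectSum.decompose 𝒯 (v j) (b - ((1 : ℤ), d j)) : T) :=
          Finset.sum_congr rfl fun j _ => key j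
  -- generators of L
  obtain ⟨s, hs⟩ := Module.Finite.fg_top (R := T) (M := L)
  set n₁ : ℕ := s.sup fun g => (DirectSum.decompose ℒ g).support.sup fun b => b.1.toNat with hn₁
  have hbound : ∀ g ∈ s, ∀ b ∈ (DirectSum.decompose ℒ g).support, b.1 ≤ (n₁ : ℤ) := by
    intro g hg b hb
    have h1 : b.1.toNat ≤ (DirectSum.decompose ℒ g).support.sup fun b => b.1.toNat :=
      Finset.le_sup (f := fun b : ℤ × ℤ => b.1.toNat) hb
    have h2 : ((DirectSum.decompose ℒ g).support.sup fun b => b.1.toNat) ≤ n₁ := by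
      rw [hn₁]
      exact Finset.le_sup (f := fun g => (DirectSum.decompose ℒ g).support.sup fun b => b.1.toNat) hg
    omega
  have KEY0 : ∀ g ∈ s, ∀ a : ℤ × ℤ, (n₁ : ℤ) < a.1 → (DirectSum.decompose ℒ g a : L) = 0 := by
    intro g hg a ha
    rcases eq_or_ne (DirectSum.decompose ℒ g a) 0 with h | h
    · rw [h]; rfl
    · exact absurd (hbound g hg a (DFinsupp.mem_support_iff.mpr h)) (by omega)
  -- one-step propagation of zero rows
  have MAIN : ∀ n : ℤ, (n₁ : ℤ) ≤ n → (∀ l, ℒ (n, l) = ⊥) → ∀ l, ℒ (n + 1, l) = ⊥ := by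
    intro n hn hzero
    have key : ∀ w : L, ∀ l : ℤ, (DirectSum.decompose ℒ w (n + 1, l) : L) = 0 := by
      intro w
      have hw : w ∈ Submodule.span T (s : Set L) := by rw [hs]; trivial
      induction hw using Submodule.span_induction with
      | mem g hg => intro l; exact KEY0 g hg (n + 1, l) (by simp; omega)
      | zero => intro l; simp
      | add u v hu hv ihu ihv =>
        intro l
        rw [DirectSum.decompose_add, DirectSum.add_apply]
        push_cast
        rw [ihu l, ihv l, add_zero]
      | smul t w hw ihw =>
        intro l
        rw [SUMM t w (n + 1, l)]
        refine Finset.sum_eq_zero fun b _ => ?_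
        obtain ⟨b1, b2⟩ := b
        rcases lt_trichotomy b1 0 with hb | hb | hb
        · rw [TZ t (b1, b2) hb, zero_smul]
        · subst hb
          have heq : ((n + 1, l) : ℤ × ℤ) - ((0 : ℤ), b2) = (n + 1, l - b2) := by
            simp only [Prod.ext_iff, Prod.fst_sub, Prod.snd_sub]
            constructor <;> simp
          rw [heq, ihw (l - b2), smul_zero]
        · have hb1 : 1 ≤ ((b1, b2) : ℤ × ℤ).1 := hb
          obtain ⟨u, hu, hte⟩ := G2 (b1, b2) hb1 _
            (SetLike.coe_mem (DirectSum.decompose 𝒯 t (b1, b2)))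
          rw [hte, Finset.sum_smul]
          refine Finset.sum_eq_zero fun j _ => ?_
          rw [mul_smul]
          have hm : u j • (DirectSum.decompose ℒ w (((n + 1, l) : ℤ × ℤ) - (b1, b2)) : L) ∈
              ℒ ((((b1, b2) : ℤ × ℤ) - (1, d j)) + (((n + 1, l) : ℤ × ℤ) - (b1, b2))) :=
            hsmul _ _ _ (hu j) _ (SetLike.coe_mem _)
          have heq : ((((b1, b2) : ℤ × ℤ) - (1, d j)) + (((n + 1, l) : ℤ × ℤ) - (b1, b2))) =
              ((n, l - d j) : ℤ × ℤ) := by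
            simp only [Prod.ext_iff, Prod.fst_sub, Prod.snd_sub, Prod.fst_add, Prod.snd_add]
            constructor <;> ring
          rw [heq, hzero (l - d j)] at hm
          rw [AddSubgroup.mem_bot.mp hm, smul_zero]
    intro l
    rw [eq_bot_iff]
    intro w hw
    have h0 := key w l
    rw [DirectSum.decompose_of_mem_same ℒ hw] at h0
    simpa using h0
  -- components in high rows lie in powers of J times L
  have POW : ∀ w : L, ∀ b : ℤ × ℤ,
      (DirectSum.decompose ℒ w b : L) ∈ J ^ ((b.1 - (n₁ : ℤ)).toNat) • (⊤ : Submodule T L) := by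
    intro w
    have hw : w ∈ Submodule.span T (s : Set L) := by rw [hs]; trivial
    induction hw using Submodule.span_induction with
    | mem g hg =>
      intro b
      rcases le_or_gt b.1 (n₁ : ℤ) with hb | hb
      · have : (b.1 - (n₁ : ℤ)).toNat = 0 := by omega
        rw [this]
        simp [pow_zero, Ideal.one_eq_top]
      · rw [KEY0 g hg b hb]
        exact zero_mem _
    | zero => intro b; simp
    | add u v hu hv ihu ihv =>
      intro b
      rw [DirectSum.decompose_add, DirectSum.add_apply]
      push_cast
      exact Submodule.add_mem _ (ihu b) (ihv b)
    | smul t w hw ihw =>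
      intro b
      rw [SUMM t w b]
      refine Submodule.sum_mem _ fun e he => ?_
      rcases lt_or_ge e.1 0 with he1 | he1
      · rw [TZ t e he1, zero_smul]; exact zero_mem _
      · have h1 := G1 t e
        have h2 := ihw (b - e)
        have h3 := Submodule.smul_mem_smul h1 h2
        rw [← Submodule.smul_assoc, Ideal.smul_eq_mul, ← pow_add] at h3
        refine Submodule.smul_mono_left (Ideal.pow_le_pow_right ?_) h3
        have : (b - e).1 = b.1 - e.1 := rfl
        omega
  -- main case split
  by_cases hcase : ∃ n : ℤ, (n₁ : ℤ) ≤ n ∧ ∀ l, ℒ (n, l) = ⊥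
  · obtain ⟨n₂, hn₂, hz⟩ := hcase
    refine Or.inl ⟨n₂, fun n hn => ?_⟩
    exact Int.le_induction hz (fun m hm ih => MAIN m (hn₂.trans hm) ih) n hn
  · push_neg at hcase
    have hnonzero : ∀ n : ℤ, (n₁ : ℤ) ≤ n → ∃ l, ℒ (n, l) ≠ ⊥ := by
      intro n hn
      have := hcase n hn
      exact this
    refine Or.inr ⟨⟨(n₁ : ℤ), hnonzero⟩, ?_⟩
    by_contra hally
    push_neg at hally
    have hJrad : J ≤ ((⊤ : Submodule T L).annihilator).radical :=
      Ideal.span_le.mpr (by rintro _ ⟨j, rfl⟩; exact hally j)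
    obtain ⟨M, hM⟩ := Ideal.exists_pow_le_of_le_radical_of_fg hJrad (IsNoetherian.noetherian J)
    have hannbot : ((⊤ : Submodule T L).annihilator • (⊤ : Submodule T L)) ≤ ⊥ :=
      Submodule.smul_le.mpr fun r hr m _ => by
        simpa using Submodule.mem_annihilator.mp hr m trivial
    obtain ⟨l, hl⟩ := hnonzero ((n₁ : ℤ) + M) (by omega)
    apply hl
    rw [eq_bot_iff]
    intro w hw
    have h1 := POW w ((n₁ : ℤ) + M, l)
    rw [DirectSum.decompose_of_mem_same ℒ hw] at h1
    have hk : ((((n₁ : ℤ) + M, l) : ℤ × ℤ).1 - (n₁ : ℤ)).toNat = M := by simp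
    rw [hk] at h1
    have h2 : J ^ M • (⊤ : Submodule T L) ≤ ⊥ :=
      le_trans (Submodule.smul_mono_left hM) hannbot
    simpa using h2 h1
end

section
/- Assume ℒ_{(n,*)} ≠ 0 for all sufficiently large n, and let δ := min{j : y_j ∉ √(Ann_T ℒ)}. Then there exists b₁ ∈ ℤ such that indeg(ℒ_{(n,*)}) = d_δ · n + b₁ for all sufficiently large n, where indeg denotes the infimum of the degrees of nonzero homogeneous elements. -/
set_option linter.unusedSectionVars false

section Aux

variable {R₀ T L : Type*} [CommRing R₀] [CommRing T] [Algebra R₀ T]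
  [AddCommGroup L] [Module T L]
  (𝒯 : ℤ × ℤ → AddSubgroup T) [GradedRing 𝒯]
  (ℒ : ℤ × ℤ → AddSubgroup L) [DirectSum.Decomposition ℒ]

/-- Component of `t • z` for homogeneous `t`. -/
theorem aux_decompose_homog_smul
    (hsmul : ∀ (i j : ℤ × ℤ), ∀ t ∈ 𝒯 i, ∀ m ∈ ℒ j, t • m ∈ ℒ (i + j))
    {t : T} {k : ℤ × ℤ} (ht : t ∈ 𝒯 k) (z : L) (i : ℤ × ℤ) :
    (DirectSum.decompose ℒ (t • z) (k + i) : L) = t • (DirectSum.decompose ℒ z i : L) := by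
  refine DirectSum.Decomposition.inductionOn ℒ
    (motive := fun z => (DirectSum.decompose ℒ (t • z) (k + i) : L)
      = t • (DirectSum.decompose ℒ z i : L)) ?_ ?_ ?_ z
  · simp
  · intro j m
    by_cases hij : i = j
    · subst hij
      rw [DirectSum.decompose_of_mem_same ℒ m.2,
        DirectSum.decompose_of_mem_same ℒ (hsmul _ _ _ ht _ m.2)]
    · rw [DirectSum.decompose_of_mem_ne ℒ m.2 (Ne.symm hij),
        DirectSum.decompose_of_mem_ne ℒ (hsmul _ _ _ ht _ m.2)
          (fun h => hij ((add_right_injective k h).symm)), smul_zero]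
  · intro a b ha hb
    simp only [smul_add, DirectSum.decompose_add, DirectSum.add_apply,
      AddSubgroup.coe_add, ha, hb]


/-- Component of `t • z` for homogeneous `z`. -/
theorem aux_decompose_smul_homog
    (hsmul : ∀ (i j : ℤ × ℤ), ∀ t ∈ 𝒯 i, ∀ m ∈ ℒ j, t • m ∈ ℒ (i + j))
    {z : L} {j : ℤ × ℤ} (hz : z ∈ ℒ j) (t : T) (i : ℤ × ℤ) :
    (DirectSum.decompose ℒ (t • z) (i + j) : L)
      = (DirectSum.decompose 𝒯 t i : T) • z := by
  refine DirectSum.Decomposition.inductionOn 𝒯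
    (motive := fun t => (DirectSum.decompose ℒ (t • z) (i + j) : L)
      = (DirectSum.decompose 𝒯 t i : T) • z) ?_ ?_ ?_ t
  · simp
  · intro k m
    by_cases hik : i = k
    · subst hik
      rw [DirectSum.decompose_of_mem_same ℒ (hsmul _ _ _ m.2 _ hz),
        DirectSum.decompose_of_mem_same 𝒯 m.2]
    · rw [DirectSum.decompose_of_mem_ne ℒ (hsmul _ _ _ m.2 _ hz)
          (fun h => hik ((add_left_injective j h).symm)),
        DirectSum.decompose_of_mem_ne 𝒯 m.2 (Ne.symm hik), zero_smul]
  · intro a b ha hb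
    simp only [add_smul, DirectSum.decompose_add, DirectSum.add_apply,
      AddSubgroup.coe_add, ha, hb]

/-- Component of `e * a` for `e` of degree `(0,0)`. -/
theorem aux_decompose_mul_deg0 {e : T} (he : e ∈ 𝒯 (0, 0)) (a : T) (i : ℤ × ℤ) :
    (DirectSum.decompose 𝒯 (e * a) i : T) = e * (DirectSum.decompose 𝒯 a i : T) := by
  refine DirectSum.Decomposition.inductionOn 𝒯
    (motive := fun a => (DirectSum.decompose 𝒯 (e * a) i : T)
      = e * (DirectSum.decompose 𝒯 a i : T)) ?_ ?_ ?_ a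
  · simp
  · intro k m
    have hm : e * (m : T) ∈ 𝒯 k := by
      simpa [show ((0, 0) : ℤ × ℤ) + k = k from zero_add k] using SetLike.mul_mem_graded he m.2
    by_cases hik : i = k
    · subst hik
      rw [DirectSum.decompose_of_mem_same 𝒯 hm, DirectSum.decompose_of_mem_same 𝒯 m.2]
    · rw [DirectSum.decompose_of_mem_ne 𝒯 hm (Ne.symm hik),
        DirectSum.decompose_of_mem_ne 𝒯 m.2 (Ne.symm hik), mul_zero]
  · intro a b ha hb
    simp only [mul_add, DirectSum.decompose_add, DirectSum.add_apply,
      AddSubgroup.coe_add, ha, hb]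


variable {c : ℕ} {y : Fin c → T} {d : Fin c → ℤ}

theorem aux_prod_pow_mem (hy : ∀ j, y j ∈ 𝒯 (1, d j)) (β : Fin c → ℕ) :
    (∏ j, y j ^ β j) ∈ 𝒯 (((∑ j, β j : ℕ) : ℤ), ∑ j, (β j : ℤ) * d j) := by
  have h := SetLike.prod_pow_mem_graded 𝒯 (fun j => ((1 : ℤ), d j)) y
    (F := Finset.univ) β (fun j _ => hy j)
  have he : (∑ j : Fin c, β j • ((1 : ℤ), d j))
      = (((∑ j, β j : ℕ) : ℤ), ∑ j, (β j : ℤ) * d j) := by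
    rw [Prod.ext_iff]
    constructor
    · simp [Prod.fst_sum, Prod.smul_mk]
    · simp [Prod.snd_sum, Prod.smul_mk, nsmul_eq_mul]
  rwa [he] at h

/-- Every homogeneous element acting nontrivially admits a monomial of the same
degree acting nontrivially. -/
theorem aux_exists_monomial
    {dd : ℕ} {x : Fin dd → T} {f : Fin dd → ℤ}
    (hy : ∀ j, y j ∈ 𝒯 (1, d j)) (hx : ∀ i, x i ∈ 𝒯 (0, f i))
    (halg : ∀ r : R₀, algebraMap R₀ T r ∈ 𝒯 (0, 0))
    (hgen : Algebra.adjoin R₀ (Set.range x ∪ Set.range y) = ⊤)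
    {p q : ℤ} {t : T} (ht : t ∈ 𝒯 (p, q)) {z : L} (htz : t • z ≠ 0) :
    ∃ (β : Fin c → ℕ) (qx : ℤ) (m' : T), m' ∈ 𝒯 (0, qx) ∧
      ((∏ j, y j ^ β j) * m') • z ≠ 0 ∧
      ((∑ j, β j : ℕ) : ℤ) = p ∧ qx + ∑ j, (β j : ℤ) * d j = q := by
  have hstruct : ∀ m ∈ Submonoid.closure (Set.range x ∪ Set.range y),
      ∃ (β : Fin c → ℕ) (qx : ℤ) (m' : T), m' ∈ 𝒯 (0, qx) ∧
        m = (∏ j, y j ^ β j) * m' := by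
    intro m hm
    induction hm using Submonoid.closure_induction with
    | mem a ha =>
      rcases ha with ⟨i, rfl⟩ | ⟨j, rfl⟩
      · exact ⟨0, f i, x i, hx i, by simp⟩
      · refine ⟨Pi.single j 1, 0, 1, SetLike.one_mem_graded 𝒯, ?_⟩
        rw [mul_one, Finset.prod_eq_single j
          (fun b _ hb => by simp [Pi.single_eq_of_ne hb]) (by simp)]
        simp
    | one => exact ⟨0, 0, 1, SetLike.one_mem_graded 𝒯, by simp⟩
    | mul a b ha hb iha ihb =>
      obtain ⟨βa, qxa, ma, hma, rfl⟩ := iha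
      obtain ⟨βb, qxb, mb, hmb, rfl⟩ := ihb
      refine ⟨βa + βb, qxa + qxb, ma * mb, ?_, ?_⟩
      · have := SetLike.mul_mem_graded hma hmb
        rwa [show (((0 : ℤ), qxa) + ((0 : ℤ), qxb)) = ((0 : ℤ), qxa + qxb) by simp]
          at this
      · have hpr : (∏ j, y j ^ (βa + βb) j)
            = (∏ j, y j ^ βa j) * ∏ j, y j ^ βb j := by
          rw [← Finset.prod_mul_distrib]
          exact Finset.prod_congr rfl (fun j _ => by simp [pow_add])
        rw [hpr]; ring
  by_contra hcon
  push_neg at hcon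
  have hW : ∀ t' : T, (DirectSum.decompose 𝒯 t' (p, q) : T) • z = 0 := by
    intro t'
    have ht'' : t' ∈ Submodule.span R₀
        (Submonoid.closure (Set.range x ∪ Set.range y) : Set T) := by
      have h1 : t' ∈ Subalgebra.toSubmodule
          (Algebra.adjoin R₀ (Set.range x ∪ Set.range y)) := by
        rw [hgen, Algebra.top_toSubmodule]; exact Submodule.mem_top
      rwa [Algebra.adjoin_eq_span] at h1
    refine Submodule.span_induction ?_ ?_ ?_ ?_ ht''
    · intro m hm
      obtain ⟨β, qx, m', hm', rfl⟩ := hstruct m hm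
      set pm : ℤ := ((∑ j, β j : ℕ) : ℤ) with hpm
      set qm : ℤ := qx + ∑ j, (β j : ℤ) * d j with hqm
      have hdeg : (∏ j, y j ^ β j) * m' ∈ 𝒯 (pm, qm) := by
        have h2 := SetLike.mul_mem_graded (aux_prod_pow_mem 𝒯 hy β) hm'
        have he : (((((∑ j, β j : ℕ)) : ℤ), ∑ j, (β j : ℤ) * d j) + ((0 : ℤ), qx))
            = (pm, qm) := by
          rw [Prod.mk_add_mk, Prod.mk.injEq]
          constructor
          · simp [hpm]
          · rw [hqm]; ring
        rwa [he] at h2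
      by_cases h0 : (∏ j, y j ^ β j) * m' = 0
      · rw [h0]; simp
      by_cases hde : ((pm, qm) : ℤ × ℤ) = (p, q)
      · rw [hde] at hdeg
        rw [DirectSum.decompose_of_mem_same 𝒯 hdeg]
        by_contra hne
        have h1 : pm = p := congrArg Prod.fst hde
        have h2 : qm = q := congrArg Prod.snd hde
        exact (hcon β qx m' hm' hne h1) h2
      · rw [DirectSum.decompose_of_mem_ne 𝒯 hdeg hde, zero_smul]
    · simp
    · intro a b _ _ hA hB
      rw [DirectSum.decompose_add]
      simp only [DirectSum.add_apply, AddSubgroup.coe_add, add_smul, hA, hB, add_zero]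
    · intro r a _ hA
      rw [Algebra.smul_def, aux_decompose_mul_deg0 𝒯 (halg r), mul_smul, hA, smul_zero]
  have hfin := hW t
  rw [DirectSum.decompose_of_mem_same 𝒯 ht] at hfin
  exact htz hfin


/-- Homogeneous generators for a graded submodule. -/
theorem aux_homog_gens [IsNoetherian T L] {M : Submodule T L}
    (hM : ∀ z ∈ M, ∀ i, (DirectSum.decompose ℒ z i : L) ∈ M) :
    ∃ A : Finset L, (∀ z' ∈ A, z' ∈ M ∧ ∃ i, z' ∈ ℒ i)
      ∧ M ≤ Submodule.span T (A : Set L) := by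
  classical
  obtain ⟨S, hS⟩ := IsNoetherian.noetherian M
  have hSM : ∀ z ∈ S, z ∈ M := fun z hz => by
    rw [← hS]; exact Submodule.subset_span hz
  refine ⟨S.biUnion (fun z => (DirectSum.decompose ℒ z).support.image
      (fun i => (DirectSum.decompose ℒ z i : L))), ?_, ?_⟩
  · intro z' hz'
    rw [Finset.mem_biUnion] at hz'
    obtain ⟨z, hzS, hz'⟩ := hz'
    rw [Finset.mem_image] at hz'
    obtain ⟨i, _, rfl⟩ := hz'
    exact ⟨hM z (hSM z hzS) i, i, SetLike.coe_mem _⟩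
  · rw [← hS, Submodule.span_le]
    intro z hzS
    have hdec := DirectSum.sum_support_decompose ℒ z
    rw [← hdec]
    refine Submodule.sum_mem _ (fun i hi => Submodule.subset_span ?_)
    rw [Finset.mem_coe, Finset.mem_biUnion]
    exact ⟨z, hzS, Finset.mem_image.2 ⟨i, hi, rfl⟩⟩

/-- From a nonzero homogeneous element of a graded submodule, extract a generator and
a monomial acting nontrivially on it, of matching degree. -/
theorem aux_witness
    {dd : ℕ} {x : Fin dd → T} {f : Fin dd → ℤ}
    (hsmul : ∀ (i j : ℤ × ℤ), ∀ t ∈ 𝒯 i, ∀ m ∈ ℒ j, t • m ∈ ℒ (i + j))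
    (halg : ∀ r : R₀, algebraMap R₀ T r ∈ 𝒯 (0, 0))
    (hy : ∀ j, y j ∈ 𝒯 (1, d j)) (hx : ∀ i, x i ∈ 𝒯 (0, f i))
    (hgen : Algebra.adjoin R₀ (Set.range x ∪ Set.range y) = ⊤)
    {M : Submodule T L} {n u : ℤ} {z : L}
    (hzM : z ∈ M) (hzl : z ∈ ℒ (n, u)) (hz0 : z ≠ 0)
    (A : Finset L) (hA2 : M ≤ Submodule.span T (A : Set L))
    (g : L → ℤ × ℤ) (hg : ∀ z' ∈ A, z' ∈ ℒ (g z')) :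
    ∃ z' ∈ A, ∃ (β : Fin c → ℕ) (qx : ℤ) (m' : T), m' ∈ 𝒯 (0, qx) ∧
      ((∏ j, y j ^ β j) * m') • z' ≠ 0 ∧
      ((∑ j, β j : ℕ) : ℤ) = n - (g z').1 ∧
      qx + ∑ j, (β j : ℤ) * d j = u - (g z').2 := by
  classical
  obtain ⟨φ, -, hφ⟩ := Submodule.mem_span_finset.1 (hA2 hzM)
  have hsum : z = ∑ z' ∈ A, (DirectSum.decompose ℒ (φ z' • z') (n, u) : L) := by
    conv_lhs => rw [← DirectSum.decompose_of_mem_same ℒ hzl, ← hφ]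
    rw [DirectSum.decompose_sum, DFinsupp.finset_sum_apply]
    exact AddSubmonoidClass.coe_finset_sum _ _
  have hterm : ∀ z' ∈ A, (DirectSum.decompose ℒ (φ z' • z') (n, u) : L)
      = (DirectSum.decompose 𝒯 (φ z') ((n, u) - g z') : T) • z' := by
    intro z' hz'
    have := aux_decompose_smul_homog 𝒯 ℒ hsmul (hg z' hz') (φ z') ((n, u) - g z')
    rwa [sub_add_cancel] at this
  have hex : ∃ z' ∈ A, (DirectSum.decompose 𝒯 (φ z') ((n, u) - g z') : T) • z' ≠ 0 := by
    by_contra hall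
    push_neg at hall
    apply hz0
    rw [hsum]
    refine Finset.sum_eq_zero (fun z' hz' => ?_)
    rw [hterm z' hz', hall z' hz']
  have hex2 := hex
  obtain ⟨z', hz'A, hne⟩ := hex
  have hmem : (DirectSum.decompose 𝒯 (φ z') ((n, u) - g z') : T)
      ∈ 𝒯 (n - (g z').1, u - (g z').2) := by
    have := SetLike.coe_mem (DirectSum.decompose 𝒯 (φ z') ((n, u) - g z'))
    rwa [show ((n, u) - g z') = ((n - (g z').1, u - (g z').2) : ℤ × ℤ) by
      rw [Prod.ext_iff]; simp] at this
  obtain ⟨β, qx, m', h1, h2, h3, h4⟩ :=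
    aux_exists_monomial 𝒯 hy hx halg hgen hmem hne
  exact ⟨z', hz'A, β, qx, m', h1, h2, h3, h4⟩

/-- Basic facts about a monomial acting nontrivially on an element of `M`. -/
theorem aux_monomial_facts
    (hTnn : ∀ i : ℤ × ℤ, i.1 < 0 ∨ i.2 < 0 → 𝒯 i = ⊥)
    (hy : ∀ j, y j ∈ 𝒯 (1, d j))
    {M : Submodule T L} {z' : L} (hz'M : z' ∈ M)
    {β : Fin c → ℕ} {qx : ℤ} {m' : T} (hm' : m' ∈ 𝒯 (0, qx))
    (hact : ((∏ j, y j ^ β j) * m') • z' ≠ 0) {N : ℕ} :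
    (∀ j, (∀ w ∈ M, y j ^ N • w = 0) → β j < N) ∧
    (∀ j, β j ≠ 0 → 0 ≤ d j) ∧ 0 ≤ qx := by
  refine ⟨?_, ?_, ?_⟩
  · intro j hj
    by_contra hge
    push_neg at hge
    apply hact
    have hfac : (∏ j', y j' ^ β j')
        = (y j ^ (β j - N) * ∏ j' ∈ Finset.univ.erase j, y j' ^ β j') * y j ^ N := by
      rw [← Finset.mul_prod_erase Finset.univ _ (Finset.mem_univ j)]
      rw [mul_comm (y j ^ (β j - N)) _, mul_assoc, pow_sub_mul_pow _ hge, mul_comm]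
    rw [hfac, mul_assoc, mul_comm _ m', ← mul_assoc, mul_smul, hj z' hz'M, smul_zero]
  · intro j hβ
    by_contra hd
    push_neg at hd
    apply hact
    have hy0 : y j = 0 := by
      have := hy j
      rw [hTnn (1, d j) (Or.inr hd)] at this
      simpa using this
    have : (∏ j', y j' ^ β j') = 0 :=
      Finset.prod_eq_zero (Finset.mem_univ j) (by rw [hy0, zero_pow hβ])
    rw [this, zero_mul, zero_smul]
  · by_contra hqx
    push_neg at hqx
    apply hact
    have hm0 : m' = 0 := by
      have := hm'
      rw [hTnn (0, qx) (Or.inr hqx)] at this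
      simpa using this
    rw [hm0, mul_zero, zero_smul]


/-- Lower bound `d δM * n + B ≤ u` for nonzero elements of `M` in degree `(n,u)`. -/
theorem aux_row_bound [IsNoetherian T L]
    {dd : ℕ} {x : Fin dd → T} {f : Fin dd → ℤ}
    (hsmul : ∀ (i j : ℤ × ℤ), ∀ t ∈ 𝒯 i, ∀ m ∈ ℒ j, t • m ∈ ℒ (i + j))
    (hTnn : ∀ i : ℤ × ℤ, i.1 < 0 ∨ i.2 < 0 → 𝒯 i = ⊥)
    (halg : ∀ r : R₀, algebraMap R₀ T r ∈ 𝒯 (0, 0))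
    (hy : ∀ j, y j ∈ 𝒯 (1, d j)) (hx : ∀ i, x i ∈ 𝒯 (0, f i))
    (hgen : Algebra.adjoin R₀ (Set.range x ∪ Set.range y) = ⊤)
    (hdmono : Monotone d)
    {M : Submodule T L}
    (hM : ∀ z ∈ M, ∀ i, (DirectSum.decompose ℒ z i : L) ∈ M)
    {δM : Fin c} (hdδ : 0 ≤ d δM) {N : ℕ} (hN : 1 ≤ N)
    (hkill : ∀ j, j < δM → ∀ w ∈ M, y j ^ N • w = 0) :
    ∃ B : ℤ, ∀ n u : ℤ, ∀ z, z ∈ M → z ∈ ℒ (n, u) → z ≠ 0 → d δM * n + B ≤ u := by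
  classical
  obtain ⟨A, hA1, hA2⟩ := aux_homog_gens ℒ hM
  set g : L → ℤ × ℤ := fun z' => if h : ∃ i, z' ∈ ℒ i then h.choose else 0 with hgdef
  have hg : ∀ z' ∈ A, z' ∈ ℒ (g z') := by
    intro z' hz'
    obtain ⟨-, hi⟩ := hA1 z' hz'
    rw [hgdef]; simp only [dif_pos hi]; exact hi.choose_spec
  by_cases hAne : A.Nonempty
  case neg =>
    refine ⟨0, fun n u z hzM hzl hz0 => absurd ?_ hz0⟩
    have h := hA2 hzM
    rw [Finset.not_nonempty_iff_eq_empty.1 hAne] at h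
    simpa using h
  case pos =>
  set B₀ := (A.image (fun z' => (g z').2 - d δM * (g z').1)).min' (hAne.image _) with hB₀
  refine ⟨B₀ - d δM * ((c : ℤ) * ((N : ℤ) - 1)), fun n u z hzM hzl hz0 => ?_⟩
  obtain ⟨z', hz'A, β, qx, m', hm', hact, hps, hqs⟩ :=
    aux_witness 𝒯 ℒ hsmul halg hy hx hgen hzM hzl hz0 A hA2 g hg
  obtain ⟨hi, hii, hiii⟩ :=
    aux_monomial_facts 𝒯 hTnn hy (hA1 z' hz'A).1 hm' hact (N := N)
  set a := (g z').1 with ha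
  set b := (g z').2 with hb
  have hB0 : B₀ ≤ b - d δM * a := by
    refine Finset.min'_le _ _ ?_
    exact Finset.mem_image_of_mem _ hz'A
  have hlt : ∀ j, j < δM → β j < N := fun j hj => hi j (hkill j hj)
  push_cast at hps
  set Sge := Finset.univ.filter (fun j : Fin c => δM ≤ j) with hSge
  set Slt := Finset.univ.filter (fun j : Fin c => ¬ δM ≤ j) with hSlt
  have e1 : (∑ j, (β j : ℤ) * d j)
      = ∑ j ∈ Sge, (β j : ℤ) * d j + ∑ j ∈ Slt, (β j : ℤ) * d j :=
    (Finset.sum_filter_add_sum_filter_not _ _ _).symm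
  have e2 : 0 ≤ ∑ j ∈ Slt, (β j : ℤ) * d j := by
    refine Finset.sum_nonneg (fun j hj => ?_)
    by_cases hβ : β j = 0
    · simp [hβ]
    · exact mul_nonneg (Int.natCast_nonneg _) (hii j hβ)
  have e3 : ∑ j ∈ Sge, (β j : ℤ) * d δM ≤ ∑ j ∈ Sge, (β j : ℤ) * d j := by
    refine Finset.sum_le_sum (fun j hj => ?_)
    have hj' : δM ≤ j := (Finset.mem_filter.1 hj).2
    exact mul_le_mul_of_nonneg_left (hdmono hj') (Int.natCast_nonneg _)
  have e4 : ∑ j ∈ Slt, (β j : ℤ) ≤ (c : ℤ) * ((N : ℤ) - 1) := by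
    have h1 : ∑ j ∈ Slt, (β j : ℤ) ≤ ∑ _j ∈ Slt, ((N : ℤ) - 1) := by
      refine Finset.sum_le_sum (fun j hj => ?_)
      have hj' : j < δM := lt_of_not_ge (Finset.mem_filter.1 hj).2
      have := hlt j hj'
      omega
    have h2 : ∑ _j ∈ Slt, ((N : ℤ) - 1) = (Slt.card : ℤ) * ((N : ℤ) - 1) := by
      rw [Finset.sum_const, nsmul_eq_mul]
    have h3 : (Slt.card : ℤ) ≤ (c : ℤ) := by
      have := Finset.card_filter_le Finset.univ (fun j : Fin c => ¬ δM ≤ j)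
      simp only [Finset.card_univ, Fintype.card_fin] at this
      exact_mod_cast this
    have h4 : (0 : ℤ) ≤ (N : ℤ) - 1 := by
      have : (1 : ℤ) ≤ (N : ℤ) := by exact_mod_cast hN
      omega
    calc ∑ j ∈ Slt, (β j : ℤ) ≤ (Slt.card : ℤ) * ((N : ℤ) - 1) := by rw [← h2]; exact h1
      _ ≤ (c : ℤ) * ((N : ℤ) - 1) := mul_le_mul_of_nonneg_right h3 h4
  have e6 : ∑ j ∈ Sge, (β j : ℤ) + ∑ j ∈ Slt, (β j : ℤ) = ∑ j, (β j : ℤ) :=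
    Finset.sum_filter_add_sum_filter_not _ _ _
  have key : d δM * ((n - a) - (c : ℤ) * ((N : ℤ) - 1)) ≤ u - b := by
    calc d δM * ((n - a) - (c : ℤ) * ((N : ℤ) - 1))
        ≤ d δM * (∑ j ∈ Sge, (β j : ℤ)) := by
          refine mul_le_mul_of_nonneg_left ?_ hdδ
          linarith
      _ = ∑ j ∈ Sge, (β j : ℤ) * d δM := by
          rw [Finset.mul_sum]
          exact Finset.sum_congr rfl (fun j _ => mul_comm _ _)
      _ ≤ ∑ j ∈ Sge, (β j : ℤ) * d j := e3
      _ ≤ u - b := by linarith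
  rw [mul_sub, mul_sub] at key
  linarith

/-- If all the `y j` act nilpotently on `M`, then rows of `M` vanish for large `n`. -/
theorem aux_row_vanish [IsNoetherian T L]
    {dd : ℕ} {x : Fin dd → T} {f : Fin dd → ℤ}
    (hsmul : ∀ (i j : ℤ × ℤ), ∀ t ∈ 𝒯 i, ∀ m ∈ ℒ j, t • m ∈ ℒ (i + j))
    (hTnn : ∀ i : ℤ × ℤ, i.1 < 0 ∨ i.2 < 0 → 𝒯 i = ⊥)
    (halg : ∀ r : R₀, algebraMap R₀ T r ∈ 𝒯 (0, 0))
    (hy : ∀ j, y j ∈ 𝒯 (1, d j)) (hx : ∀ i, x i ∈ 𝒯 (0, f i))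
    (hgen : Algebra.adjoin R₀ (Set.range x ∪ Set.range y) = ⊤)
    {M : Submodule T L}
    (hM : ∀ z ∈ M, ∀ i, (DirectSum.decompose ℒ z i : L) ∈ M)
    {N : ℕ} (hN : 1 ≤ N)
    (hkill : ∀ j, ∀ w ∈ M, y j ^ N • w = 0) :
    ∃ n₁ : ℤ, ∀ n u : ℤ, n₁ ≤ n → ∀ z, z ∈ M → z ∈ ℒ (n, u) → z = 0 := by
  classical
  obtain ⟨A, hA1, hA2⟩ := aux_homog_gens ℒ hM
  set g : L → ℤ × ℤ := fun z' => if h : ∃ i, z' ∈ ℒ i then h.choose else 0 with hgdef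
  have hg : ∀ z' ∈ A, z' ∈ ℒ (g z') := by
    intro z' hz'
    obtain ⟨-, hi⟩ := hA1 z' hz'
    rw [hgdef]; simp only [dif_pos hi]; exact hi.choose_spec
  by_cases hAne : A.Nonempty
  case neg =>
    refine ⟨0, fun n u _ z hzM hzl => ?_⟩
    have h := hA2 hzM
    rw [Finset.not_nonempty_iff_eq_empty.1 hAne] at h
    simpa using h
  case pos =>
  set amax := (A.image (fun z' => (g z').1)).max' (hAne.image _) with hamax
  refine ⟨amax + (c : ℤ) * ((N : ℤ) - 1) + 1, fun n u hn z hzM hzl => ?_⟩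
  by_contra hz0
  obtain ⟨z', hz'A, β, qx, m', hm', hact, hps, hqs⟩ :=
    aux_witness 𝒯 ℒ hsmul halg hy hx hgen hzM hzl hz0 A hA2 g hg
  obtain ⟨hi, -, -⟩ :=
    aux_monomial_facts 𝒯 hTnn hy (hA1 z' hz'A).1 hm' hact (N := N)
  push_cast at hps
  have hsum : ∑ j, (β j : ℤ) ≤ (c : ℤ) * ((N : ℤ) - 1) := by
    have h1 : ∑ j, (β j : ℤ) ≤ ∑ _j : Fin c, ((N : ℤ) - 1) := by
      refine Finset.sum_le_sum (fun j _ => ?_)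
      have := hi j (hkill j)
      omega
    have h2 : ∑ _j : Fin c, ((N : ℤ) - 1) = (c : ℤ) * ((N : ℤ) - 1) := by
      rw [Finset.sum_const, nsmul_eq_mul, Finset.card_univ, Fintype.card_fin]
    linarith
  have hale : (g z').1 ≤ amax := by
    refine Finset.le_max' _ _ ?_
    exact Finset.mem_image_of_mem _ hz'A
  linarith


/-- Main inductive lemma: for a graded submodule `M` with least non-nilpotent index `δM`,
the initial degree of row `n` of `M` is eventually `d δM * n + b`. -/
theorem aux_main [IsNoetherianRing T] [Module.Finite T L]
    {dd : ℕ} {x : Fin dd → T} {f : Fin dd → ℤ}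
    (hsmul : ∀ (i j : ℤ × ℤ), ∀ t ∈ 𝒯 i, ∀ m ∈ ℒ j, t • m ∈ ℒ (i + j))
    (hTnn : ∀ i : ℤ × ℤ, i.1 < 0 ∨ i.2 < 0 → 𝒯 i = ⊥)
    (halg : ∀ r : R₀, algebraMap R₀ T r ∈ 𝒯 (0, 0))
    (hy : ∀ j, y j ∈ 𝒯 (1, d j)) (hx : ∀ i, x i ∈ 𝒯 (0, f i))
    (hgen : Algebra.adjoin R₀ (Set.range x ∪ Set.range y) = ⊤)
    (hdmono : Monotone d) :
    ∀ k : ℕ, ∀ M : Submodule T L,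
      (∀ z ∈ M, ∀ i, (DirectSum.decompose ℒ z i : L) ∈ M) →
      ∀ δM : Fin c, y δM ∉ M.annihilator.radical →
      (∀ j, j < δM → y j ∈ M.annihilator.radical) →
      c - δM.val ≤ k →
      ∃ b n₀ : ℤ, ∀ n : ℤ, n₀ ≤ n →
        (∃ u : ℤ, ∃ z, z ∈ M ∧ z ∈ ℒ (n, u) ∧ z ≠ 0) ∧
        sInf {u : ℤ | ∃ z, z ∈ M ∧ z ∈ ℒ (n, u) ∧ z ≠ 0} = d δM * n + b := by
  classical
  haveI : IsNoetherian T L := inferInstance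
  intro k
  induction k with
  | zero =>
    intro M hM δM hδM hδmin hk
    exfalso
    have := δM.2
    omega
  | succ k IH =>
    intro M hM δM hδM hδmin hk
    -- basic facts
    have hyδ0 : y δM ≠ 0 := by
      intro h
      exact hδM (by rw [h]; exact Submodule.zero_mem _)
    have hdδ : 0 ≤ d δM := by
      by_contra hneg
      push_neg at hneg
      apply hyδ0
      have h := hy δM
      rw [hTnn (1, d δM) (Or.inr hneg)] at h
      simpa using h
    -- uniform nilpotency exponent for j < δM
    obtain ⟨N, hN1, hNkill⟩ : ∃ N : ℕ, 1 ≤ N ∧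
        ∀ j, j < δM → ∀ w ∈ M, y j ^ N • w = 0 := by
      set gN : Fin c → ℕ := fun j =>
        if h : y j ∈ M.annihilator.radical then (Ideal.mem_radical_iff.1 h).choose else 0
        with hgN
      refine ⟨1 + Finset.univ.sup gN, Nat.le_add_right _ _, ?_⟩
      intro j hj w hw
      have hjrad := hδmin j hj
      have hspec : y j ^ gN j ∈ M.annihilator := by
        rw [hgN]; simp only [dif_pos hjrad]
        exact (Ideal.mem_radical_iff.1 hjrad).choose_spec
      have hle : gN j ≤ 1 + Finset.univ.sup gN :=
        le_trans (Finset.le_sup (Finset.mem_univ j)) (Nat.le_add_left _ _)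
      rw [← pow_sub_mul_pow (y j) hle, mul_smul,
        Submodule.mem_annihilator.1 hspec w hw, smul_zero]
    -- stabilized kernel exponent
    obtain ⟨s, hs⟩ : ∃ s : ℕ, ∀ m : ℕ, s ≤ m →
        LinearMap.ker (LinearMap.lsmul T L (y δM ^ s))
          = LinearMap.ker (LinearMap.lsmul T L (y δM ^ m)) := by
      obtain ⟨s, hs⟩ := monotone_stabilizes_iff_noetherian.2
        (inferInstance : IsNoetherian T L)
        ⟨fun m => LinearMap.ker (LinearMap.lsmul T L (y δM ^ m)), by
          intro m1 m2 hm z hz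
          rw [LinearMap.mem_ker, LinearMap.lsmul_apply] at hz ⊢
          rw [← pow_sub_mul_pow (y δM) hm, mul_smul, hz, smul_zero]⟩
      exact ⟨s, hs⟩
    set K : Submodule T L := M ⊓ LinearMap.ker (LinearMap.lsmul T L (y δM ^ s)) with hKdef
    have hKmem : ∀ z : L, z ∈ K ↔ z ∈ M ∧ y δM ^ s • z = 0 := by
      intro z
      rw [hKdef, Submodule.mem_inf, LinearMap.mem_ker, LinearMap.lsmul_apply]
    have hKM : K ≤ M := inf_le_left
    have hyspow : y δM ^ s ∈ 𝒯 (((s : ℤ)), (s : ℤ) * d δM) := by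
      have h := SetLike.pow_mem_graded s (hy δM)
      rwa [show (s • ((1 : ℤ), d δM)) = (((s : ℤ)), (s : ℤ) * d δM) by
        rw [Prod.smul_mk]; simp [nsmul_eq_mul]] at h
    have hKgr : ∀ z ∈ K, ∀ i, (DirectSum.decompose ℒ z i : L) ∈ K := by
      intro z hz i
      obtain ⟨hzM, hzk⟩ := (hKmem z).1 hz
      refine (hKmem _).2 ⟨hM z hzM i, ?_⟩
      have h := aux_decompose_homog_smul 𝒯 ℒ hsmul hyspow z i
      rw [hzk] at h
      simpa using h.symm
    have hstep : ∀ z, z ∈ M → z ∉ K → y δM • z ∈ M ∧ y δM • z ∉ K := by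
      intro z hzM hzK
      refine ⟨Submodule.smul_mem _ _ hzM, fun hmem => hzK ?_⟩
      obtain ⟨-, hk2⟩ := (hKmem _).1 hmem
      have h1 : y δM ^ (s + 1) • z = 0 := by
        rw [pow_succ, mul_smul]
        exact hk2
      refine (hKmem z).2 ⟨hzM, ?_⟩
      have h2 : z ∈ LinearMap.ker (LinearMap.lsmul T L (y δM ^ s)) := by
        rw [hs (s + 1) (Nat.le_succ s)]
        simpa [LinearMap.mem_ker, LinearMap.lsmul_apply] using h1
      simpa [LinearMap.mem_ker, LinearMap.lsmul_apply] using h2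
    -- homogeneous element of M not in K
    obtain ⟨z₀, i₀, hz₀M, hz₀l, hz₀K⟩ :
        ∃ (z₀ : L) (i₀ : ℤ × ℤ), z₀ ∈ M ∧ z₀ ∈ ℒ i₀ ∧ z₀ ∉ K := by
      have hMK : ∃ z, z ∈ M ∧ z ∉ K := by
        by_contra hall
        push_neg at hall
        apply hδM
        refine Ideal.mem_radical_iff.2 ⟨s, Submodule.mem_annihilator.2 (fun z hz => ?_)⟩
        exact ((hKmem z).1 (hall z hz)).2
      obtain ⟨z, hzM, hzK⟩ := hMK
      by_contra hall
      push_neg at hall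
      apply hzK
      rw [← DirectSum.sum_support_decompose ℒ z]
      refine Submodule.sum_mem _ (fun i _ => ?_)
      by_contra hnot
      exact hnot (hall _ i (hM z hzM i) (SetLike.coe_mem _))
    set a₀ := i₀.1 with ha₀
    set b₀ := i₀.2 with hb₀
    have hz₀l' : z₀ ∈ ℒ (a₀, b₀) := by rwa [ha₀, hb₀, Prod.mk.eta]
    -- the sets
    set S : ℤ → Set ℤ := fun n => {u : ℤ | ∃ z, z ∈ M ∧ z ∈ ℒ (n, u) ∧ z ≠ 0} with hSdef
    set S' : ℤ → Set ℤ := fun n => {u : ℤ | ∃ z, z ∈ M ∧ z ∈ ℒ (n, u) ∧ z ∉ K} with hS'def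
    have hS'S : ∀ n, S' n ⊆ S n := by
      intro n u hu
      obtain ⟨z, h1, h2, h3⟩ := hu
      exact ⟨z, h1, h2, fun h0 => h3 (h0 ▸ Submodule.zero_mem K)⟩
    obtain ⟨B, hB⟩ := aux_row_bound 𝒯 ℒ hsmul hTnn halg hy hx hgen hdmono hM hdδ hN1 hNkill
    have hbddS : ∀ n, BddBelow (S n) := by
      intro n
      exact ⟨d δM * n + B, fun u hu => by
        obtain ⟨z, h1, h2, h3⟩ := hu; exact hB n u z h1 h2 h3⟩
    have hbddS' : ∀ n, BddBelow (S' n) := fun n => (hbddS n).mono (hS'S n)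
    have hne' : ∀ n : ℤ, a₀ ≤ n → (S' n).Nonempty := by
      refine Int.le_induction ?_ ?_
      · exact ⟨b₀, z₀, hz₀M, hz₀l', hz₀K⟩
      · rintro n hn ⟨u, z, hzM, hzl, hzK⟩
        refine ⟨u + d δM, y δM • z, (hstep z hzM hzK).1, ?_, (hstep z hzM hzK).2⟩
        have h := hsmul (1, d δM) (n, u) _ (hy δM) _ hzl
        rwa [show ((1 : ℤ), d δM) + (n, u) = ((n + 1 : ℤ), u + d δM) by
          rw [Prod.mk_add_mk, Prod.mk.injEq]; constructor <;> ring] at h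
    set h : ℤ → ℤ := fun n => sInf (S' n) with hh
    have hmem : ∀ n : ℤ, a₀ ≤ n → h n ∈ S' n := fun n hn =>
      Int.csInf_mem (hne' n hn) (hbddS' n)
    have hstep2 : ∀ n : ℤ, a₀ ≤ n → h (n + 1) ≤ h n + d δM := by
      intro n hn
      obtain ⟨z, hzM, hzl, hzK⟩ := hmem n hn
      refine csInf_le (hbddS' (n + 1)) ?_
      refine ⟨y δM • z, (hstep z hzM hzK).1, ?_, (hstep z hzM hzK).2⟩
      have h2 := hsmul (1, d δM) (n, h n) _ (hy δM) _ hzl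
      rwa [show ((1 : ℤ), d δM) + (n, h n) = ((n + 1 : ℤ), h n + d δM) by
        rw [Prod.mk_add_mk, Prod.mk.injEq]; constructor <;> ring] at h2
    have hlb : ∀ n : ℤ, a₀ ≤ n → d δM * n + B ≤ h n := by
      intro n hn
      obtain ⟨z, hzM, hzl, hzK⟩ := hmem n hn
      exact hB n (h n) z hzM hzl (fun h0 => hzK (h0 ▸ Submodule.zero_mem K))
    set g : ℤ → ℤ := fun n => h n - d δM * n with hg
    have hgmono : ∀ n : ℤ, a₀ ≤ n → g (n + 1) ≤ g n := by
      intro n hn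
      have h1 := hstep2 n hn
      have h2 : d δM * (n + 1) = d δM * n + d δM := by ring
      simp only [hg]
      rw [h2]
      linarith
    have hglb : ∀ n : ℤ, a₀ ≤ n → B ≤ g n := by
      intro n hn
      have := hlb n hn
      simp only [hg]
      linarith
    set G : Set ℤ := g '' Set.Ici a₀ with hG
    have hGne : G.Nonempty := ⟨g a₀, a₀, Set.self_mem_Ici, rfl⟩
    have hGbdd : BddBelow G := by
      refine ⟨B, ?_⟩
      rintro v ⟨n, hn, rfl⟩
      exact hglb n hn
    obtain ⟨n₁, hn₁, hgn₁⟩ : ∃ n₁, a₀ ≤ n₁ ∧ g n₁ = sInf G := by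
      obtain ⟨n₁, hn₁, hv⟩ := Int.csInf_mem hGne hGbdd
      exact ⟨n₁, hn₁, hv⟩
    set b' := sInf G with hb'
    have hgconst : ∀ n : ℤ, n₁ ≤ n → g n = b' := by
      have hle : ∀ n : ℤ, n₁ ≤ n → g n ≤ b' := by
        refine Int.le_induction ?_ ?_
        · exact le_of_eq hgn₁
        · intro n hn ih
          exact le_trans (hgmono n (le_trans hn₁ hn)) ih
      intro n hn
      refine le_antisymm (hle n hn) ?_
      exact csInf_le hGbdd ⟨n, le_trans hn₁ hn, rfl⟩
    have hS'inf : ∀ n : ℤ, n₁ ≤ n → sInf (S' n) = d δM * n + b' := by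
      intro n hn
      have := hgconst n hn
      simp only [hg] at this
      have hhn : h n = d δM * n + b' := by linarith
      rw [← hhn]
    -- split on whether some y j is non-nilpotent on K
    by_cases hKc : ∀ j, y j ∈ K.annihilator.radical
    · -- all nilpotent: rows of K vanish
      obtain ⟨NK, hNK1, hNKkill⟩ : ∃ NK : ℕ, 1 ≤ NK ∧
          ∀ j, ∀ w ∈ K, y j ^ NK • w = 0 := by
        set gN : Fin c → ℕ := fun j =>
          if h : y j ∈ K.annihilator.radical then (Ideal.mem_radical_iff.1 h).choose else 0
          with hgN
        refine ⟨1 + Finset.univ.sup gN, Nat.le_add_right _ _, ?_⟩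
        intro j w hw
        have hjrad := hKc j
        have hspec : y j ^ gN j ∈ K.annihilator := by
          rw [hgN]; simp only [dif_pos hjrad]
          exact (Ideal.mem_radical_iff.1 hjrad).choose_spec
        have hle : gN j ≤ 1 + Finset.univ.sup gN :=
          le_trans (Finset.le_sup (Finset.mem_univ j)) (Nat.le_add_left _ _)
        rw [← pow_sub_mul_pow (y j) hle, mul_smul,
          Submodule.mem_annihilator.1 hspec w hw, smul_zero]
      obtain ⟨n₂, hn₂⟩ :=
        aux_row_vanish 𝒯 ℒ hsmul hTnn halg hy hx hgen hKgr hNK1 hNKkill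
      refine ⟨b', max n₁ n₂, fun n hn => ?_⟩
      have hn1 : n₁ ≤ n := le_trans (le_max_left _ _) hn
      have hn2 : n₂ ≤ n := le_trans (le_max_right _ _) hn
      have hSeq : S n = S' n := by
        refine Set.Subset.antisymm ?_ (hS'S n)
        rintro u ⟨z, hzM, hzl, hz0⟩
        refine ⟨z, hzM, hzl, fun hzK => ?_⟩
        exact hz0 (hn₂ n u hn2 z hzK hzl)
      constructor
      · obtain ⟨u, hu⟩ := hne' n (le_trans hn₁ hn1)
        exact ⟨u, hS'S n hu⟩
      · show sInf (S n) = d δM * n + b'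
        rw [hSeq]
        exact hS'inf n hn1
    · -- some y j non-nilpotent on K: use IH
      push_neg at hKc
      obtain ⟨j₀, hj₀⟩ := hKc
      set F := Finset.univ.filter (fun j : Fin c => y j ∉ K.annihilator.radical) with hF
      have hFne : F.Nonempty := ⟨j₀, Finset.mem_filter.2 ⟨Finset.mem_univ _, hj₀⟩⟩
      set δ' := F.min' hFne with hδ'
      have hδ'1 : y δ' ∉ K.annihilator.radical :=
        (Finset.mem_filter.1 (F.min'_mem hFne)).2
      have hδ'min : ∀ j, j < δ' → y j ∈ K.annihilator.radical := by
        intro j hj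
        by_contra hnot
        exact absurd (F.min'_le j (Finset.mem_filter.2 ⟨Finset.mem_univ _, hnot⟩))
          (not_le.2 hj)
      have hradmono : M.annihilator.radical ≤ K.annihilator.radical :=
        Ideal.radical_mono (Submodule.annihilator_mono hKM)
      have hδMδ' : δM < δ' := by
        by_contra hnot
        push_neg at hnot
        rcases lt_or_eq_of_le hnot with hlt | heq
        · exact hδ'1 (hradmono (hδmin δ' hlt))
        · apply hδ'1
          rw [heq]
          refine Ideal.mem_radical_iff.2 ⟨s, Submodule.mem_annihilator.2 (fun z hz => ?_)⟩
          exact ((hKmem z).1 hz).2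
      have hmeas : c - δ'.val ≤ k := by
        have h1 := δ'.2
        have h2 : δM.val < δ'.val := hδMδ'
        omega
      obtain ⟨b'', n₃, hIH⟩ := IH K hKgr δ' hδ'1 hδ'min hmeas
      have hdle : d δM ≤ d δ' := hdmono (le_of_lt hδMδ')
      -- common: for large n, sInf (S n) = min (d δM * n + b') (d δ' * n + b'')
      have hSK : ∀ n : ℤ, S n = S' n ∪ {u : ℤ | ∃ z, z ∈ K ∧ z ∈ ℒ (n, u) ∧ z ≠ 0} := by
        intro n
        ext u
        constructor
        · rintro ⟨z, hzM, hzl, hz0⟩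
          by_cases hzK : z ∈ K
          · exact Or.inr ⟨z, hzK, hzl, hz0⟩
          · exact Or.inl ⟨z, hzM, hzl, hzK⟩
        · rintro (⟨z, hzM, hzl, hzK⟩ | ⟨z, hzK, hzl, hz0⟩)
          · exact ⟨z, hzM, hzl, fun h0 => hzK (h0 ▸ Submodule.zero_mem K)⟩
          · exact ⟨z, hKM hzK, hzl, hz0⟩
      have hKsub : ∀ n : ℤ, {u : ℤ | ∃ z, z ∈ K ∧ z ∈ ℒ (n, u) ∧ z ≠ 0} ⊆ S n := by
        intro n u hu
        obtain ⟨z, h1, h2, h3⟩ := hu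
        exact ⟨z, hKM h1, h2, h3⟩
      have hmin : ∀ n : ℤ, n₁ ≤ n → n₃ ≤ n →
          sInf (S n) = min (d δM * n + b') (d δ' * n + b'') := by
        intro n hn1 hn3
        rw [hSK n, csInf_union (hbddS' n) (hne' n (le_trans hn₁ hn1))
          ((hbddS n).mono (hKsub n)) (hIH n hn3).1]
        rw [show ∀ a b : ℤ, a ⊓ b = min a b from fun _ _ => rfl, hS'inf n hn1, (hIH n hn3).2]
      by_cases hdeq : d δ' = d δM
      · refine ⟨min b' b'', max n₁ n₃, fun n hn => ?_⟩
        have hn1 : n₁ ≤ n := le_trans (le_max_left _ _) hn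
        have hn3 : n₃ ≤ n := le_trans (le_max_right _ _) hn
        constructor
        · obtain ⟨u, hu⟩ := hne' n (le_trans hn₁ hn1)
          exact ⟨u, hS'S n hu⟩
        · show sInf (S n) = d δM * n + min b' b''
          rw [hmin n hn1 hn3, hdeq, ← min_add_add_left]
      · have hdlt : d δM < d δ' := lt_of_le_of_ne hdle (Ne.symm hdeq)
        refine ⟨b', max (max n₁ n₃) (max 0 (b' - b'')), fun n hn => ?_⟩
        have hn1 : n₁ ≤ n := le_trans (le_trans (le_max_left _ _) (le_max_left _ _)) hn
        have hn3 : n₃ ≤ n := le_trans (le_trans (le_max_right _ _) (le_max_left _ _)) hn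
        have hn0 : (0 : ℤ) ≤ n := le_trans (le_trans (le_max_left _ _) (le_max_right _ _)) hn
        have hn4 : b' - b'' ≤ n := le_trans (le_trans (le_max_right _ _) (le_max_right _ _)) hn
        constructor
        · obtain ⟨u, hu⟩ := hne' n (le_trans hn₁ hn1)
          exact ⟨u, hS'S n hu⟩
        · show sInf (S n) = d δM * n + b'
          rw [hmin n hn1 hn3]
          refine min_eq_left ?_
          have h1 : (1 : ℤ) ≤ d δ' - d δM := by linarith
          have h2 : (1 : ℤ) * n ≤ (d δ' - d δM) * n := mul_le_mul_of_nonneg_right h1 hn0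
          rw [sub_mul] at h2
          linarith

end Aux

/-- In the bigraded setup (Noetherian (ℕ×ℕ)-graded ring `T`, generated over
`R₀` by `x i` of degrees `(0, f i)` and `y j` of degrees `(1, d j)`, `d` monotone, and a
finitely generated (ℤ×ℤ)-graded `T`-module `ℒ`), assume `ℒ_{(n,*)} ≠ 0` for all sufficiently
large `n` and let `δ` be the least index with `y δ ∉ √(Ann_T ℒ)`.  Then there is `b₁ ∈ ℤ`
such that `indeg(ℒ_{(n,*)}) = d δ * n + b₁` for all sufficiently large `n`, where
`indeg(ℒ_{(n,*)}) = inf{u | ℒ_{(n,u)} ≠ 0}`. -/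
theorem indeg_row_eventually_linear
    {R₀ T L : Type*} [CommRing R₀] [IsNoetherianRing R₀] [CommRing T] [Algebra R₀ T]
    [IsNoetherianRing T] [AddCommGroup L] [Module T L] [Module.Finite T L]
    (𝒯 : ℤ × ℤ → AddSubgroup T) [GradedRing 𝒯]
    (ℒ : ℤ × ℤ → AddSubgroup L) [DirectSum.Decomposition ℒ]
    (hsmul : ∀ (i j : ℤ × ℤ), ∀ t ∈ 𝒯 i, ∀ m ∈ ℒ j, t • m ∈ ℒ (i + j))
    (hTnn : ∀ i : ℤ × ℤ, i.1 < 0 ∨ i.2 < 0 → 𝒯 i = ⊥)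
    (halg : ∀ r : R₀, algebraMap R₀ T r ∈ 𝒯 (0, 0))
    (dd c : ℕ) (x : Fin dd → T) (y : Fin c → T)
    (f : Fin dd → ℤ) (d : Fin c → ℤ) (hdmono : Monotone d)
    (hx : ∀ i, x i ∈ 𝒯 (0, f i)) (hy : ∀ j, y j ∈ 𝒯 (1, d j))
    (hgen : Algebra.adjoin R₀ (Set.range x ∪ Set.range y) = ⊤)
    (hnz : ∃ n₀ : ℤ, ∀ n ≥ n₀, ∃ l : ℤ, ℒ (n, l) ≠ ⊥)
    (δ : Fin c) (hδ : y δ ∉ ((⊤ : Submodule T L).annihilator).radical)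
    (hδmin : ∀ j : Fin c, j < δ → y j ∈ ((⊤ : Submodule T L).annihilator).radical) :
    ∃ b₁ : ℤ, ∃ n₀ : ℤ, ∀ n ≥ n₀,
      sInf {u : ℤ | ℒ (n, u) ≠ ⊥} = d δ * n + b₁ := by
  classical
  obtain ⟨b, n₀, hmain⟩ := aux_main 𝒯 ℒ hsmul hTnn halg hy hx hgen hdmono c
    (⊤ : Submodule T L) (fun z _ i => Submodule.mem_top) δ hδ hδmin
    (Nat.sub_le _ _)
  refine ⟨b, n₀, fun n hn => ?_⟩
  have hset : {u : ℤ | ℒ (n, u) ≠ ⊥}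
      = {u : ℤ | ∃ z, z ∈ (⊤ : Submodule T L) ∧ z ∈ ℒ (n, u) ∧ z ≠ 0} := by
    ext u
    simp only [Set.mem_setOf_eq, Submodule.mem_top, true_and]
    constructor
    · intro hne
      by_contra hall
      push_neg at hall
      exact hne (AddSubgroup.eq_bot_iff_forall _ |>.2 hall)
    · rintro ⟨z, hz, h0⟩ hbot
      rw [hbot] at hz
      exact h0 (by simpa using hz)
  rw [hset]
  exact (hmain n hn).2
end

section
/- Assume ℒ_{(n,*)} ≠ 0 for all sufficiently large n, let δ := min{j : y_j ∉ √(Ann_T ℒ)}, and let p be a prime ideal of R with p ∈ Ass_R(ℒ_{(n,*)}) for all sufficiently large n. Then there exist a_p ∈ {d_j : δ ≤ j ≤ c} and b_p ∈ ℤ such that v_p(ℒ_{(n,*)}) = a_p · n + b_p for all sufficiently large n. -/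
set_option linter.unusedSectionVars false
set_option maxHeartbeats 1000000

open DirectSum
open scoped Classical

noncomputable section AuxVN

/-- swap-lex comparison on `ℤ × ℤ`. -/
def vnKey (i : ℤ × ℤ) : ℤ ×ₗ ℤ := toLex (i.2, i.1)

lemma vnKey_le_iff {i j : ℤ × ℤ} : vnKey i ≤ vnKey j ↔ i.2 < j.2 ∨ (i.2 = j.2 ∧ i.1 ≤ j.1) := by
  simp [vnKey, Prod.Lex.le_iff]

lemma vnKey_top_unique {jt it j i : ℤ × ℤ} (hj : vnKey j ≤ vnKey jt) (hi : vnKey i ≤ vnKey it)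
    (h : j + i = jt + it) : j = jt ∧ i = it := by
  rw [vnKey_le_iff] at hj hi
  have h1 : j.1 + i.1 = jt.1 + it.1 := congrArg Prod.fst h
  have h2 : j.2 + i.2 = jt.2 + it.2 := congrArg Prod.snd h
  have hj2 : j.2 = jt.2 ∧ i.2 = it.2 := by omega
  have hj1 : j.1 = jt.1 ∧ i.1 = it.1 := by omega
  exact ⟨Prod.ext hj1.1 hj2.1, Prod.ext hj1.2 hj2.2⟩

variable {M : Type*} [AddCommGroup M] (𝓜 : ℤ × ℤ → AddSubgroup M) [DirectSum.Decomposition 𝓜]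

/-- the degree-`i` component of `z`. -/
def vnPj (z : M) (i : ℤ × ℤ) : M := ((DirectSum.decompose 𝓜 z) i : M)

lemma vnPj_mem (z : M) (i : ℤ × ℤ) : vnPj 𝓜 z i ∈ 𝓜 i := ((DirectSum.decompose 𝓜 z) i).2

lemma vnPj_add (z w : M) (i : ℤ × ℤ) :
    vnPj 𝓜 (z + w) i = vnPj 𝓜 z i + vnPj 𝓜 w i := by
  simp [vnPj, DirectSum.decompose_add]

/-- `vnPj` bundled as an `AddMonoidHom`. -/
def vnPjHom (i : ℤ × ℤ) : M →+ M where
  toFun z := vnPj 𝓜 z i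
  map_zero' := by simp [vnPj]
  map_add' z w := vnPj_add 𝓜 z w i

lemma vnPj_zero (i : ℤ × ℤ) : vnPj 𝓜 (0 : M) i = 0 := (vnPjHom 𝓜 i).map_zero

lemma vnPj_neg (z : M) (i : ℤ × ℤ) :
    vnPj 𝓜 (-z) i = -vnPj 𝓜 z i := (vnPjHom 𝓜 i).map_neg z

lemma vnPj_sub (z w : M) (i : ℤ × ℤ) :
    vnPj 𝓜 (z - w) i = vnPj 𝓜 z i - vnPj 𝓜 w i := (vnPjHom 𝓜 i).map_sub z w

lemma vnPj_sum {α : Type*} (s : Finset α) (g : α → M) (i : ℤ × ℤ) :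
    vnPj 𝓜 (∑ a ∈ s, g a) i = ∑ a ∈ s, vnPj 𝓜 (g a) i := map_sum (vnPjHom 𝓜 i) g s

lemma vnPj_of_mem_same {z : M} {i : ℤ × ℤ} (h : z ∈ 𝓜 i) : vnPj 𝓜 z i = z :=
  DirectSum.decompose_of_mem_same 𝓜 h

lemma vnPj_of_mem_ne {z : M} {i j : ℤ × ℤ} (h : z ∈ 𝓜 i) (hij : i ≠ j) : vnPj 𝓜 z j = 0 :=
  DirectSum.decompose_of_mem_ne 𝓜 h hij

/-- support of `z`. -/
def vnSupp (z : M) : Finset (ℤ × ℤ) :=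
  DFinsupp.support (DirectSum.decompose 𝓜 z)

lemma vnSupp_spec (z : M) : (∑ i ∈ vnSupp 𝓜 z, vnPj 𝓜 z i) = z :=
  DirectSum.sum_support_decompose 𝓜 z

lemma vnPj_of_not_mem_supp {z : M} {i : ℤ × ℤ} (h : i ∉ vnSupp 𝓜 z) : vnPj 𝓜 z i = 0 := by
  have := DFinsupp.notMem_support_iff.1 (by simpa [vnSupp] using h)
  simp only [vnPj, this, ZeroMemClass.coe_zero]

lemma vnMem_supp_iff {z : M} {i : ℤ × ℤ} : i ∈ vnSupp 𝓜 z ↔ vnPj 𝓜 z i ≠ 0 := by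
  rw [vnSupp, DFinsupp.mem_support_iff]
  constructor
  · intro h hc
    exact h (ZeroMemClass.coe_eq_zero.1 hc)
  · intro h hc
    exact h (by simp [vnPj, hc])

lemma vnSupp_zero_iff {z : M} : vnSupp 𝓜 z = ∅ ↔ z = 0 := by
  classical
  constructor
  · intro h
    have := vnSupp_spec 𝓜 z
    rw [h] at this; simpa using this.symm
  · intro h
    subst h
    simp [vnSupp]

end AuxVN

section AuxVN2
open DirectSum

variable {T L : Type*} [CommRing T] [AddCommGroup L] [Module T L]
variable (𝒯 : ℤ × ℤ → AddSubgroup T) [GradedRing 𝒯]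
variable (ℒ : ℤ × ℤ → AddSubgroup L) [DirectSum.Decomposition ℒ]
variable (hsmul : ∀ (i j : ℤ × ℤ), ∀ t ∈ 𝒯 i, ∀ m ∈ ℒ j, t • m ∈ ℒ (i + j))

include hsmul

/-- projection of a homogeneous scalar times anything. -/
lemma vnPj_smul_homog {k : ℤ × ℤ} {t : T} (ht : t ∈ 𝒯 k) (z : L) (i : ℤ × ℤ) :
    vnPj ℒ (t • z) (k + i) = t • vnPj ℒ z i := by
  have hz : t • z = ∑ i' ∈ vnSupp ℒ z, t • vnPj ℒ z i' := by
    rw [← Finset.smul_sum, vnSupp_spec]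
  rw [hz, vnPj_sum, Finset.sum_eq_single i]
  · exact vnPj_of_mem_same ℒ (hsmul _ _ _ ht _ (vnPj_mem ℒ z i))
  · intro b _ hb
    exact vnPj_of_mem_ne ℒ (hsmul _ _ _ ht _ (vnPj_mem ℒ z b))
      (fun hc => hb (by have := congrArg (fun w => w - k) hc; simpa using this))
  · intro hi
    rw [vnPj_of_not_mem_supp ℒ hi, smul_zero, vnPj_zero]

/-- projection of anything times a homogeneous element. -/
lemma vnPj_smul_cyc {e : ℤ × ℤ} {z₀ : L} (hz₀ : z₀ ∈ ℒ e) (t : T) (i : ℤ × ℤ) :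
    vnPj ℒ (t • z₀) i = vnPj 𝒯 t (i - e) • z₀ := by
  have hz : t • z₀ = ∑ j ∈ vnSupp 𝒯 t, vnPj 𝒯 t j • z₀ := by
    rw [← Finset.sum_smul, vnSupp_spec]
  rw [hz, vnPj_sum, Finset.sum_eq_single (i - e)]
  · have h := vnPj_of_mem_same ℒ (hsmul _ _ _ (vnPj_mem 𝒯 t (i - e)) _ hz₀)
    rw [show i - e + e = i by ring] at h
    exact h
  · intro b _ hb
    exact vnPj_of_mem_ne ℒ (hsmul _ _ _ (vnPj_mem 𝒯 t b) _ hz₀)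
      (fun hc => hb (by have := congrArg (fun w => w - e) hc; simpa using this))
  · intro hi
    rw [vnPj_of_not_mem_supp 𝒯 hi, zero_smul, vnPj_zero]

/-- top-component of a product of arbitrary elements. -/
lemma vn_top_smul_eq (r : T) (z : L) {k i₀ : ℤ × ℤ}
    (hk : ∀ j ∈ vnSupp 𝒯 r, vnKey j ≤ vnKey k)
    (hi : ∀ i ∈ vnSupp ℒ z, vnKey i ≤ vnKey i₀) :
    vnPj ℒ (r • z) (k + i₀) = vnPj 𝒯 r k • vnPj ℒ z i₀ := by
  have hrz : r • z = ∑ j ∈ vnSupp 𝒯 r, ∑ i ∈ vnSupp ℒ z, vnPj 𝒯 r j • vnPj ℒ z i := by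
    conv_lhs => rw [← vnSupp_spec 𝒯 r, ← vnSupp_spec ℒ z]
    rw [Finset.sum_smul]
    exact Finset.sum_congr rfl fun j _ => Finset.smul_sum
  rw [hrz]
  simp only [vnPj_sum]
  have hterm : ∀ j ∈ vnSupp 𝒯 r, ∀ i ∈ vnSupp ℒ z, ¬(j = k ∧ i = i₀) →
      vnPj ℒ (vnPj 𝒯 r j • vnPj ℒ z i) (k + i₀) = 0 := by
    intro j hj i hi' hne
    refine vnPj_of_mem_ne ℒ (hsmul _ _ _ (vnPj_mem 𝒯 r j) _ (vnPj_mem ℒ z i)) ?_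
    intro hc
    exact hne (vnKey_top_unique (hk j hj) (hi i hi') hc)
  rw [Finset.sum_eq_single k]
  · rw [Finset.sum_eq_single i₀]
    · exact vnPj_of_mem_same ℒ (hsmul _ _ _ (vnPj_mem 𝒯 r k) _ (vnPj_mem ℒ z i₀))
    · intro i hi' hne
      by_cases hkmem : k ∈ vnSupp 𝒯 r
      · exact hterm k hkmem i hi' (fun hc => hne hc.2)
      · rw [vnPj_of_not_mem_supp 𝒯 hkmem, zero_smul, vnPj_zero]
    · intro hi'
      rw [vnPj_of_not_mem_supp ℒ hi', smul_zero, vnPj_zero]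
  · intro j hj hne
    exact Finset.sum_eq_zero fun i hi' => hterm j hj i hi' (fun hc => hne hc.1)
  · intro hj
    refine Finset.sum_eq_zero fun i _ => ?_
    rw [vnPj_of_not_mem_supp 𝒯 hj, zero_smul, vnPj_zero]

/-- the top component of `r` acts nilpotently on any `z` killed by `r`. -/
lemma vn_top_nilpotent (r : T) {k : ℤ × ℤ}
    (hk : ∀ j ∈ vnSupp 𝒯 r, vnKey j ≤ vnKey k) :
    ∀ z : L, r • z = 0 → ∃ s : ℕ, (vnPj 𝒯 r k) ^ s • z = 0 := by
  suffices H : ∀ n : ℕ, ∀ z : L, (vnSupp ℒ z).card ≤ n → r • z = 0 →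
      (vnPj 𝒯 r k) ^ n • z = 0 by
    intro z hz
    exact ⟨_, H _ z le_rfl hz⟩
  intro n
  induction n with
  | zero =>
    intro z hc hz
    have : vnSupp ℒ z = ∅ := Finset.card_eq_zero.1 (le_antisymm hc (Nat.zero_le _))
    rw [(vnSupp_zero_iff ℒ).1 this]
    simp
  | succ n ih =>
    intro z hc hz
    set t := vnPj 𝒯 r k with ht
    by_cases h0 : z = 0
    · simp [h0]
    obtain ⟨i₀, hi₀mem, hi₀top⟩ :=
      Finset.exists_max_image (vnSupp ℒ z) vnKey
        (Finset.nonempty_iff_ne_empty.2 (fun hc' => h0 ((vnSupp_zero_iff ℒ).1 hc')))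
    have htop : t • vnPj ℒ z i₀ = 0 := by
      have h2 := vn_top_smul_eq 𝒯 ℒ hsmul r z hk hi₀top
      rw [hz, vnPj_zero] at h2
      exact h2.symm
    have hrz' : r • (t • z) = 0 := by
      rw [smul_smul, mul_comm, ← smul_smul, hz, smul_zero]
    have hsub : vnSupp ℒ (t • z) ⊆ (Finset.image (fun i => k + i) ((vnSupp ℒ z).erase i₀)) := by
      intro i' hi'
      have hne := (vnMem_supp_iff ℒ).1 hi'
      have heq : vnPj ℒ (t • z) i' = t • vnPj ℒ z (i' - k) := by
        have h3 := vnPj_smul_homog 𝒯 ℒ hsmul (vnPj_mem 𝒯 r k) z (i' - k)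
        rw [show k + (i' - k) = i' by ring] at h3
        rw [← ht] at h3
        exact h3
      rw [heq] at hne
      have hmem : i' - k ∈ vnSupp ℒ z := by
        rw [vnMem_supp_iff]
        intro hc'
        exact hne (by rw [hc', smul_zero])
      have hne₀ : i' - k ≠ i₀ := by
        intro hc'
        rw [hc'] at hne
        exact hne htop
      exact Finset.mem_image.2 ⟨i' - k, Finset.mem_erase.2 ⟨hne₀, hmem⟩, by ring⟩
    have hcard : (vnSupp ℒ (t • z)).card ≤ n := by
      calc (vnSupp ℒ (t • z)).card ≤ _ := Finset.card_le_card hsub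
        _ ≤ ((vnSupp ℒ z).erase i₀).card := Finset.card_image_le
        _ ≤ n := by
            rw [Finset.card_erase_of_mem hi₀mem]
            omega
    have h4 := ih (t • z) hcard hrz'
    rw [pow_succ, ← smul_smul]
    exact h4

end AuxVN2

section AuxVN3
open DirectSum

variable {R₀ T : Type*} [CommRing R₀] [CommRing T] [Algebra R₀ T]
variable (𝒯 : ℤ × ℤ → AddSubgroup T) [GradedRing 𝒯]
variable {dd c : ℕ} (x : Fin dd → T) (y : Fin c → T) (f : Fin dd → ℤ) (d : Fin c → ℤ)

/-- degrees attainable by monomials avoiding `P`. -/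
def vnE (P : Ideal T) : AddSubmonoid (ℤ × ℤ) :=
  AddSubmonoid.closure ((fun i => ((0 : ℤ), f i)) '' {i | x i ∉ P} ∪
    (fun j => ((1 : ℤ), d j)) '' {j | y j ∉ P})

lemma vn_smulT : ∀ (i j : ℤ × ℤ), ∀ t ∈ 𝒯 i, ∀ m ∈ 𝒯 j, t • m ∈ 𝒯 (i + j) := by
  intro i j t ht m hm
  rw [smul_eq_mul]
  exact SetLike.mul_mem_graded ht hm

variable (hx : ∀ i, x i ∈ 𝒯 (0, f i)) (hy : ∀ j, y j ∈ 𝒯 (1, d j))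

include hx hy in
/-- every monomial is homogeneous and lies in `P` or has degree in `vnE`. -/
lemma vn_monomial_homog (P : Ideal T)
    (t : T) (ht : t ∈ Submonoid.closure (Set.range x ∪ Set.range y)) :
    ∃ i : ℤ × ℤ, t ∈ 𝒯 i ∧ (t ∈ P ∨ i ∈ vnE x y f d P) := by
  induction ht using Submonoid.closure_induction with
  | one => exact ⟨0, SetLike.one_mem_graded 𝒯, Or.inr (zero_mem _)⟩
  | mem s hs =>
    rcases hs with ⟨i, rfl⟩ | ⟨j, rfl⟩
    · refine ⟨(0, f i), hx i, ?_⟩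
      by_cases hP : x i ∈ P
      · exact Or.inl hP
      · exact Or.inr (AddSubmonoid.subset_closure (Or.inl ⟨i, hP, rfl⟩))
    · refine ⟨(1, d j), hy j, ?_⟩
      by_cases hP : y j ∈ P
      · exact Or.inl hP
      · exact Or.inr (AddSubmonoid.subset_closure (Or.inr ⟨j, hP, rfl⟩))
  | mul a b _ _ iha ihb =>
    obtain ⟨ia, hia, hPa⟩ := iha
    obtain ⟨ib, hib, hPb⟩ := ihb
    refine ⟨ia + ib, SetLike.mul_mem_graded hia hib, ?_⟩
    rcases hPa with hPa | hEa
    · exact Or.inl (Ideal.mul_mem_right _ _ hPa)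
    rcases hPb with hPb | hEb
    · exact Or.inl (Ideal.mul_mem_left _ _ hPb)
    · exact Or.inr (add_mem hEa hEb)

variable (halg : ∀ r : R₀, algebraMap R₀ T r ∈ 𝒯 (0, 0))
variable (hgen : Algebra.adjoin R₀ (Set.range x ∪ Set.range y) = ⊤)

include hx hy halg hgen in
/-- a graded piece whose degree is not attainable lies in `P`. -/
lemma vn_piece_subset_prime (P : Ideal T) {m w : ℤ} (hmw : (m, w) ∉ vnE x y f d P) :
    ∀ t ∈ 𝒯 (m, w), t ∈ P := by
  have key : ∀ s, s ∈ Submodule.span R₀ ((Submonoid.closure (Set.range x ∪ Set.range y) : Submonoid T) : Set T) → vnPj 𝒯 s (m, w) ∈ P := by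
    intro s hs
    induction hs using Submodule.span_induction with
    | mem z hz =>
      obtain ⟨i, hzi, hP⟩ := vn_monomial_homog 𝒯 x y f d hx hy P z hz
      by_cases hi : i = (m, w)
      · subst hi
        rw [vnPj_of_mem_same 𝒯 hzi]
        rcases hP with hP | hE
        · exact hP
        · exact absurd hE hmw
      · rw [vnPj_of_mem_ne 𝒯 hzi hi]
        exact zero_mem P
    | zero => rw [vnPj_zero]; exact zero_mem P
    | add a b _ _ iha ihb => rw [vnPj_add]; exact add_mem iha ihb
    | smul r z _ ih =>
      rw [Algebra.smul_def]
      have h2 := vnPj_smul_homog 𝒯 𝒯 (vn_smulT 𝒯) (halg r) z (m, w)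
      rw [smul_eq_mul] at h2
      rw [show ((0 : ℤ), (0 : ℤ)) + (m, w) = (m, w) by simp] at h2
      rw [h2]
      exact Ideal.mul_mem_left _ _ ih
  intro t ht
  have htop : t ∈ Submodule.span R₀ ((Submonoid.closure (Set.range x ∪ Set.range y) : Submonoid T) : Set T) := by
    rw [← Algebra.adjoin_eq_span, hgen]
    trivial
  have := key t htop
  rw [vnPj_of_mem_same 𝒯 ht] at this
  exact this

end AuxVN3

section AuxVN4
open DirectSum

variable {T : Type*} [CommRing T]
variable (𝒯 : ℤ × ℤ → AddSubgroup T) [GradedRing 𝒯]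
variable {dd c : ℕ} (x : Fin dd → T) (y : Fin c → T) (f : Fin dd → ℤ) (d : Fin c → ℤ)
variable (hTnn : ∀ i : ℤ × ℤ, i.1 < 0 ∨ i.2 < 0 → 𝒯 i = ⊥)
variable (hx : ∀ i, x i ∈ 𝒯 (0, f i)) (hy : ∀ j, y j ∈ 𝒯 (1, d j))

include hTnn hx in
lemma vn_E_bound (P : Ideal T) (e₀ : ℤ) (hj₀ : ∀ j : Fin c, y j ∉ P → e₀ ≤ d j) :
    ∀ v ∈ vnE x y f d P, 0 ≤ v.1 ∧ v.1 * e₀ ≤ v.2 := by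
  intro v hv
  induction hv using AddSubmonoid.closure_induction with
  | mem v hv =>
    rcases hv with ⟨i, hiP, rfl⟩ | ⟨j, hjP, rfl⟩
    · refine ⟨le_refl 0, ?_⟩
      simp only [zero_mul]
      by_contra hneg
      have hbot : 𝒯 (0, f i) = ⊥ := hTnn _ (Or.inr (by omega))
      have : x i = 0 := by
        have := hx i
        rw [hbot] at this
        exact AddSubgroup.mem_bot.1 this
      exact hiP (this ▸ zero_mem P)
    · exact ⟨zero_le_one, by simpa using hj₀ j hjP⟩
  | zero => simp
  | add a b _ _ iha ihb =>
    refine ⟨by simpa using add_nonneg iha.1 ihb.1, ?_⟩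
    have : (a + b).1 * e₀ = a.1 * e₀ + b.1 * e₀ := by
      simp [Prod.fst_add, add_mul]
    rw [this]
    simpa using add_le_add iha.2 ihb.2

lemma vn_E_first_zero (P : Ideal T) (hally : ∀ j : Fin c, y j ∈ P) :
    ∀ v ∈ vnE x y f d P, v.1 = 0 := by
  intro v hv
  induction hv using AddSubmonoid.closure_induction with
  | mem v hv =>
    rcases hv with ⟨i, _, rfl⟩ | ⟨j, hjP, rfl⟩
    · rfl
    · exact absurd (hally j) hjP
  | zero => rfl
  | add a b _ _ iha ihb => simp [Prod.fst_add, iha, ihb]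

/-- components of a product in terms of components of the factors. -/
lemma vnPj_mul_support (a b : T) (i : ℤ × ℤ) (hne : vnPj 𝒯 (a * b) i ≠ 0) :
    ∃ j ∈ vnSupp 𝒯 a, ∃ k ∈ vnSupp 𝒯 b, j + k = i := by
  by_contra hcon
  push_neg at hcon
  apply hne
  have hab : a * b = ∑ j ∈ vnSupp 𝒯 a, ∑ k ∈ vnSupp 𝒯 b, vnPj 𝒯 a j * vnPj 𝒯 b k := by
    conv_lhs => rw [← vnSupp_spec 𝒯 a, ← vnSupp_spec 𝒯 b]
    rw [Finset.sum_mul]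
    exact Finset.sum_congr rfl fun j _ => Finset.mul_sum _ _ _
  rw [hab]
  simp only [vnPj_sum]
  refine Finset.sum_eq_zero fun j hj => Finset.sum_eq_zero fun k hk => ?_
  exact vnPj_of_mem_ne 𝒯 (SetLike.mul_mem_graded (vnPj_mem 𝒯 a j) (vnPj_mem 𝒯 b k))
    (hcon j hj k hk)

/-- elements of the degree-`(0,*)` subring are supported in degrees `(0,*)`. -/
lemma vn_Rsub_supp :
    ∀ r ∈ Subring.closure {t : T | ∃ l : ℤ, t ∈ 𝒯 (0, l)},
      ∀ i : ℤ × ℤ, vnPj 𝒯 r i ≠ 0 → i.1 = 0 := by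
  intro r hr
  induction hr using Subring.closure_induction with
  | mem t ht =>
    intro i hi
    obtain ⟨l, hl⟩ := ht
    by_cases h : (((0 : ℤ), l) : ℤ × ℤ) = i
    · rw [← h]
    · exact absurd (vnPj_of_mem_ne 𝒯 hl h) hi
  | zero => intro i hi; exact absurd (vnPj_zero 𝒯 i) hi
  | one =>
    intro i hi
    by_cases h : ((0 : ℤ × ℤ)) = i
    · rw [← h]; rfl
    · exact absurd (vnPj_of_mem_ne 𝒯 (SetLike.one_mem_graded 𝒯) h) hi
  | add a b _ _ iha ihb =>
    intro i hi
    rw [vnPj_add] at hi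
    by_cases ha : vnPj 𝒯 a i = 0
    · exact ihb i (by rw [ha, zero_add] at hi; exact hi)
    · exact iha i ha
  | neg a _ iha =>
    intro i hi
    exact iha i (by intro hc; exact hi (by rw [vnPj_neg, hc, neg_zero]))
  | mul a b _ _ iha ihb =>
    intro i hi
    obtain ⟨j, hj, k, hk, hjk⟩ := vnPj_mul_support 𝒯 a b i hi
    have h1 := iha j ((vnMem_supp_iff 𝒯).1 hj)
    have h2 := ihb k ((vnMem_supp_iff 𝒯).1 hk)
    rw [← hjk]
    simp [Prod.fst_add, h1, h2]

end AuxVN4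

section AuxVN5
open DirectSum

variable {L : Type*} [AddCommGroup L]
variable (ℒ : ℤ × ℤ → AddSubgroup L) [DirectSum.Decomposition ℒ]

/-- elements of a row are supported in that row. -/
lemma vn_row_supp (n : ℤ) :
    ∀ m ∈ (⨆ l : ℤ, ℒ (n, l) : AddSubgroup L),
      ∀ i : ℤ × ℤ, vnPj ℒ m i ≠ 0 → i.1 = n := by
  intro m hm
  refine AddSubgroup.iSup_induction (x := m) _ hm ?_ ?_ ?_
  · intro l z hz i hi
    by_cases h : ((n, l) : ℤ × ℤ) = i
    · rw [← h]
    · exact absurd (vnPj_of_mem_ne ℒ hz h) hi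
  · intro i hi
    exact absurd (vnPj_zero ℒ i) hi
  · intro z w ihz ihw i hi
    rw [vnPj_add] at hi
    by_cases hz : vnPj ℒ z i = 0
    · exact ihw i (by rw [hz, zero_add] at hi; exact hi)
    · exact ihz i hz

/-- removing the top (or any) component shrinks the support. -/
lemma vnSupp_sub_pj {z : L} (k : ℤ × ℤ) :
    vnSupp ℒ (z - vnPj ℒ z k) ⊆ (vnSupp ℒ z).erase k := by
  intro i hi
  have hne := (vnMem_supp_iff ℒ).1 hi
  rw [vnPj_sub] at hne
  by_cases h : i = k
  · subst h
    rw [vnPj_of_mem_same ℒ (vnPj_mem ℒ z i)] at hne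
    simp at hne
  · rw [vnPj_of_mem_ne ℒ (vnPj_mem ℒ z k) (Ne.symm h), sub_zero] at hne
    exact Finset.mem_erase.2 ⟨h, (vnMem_supp_iff ℒ).2 hne⟩

end AuxVN5

section AuxVN6
open DirectSum

variable {T L : Type*} [CommRing T] [AddCommGroup L] [Module T L]
variable (𝒯 : ℤ × ℤ → AddSubgroup T) [GradedRing 𝒯]
variable (ℒ : ℤ × ℤ → AddSubgroup L) [DirectSum.Decomposition ℒ]

/-- a graded ideal which is prime on homogeneous elements is prime. -/
lemma vn_isPrime_of_homog (P : Ideal T) (hne : P ≠ ⊤)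
    (hgr : ∀ t ∈ P, ∀ i, vnPj 𝒯 t i ∈ P)
    (hhom : ∀ (i j : ℤ × ℤ) (a b : T), a ∈ 𝒯 i → b ∈ 𝒯 j → a * b ∈ P → a ∈ P ∨ b ∈ P) :
    P.IsPrime := by
  refine ⟨hne, ?_⟩
  suffices H : ∀ N : ℕ, ∀ a b : T, (vnSupp 𝒯 a).card + (vnSupp 𝒯 b).card ≤ N →
      a * b ∈ P → a ∈ P ∨ b ∈ P by
    intro a b hab
    exact H _ a b le_rfl hab
  intro N
  induction N with
  | zero =>
    intro a b hc _
    left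
    have : vnSupp 𝒯 a = ∅ := Finset.card_eq_zero.1 (by omega)
    rw [(vnSupp_zero_iff 𝒯).1 this]
    exact zero_mem P
  | succ N ih =>
    intro a b hc hab
    by_cases ha0 : a = 0
    · exact Or.inl (ha0 ▸ zero_mem P)
    by_cases hb0 : b = 0
    · exact Or.inr (hb0 ▸ zero_mem P)
    obtain ⟨ka, hkaM, hka⟩ := Finset.exists_max_image (vnSupp 𝒯 a) vnKey
      (Finset.nonempty_iff_ne_empty.2 (fun hc' => ha0 ((vnSupp_zero_iff 𝒯).1 hc')))
    obtain ⟨kb, hkbM, hkb⟩ := Finset.exists_max_image (vnSupp 𝒯 b) vnKey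
      (Finset.nonempty_iff_ne_empty.2 (fun hc' => hb0 ((vnSupp_zero_iff 𝒯).1 hc')))
    have htop : vnPj 𝒯 a ka * vnPj 𝒯 b kb ∈ P := by
      have h2 := vn_top_smul_eq 𝒯 𝒯 (vn_smulT 𝒯) a b hka hkb
      rw [smul_eq_mul, smul_eq_mul] at h2
      rw [← h2]
      exact hgr _ hab _
    rcases hhom _ _ _ _ (vnPj_mem 𝒯 a ka) (vnPj_mem 𝒯 b kb) htop with h | h
    · have hab' : (a - vnPj 𝒯 a ka) * b ∈ P := by
        have : (a - vnPj 𝒯 a ka) * b = a * b - vnPj 𝒯 a ka * b := by ring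
        rw [this]
        exact sub_mem hab (Ideal.mul_mem_right _ _ h)
      have hcard : (vnSupp 𝒯 (a - vnPj 𝒯 a ka)).card + (vnSupp 𝒯 b).card ≤ N := by
        have h1 := Finset.card_le_card (vnSupp_sub_pj 𝒯 ka (z := a))
        rw [Finset.card_erase_of_mem hkaM] at h1
        have h2 : 1 ≤ (vnSupp 𝒯 a).card := Finset.card_pos.2 ⟨ka, hkaM⟩
        omega
      rcases ih _ _ hcard hab' with h' | h'
      · left
        have : a = (a - vnPj 𝒯 a ka) + vnPj 𝒯 a ka := by ring
        rw [this]
        exact add_mem h' h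
      · exact Or.inr h'
    · have hab' : a * (b - vnPj 𝒯 b kb) ∈ P := by
        have : a * (b - vnPj 𝒯 b kb) = a * b - a * vnPj 𝒯 b kb := by ring
        rw [this]
        exact sub_mem hab (Ideal.mul_mem_left _ _ h)
      have hcard : (vnSupp 𝒯 a).card + (vnSupp 𝒯 (b - vnPj 𝒯 b kb)).card ≤ N := by
        have h1 := Finset.card_le_card (vnSupp_sub_pj 𝒯 kb (z := b))
        rw [Finset.card_erase_of_mem hkbM] at h1
        have h2 : 1 ≤ (vnSupp 𝒯 b).card := Finset.card_pos.2 ⟨kb, hkbM⟩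
        omega
      rcases ih _ _ hcard hab' with h' | h'
      · exact Or.inl h'
      · right
        have : b = (b - vnPj 𝒯 b kb) + vnPj 𝒯 b kb := by ring
        rw [this]
        exact add_mem h' h

/-- colon ideal `(V : z₀)`. -/
def vnColon (V : Submodule T L) (z₀ : L) : Ideal T where
  carrier := {t | t • z₀ ∈ V}
  add_mem' := by
    intro a b ha hb
    simp only [Set.mem_setOf_eq, add_smul] at *
    exact V.add_mem ha hb
  zero_mem' := by simp
  smul_mem' := by
    intro c t ht
    simp only [Set.mem_setOf_eq, smul_eq_mul, mul_smul] at *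
    exact V.smul_mem c ht

lemma vnColon_mem {V : Submodule T L} {z₀ : L} {t : T} :
    t ∈ vnColon V z₀ ↔ t • z₀ ∈ V := Iff.rfl

/-- graded submodule predicate. -/
def vnGr (V : Submodule T L) : Prop := ∀ z ∈ V, ∀ i, vnPj ℒ z i ∈ V

/-- filtration invariant. -/
def vnGood (K₀ : Submodule T L) (V : Submodule T L) : Prop :=
  ∃ (s : ℕ) (P : Fin s → Ideal T) (e : Fin s → ℤ × ℤ),
    (∀ k, (P k).IsPrime) ∧
    (∀ k, ∀ t : T, (∀ z : L, t • z = 0) → t ∈ P k) ∧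
    (∀ i : ℤ × ℤ, (∃ z, z ∈ V ∧ z ∈ ℒ i ∧ z ∉ K₀) ↔
      ∃ k, ∃ t, t ∈ 𝒯 (i - e k) ∧ t ∉ P k)

variable (hsmul : ∀ (i j : ℤ × ℤ), ∀ t ∈ 𝒯 i, ∀ m ∈ ℒ j, t • m ∈ ℒ (i + j))

include hsmul in
/-- the graded prime filtration lemma. -/
lemma vn_filtration [IsNoetherianRing T] [Module.Finite T L]
    (K₀ S : Submodule T L) (hK₀ : vnGr ℒ K₀) (hS : vnGr ℒ S) (hKS : K₀ ≤ S) :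
    vnGood 𝒯 ℒ K₀ S := by
  classical
  set 𝒞 : Set (Submodule T L) := {V | vnGr ℒ V ∧ K₀ ≤ V ∧ V ≤ S ∧ vnGood 𝒯 ℒ K₀ V} with h𝒞
  have hK₀c : K₀ ∈ 𝒞 := by
    refine ⟨hK₀, le_rfl, hKS, 0, Fin.elim0, Fin.elim0, fun k => k.elim0, fun k => k.elim0, ?_⟩
    intro i
    constructor
    · rintro ⟨z, hzV, _, hzK⟩
      exact absurd hzV hzK
    · rintro ⟨k, _⟩
      exact k.elim0
  obtain ⟨Vm, hVmem, hVmax⟩ := (set_has_maximal_iff_noetherian.2 inferInstance) 𝒞 ⟨K₀, hK₀c⟩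
  obtain ⟨hVgr, hKV, hVS, hVgood⟩ := hVmem
  rcases eq_or_lt_of_le hVS with heq | hlt
  · rw [← heq]
    exact hVgood
  exfalso
  -- pick a homogeneous element of S not in Vm
  obtain ⟨z, hzS, hzV⟩ := SetLike.exists_of_lt hlt
  have hcomp : ∃ i, vnPj ℒ z i ∉ Vm := by
    by_contra hcon
    push_neg at hcon
    apply hzV
    rw [← vnSupp_spec ℒ z]
    exact Submodule.sum_mem _ fun i _ => hcon i
  obtain ⟨i', hi'⟩ := hcomp
  -- the set of colon ideals of homogeneous elements of S \ Vm
  set Ω : Set (Ideal T) := {I | ∃ (e' : ℤ × ℤ) (w : L), w ∈ ℒ e' ∧ w ∈ S ∧ w ∉ Vm ∧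
    I = vnColon Vm w} with hΩ
  have hΩne : Ω.Nonempty := ⟨vnColon Vm (vnPj ℒ z i'), i', vnPj ℒ z i',
    vnPj_mem ℒ z i', hS z hzS i', hi', rfl⟩
  obtain ⟨P', hP'Ω, hP'max⟩ := (set_has_maximal_iff_noetherian.2 inferInstance) Ω hΩne
  obtain ⟨e', z₀, hz₀ℒ, hz₀S, hz₀V, hP'eq⟩ := hP'Ω
  subst hP'eq
  -- basic properties of P'
  have hP'gr : ∀ t ∈ vnColon Vm z₀, ∀ j, vnPj 𝒯 t j ∈ vnColon Vm z₀ := by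
    intro t ht j
    rw [vnColon_mem]
    have h2 := vnPj_smul_cyc 𝒯 ℒ hsmul hz₀ℒ t (j + e')
    rw [add_sub_cancel_right] at h2
    rw [← h2]
    exact hVgr _ ht _
  have hP'ne : vnColon Vm z₀ ≠ ⊤ := by
    intro hc
    apply hz₀V
    have : (1 : T) ∈ vnColon Vm z₀ := hc ▸ Submodule.mem_top
    rw [vnColon_mem, one_smul] at this
    exact this
  have hP'hom : ∀ (i j : ℤ × ℤ) (a b : T), a ∈ 𝒯 i → b ∈ 𝒯 j → a * b ∈ vnColon Vm z₀ →
      a ∈ vnColon Vm z₀ ∨ b ∈ vnColon Vm z₀ := by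
    intro ia jb a b ha hb hab
    by_cases hbP : b ∈ vnColon Vm z₀
    · exact Or.inr hbP
    left
    have hw'ℒ : b • z₀ ∈ ℒ (jb + e') := hsmul _ _ _ hb _ hz₀ℒ
    have hw'S : b • z₀ ∈ S := S.smul_mem b hz₀S
    have hw'V : b • z₀ ∉ Vm := hbP
    have hle : vnColon Vm z₀ ≤ vnColon Vm (b • z₀) := by
      intro t ht
      rw [vnColon_mem, smul_smul, mul_comm, ← smul_smul]
      exact Vm.smul_mem b ht
    have hmem : vnColon Vm (b • z₀) ∈ Ω := ⟨jb + e', b • z₀, hw'ℒ, hw'S, hw'V, rfl⟩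
    have heq2 : vnColon Vm z₀ = vnColon Vm (b • z₀) := by
      by_contra hne2
      exact hP'max _ hmem (lt_of_le_of_ne hle hne2)
    rw [heq2, vnColon_mem, smul_smul]
    rw [vnColon_mem] at hab
    exact hab
  have hP'prime : (vnColon Vm z₀).IsPrime :=
    vn_isPrime_of_homog 𝒯 _ hP'ne hP'gr hP'hom
  -- the bigger submodule
  set V' : Submodule T L := Vm ⊔ Submodule.span T {z₀} with hV'
  have hV'gr : vnGr ℒ V' := by
    intro w hw i
    obtain ⟨v, hv, w₂, hw₂, rfl⟩ := Submodule.mem_sup.1 hw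
    obtain ⟨t, rfl⟩ := Submodule.mem_span_singleton.1 hw₂
    rw [vnPj_add, vnPj_smul_cyc 𝒯 ℒ hsmul hz₀ℒ t i]
    exact V'.add_mem (le_sup_left (α := Submodule T L) (hVgr v hv i))
      (le_sup_right (α := Submodule T L)
        (Submodule.smul_mem _ _ (Submodule.mem_span_singleton_self z₀)))
  have hV'S : V' ≤ S := sup_le hVS ((Submodule.span_le).2 (by simpa using hz₀S))
  have hV'good : vnGood 𝒯 ℒ K₀ V' := by
    obtain ⟨s, P, e, hPr, hKill, hIff⟩ := hVgood
    refine ⟨s + 1, Fin.snoc P (vnColon Vm z₀), Fin.snoc e e', ?_, ?_, ?_⟩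
    · intro k
      refine Fin.lastCases ?_ ?_ k
      · rw [Fin.snoc_last]; exact hP'prime
      · intro k'; rw [Fin.snoc_castSucc]; exact hPr k'
    · intro k
      refine Fin.lastCases ?_ ?_ k
      · rw [Fin.snoc_last]
        intro t ht
        rw [vnColon_mem, ht]
        exact Vm.zero_mem
      · intro k'; rw [Fin.snoc_castSucc]; exact hKill k'
    · intro i
      constructor
      · rintro ⟨w, hwV', hwℒ, hwK⟩
        obtain ⟨v, hv, w₂, hw₂, rfl⟩ := Submodule.mem_sup.1 hwV'
        obtain ⟨t, rfl⟩ := Submodule.mem_span_singleton.1 hw₂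
        by_cases ht' : vnPj 𝒯 t (i - e') • z₀ ∈ Vm
        · have hwVm : v + t • z₀ ∈ Vm := by
            have h3 : vnPj ℒ (v + t • z₀) i = v + t • z₀ := vnPj_of_mem_same ℒ hwℒ
            rw [← h3, vnPj_add, vnPj_smul_cyc 𝒯 ℒ hsmul hz₀ℒ t i]
            exact Vm.add_mem (hVgr v hv i) ht'
          obtain ⟨k, t₂, ht₂, ht₂P⟩ := (hIff i).1 ⟨v + t • z₀, hwVm, hwℒ, hwK⟩
          exact ⟨k.castSucc, t₂, by rw [Fin.snoc_castSucc]; exact ht₂,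
            by rw [Fin.snoc_castSucc]; exact ht₂P⟩
        · exact ⟨Fin.last s, vnPj 𝒯 t (i - e'),
            by rw [Fin.snoc_last]; exact vnPj_mem 𝒯 t (i - e'),
            by rw [Fin.snoc_last]; exact ht'⟩
      · rintro ⟨k, t, htmem, htP⟩
        refine Fin.lastCases ?_ ?_ k htmem htP
        · intro htmem htP
          rw [Fin.snoc_last] at htmem htP
          refine ⟨t • z₀, ?_, ?_, ?_⟩
          · exact le_sup_right (α := Submodule T L)
              (Submodule.smul_mem _ _ (Submodule.mem_span_singleton_self z₀))
          · have := hsmul _ _ _ htmem _ hz₀ℒ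
            rw [sub_add_cancel] at this
            exact this
          · intro hc
            exact htP (vnColon_mem.2 (hKV hc))
        · intro k' htmem htP
          rw [Fin.snoc_castSucc] at htmem htP
          obtain ⟨w, hwV, hwℒ, hwK⟩ := (hIff i).2 ⟨k', t, htmem, htP⟩
          exact ⟨w, le_sup_left (α := Submodule T L) hwV, hwℒ, hwK⟩
  have hV'mem : V' ∈ 𝒞 := ⟨hV'gr, le_trans hKV le_sup_left, hV'S, hV'good⟩
  apply hVmax V' hV'mem
  refine lt_of_le_of_ne le_sup_left ?_
  intro hc
  apply hz₀V
  rw [hc]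
  exact le_sup_right (α := Submodule T L) (Submodule.mem_span_singleton_self z₀)

end AuxVN6

section AuxVN7

/-- eventual minimum of finitely many affine functions. -/
lemma vn_min_affine {s : ℕ} (Λ : Finset (Fin s)) (hΛ : Λ.Nonempty) (α β : Fin s → ℤ) :
    ∃ k₀ ∈ Λ, ∃ n₃ : ℤ, 0 ≤ n₃ ∧ ∀ n ≥ n₃, ∀ k ∈ Λ, α k₀ * n + β k₀ ≤ α k * n + β k := by
  classical
  have himg : (Λ.image α).Nonempty := hΛ.image α
  set αm := (Λ.image α).min' himg with hαm
  have hΛ'ne : (Λ.filter (fun k => α k = αm)).Nonempty := by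
    obtain ⟨k, hk, hke⟩ := Finset.mem_image.1 ((Λ.image α).min'_mem himg)
    exact ⟨k, Finset.mem_filter.2 ⟨hk, hke⟩⟩
  obtain ⟨k₀, hk₀, hk₀min⟩ := Finset.exists_min_image _ β hΛ'ne
  have hk₀Λ : k₀ ∈ Λ := (Finset.mem_filter.1 hk₀).1
  have hk₀α : α k₀ = αm := (Finset.mem_filter.1 hk₀).2
  have hβmax : ∃ B : ℤ, 0 ≤ B ∧ ∀ k ∈ Λ, β k₀ - β k ≤ B := by
    obtain ⟨k₁, _, hk₁⟩ := Finset.exists_max_image Λ (fun k => β k₀ - β k) hΛ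
    exact ⟨max (β k₀ - β k₁) 0, le_max_right _ _,
      fun k hk => le_trans (hk₁ k hk) (le_max_left _ _)⟩
  obtain ⟨B, hB0, hB⟩ := hβmax
  refine ⟨k₀, hk₀Λ, B, hB0, ?_⟩
  intro n hn k hk
  have hαle : αm ≤ α k := Finset.min'_le _ _ (Finset.mem_image_of_mem α hk)
  rcases eq_or_lt_of_le hαle with heq | hlt
  · have hkΛ' : k ∈ Λ.filter (fun k => α k = αm) := Finset.mem_filter.2 ⟨hk, heq.symm⟩
    have := hk₀min k hkΛ'
    rw [hk₀α, ← heq]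
    omega
  · have h1 : 1 ≤ α k - α k₀ := by omega
    have h2 : β k₀ - β k ≤ n := le_trans (hB k hk) hn
    have h0n : 0 ≤ n := le_trans hB0 hn
    nlinarith [mul_le_mul_of_nonneg_right h1 h0n]

end AuxVN7



/-- In the bigraded setup (Noetherian (ℕ×ℕ)-graded ring `T`, generated over
`R₀` by `x i` of degrees `(0, f i)` and `y j` of degrees `(1, d j)`, `d` monotone, and a
finitely generated (ℤ×ℤ)-graded `T`-module `ℒ`), assume `ℒ_{(n,*)} ≠ 0` for all sufficiently
large `n`, let `δ` be the least index with `y δ ∉ √(Ann_T ℒ)`, let `R := ⨁_l T_{(0,l)}` (the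
subring of `T` generated by the elements that are homogeneous of degree `(0, l)` for some
`l`), and let `p` be a prime ideal of `R` lying in `Ass_R(ℒ_{(n,*)})` for all sufficiently
large `n` (i.e. `p = (0 :_R m)` for some `m ∈ ℒ_{(n,*)} = ⨆_l ℒ_{(n,l)}`).  Then there exist
`a_p ∈ {d j | δ ≤ j ≤ c}` and `b_p ∈ ℤ` with `v_p(ℒ_{(n,*)}) = a_p * n + b_p` for all
sufficiently large `n`, where `v_p(ℒ_{(n,*)})` is the least `u` such that some `m ∈ ℒ_{(n,u)}`
has `p = (0 :_R m)`. -/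
theorem v_number_row_at_prime_eventually_linear
    {R₀ T L : Type*} [CommRing R₀] [IsNoetherianRing R₀] [CommRing T] [Algebra R₀ T]
    [IsNoetherianRing T] [AddCommGroup L] [Module T L] [Module.Finite T L]
    (𝒯 : ℤ × ℤ → AddSubgroup T) [GradedRing 𝒯]
    (ℒ : ℤ × ℤ → AddSubgroup L) [DirectSum.Decomposition ℒ]
    (hsmul : ∀ (i j : ℤ × ℤ), ∀ t ∈ 𝒯 i, ∀ m ∈ ℒ j, t • m ∈ ℒ (i + j))
    (hTnn : ∀ i : ℤ × ℤ, i.1 < 0 ∨ i.2 < 0 → 𝒯 i = ⊥)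
    (halg : ∀ r : R₀, algebraMap R₀ T r ∈ 𝒯 (0, 0))
    (dd c : ℕ) (x : Fin dd → T) (y : Fin c → T)
    (f : Fin dd → ℤ) (d : Fin c → ℤ) (hdmono : Monotone d)
    (hx : ∀ i, x i ∈ 𝒯 (0, f i)) (hy : ∀ j, y j ∈ 𝒯 (1, d j))
    (hgen : Algebra.adjoin R₀ (Set.range x ∪ Set.range y) = ⊤)
    (hnz : ∃ n₀ : ℤ, ∀ n ≥ n₀, ∃ l : ℤ, ℒ (n, l) ≠ ⊥)
    (δ : Fin c) (hδ : y δ ∉ ((⊤ : Submodule T L).annihilator).radical)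
    (hδmin : ∀ j : Fin c, j < δ → y j ∈ ((⊤ : Submodule T L).annihilator).radical)
    (Rsub : Subring T) (hRsub : Rsub = Subring.closure {t : T | ∃ l : ℤ, t ∈ 𝒯 (0, l)})
    (p : Ideal Rsub) (hpprime : p.IsPrime)
    (hass : ∃ n₀ : ℤ, ∀ n ≥ n₀, ∃ m ∈ (⨆ l : ℤ, ℒ (n, l) : AddSubgroup L),
      ∀ r : Rsub, r ∈ p ↔ (r : T) • m = 0) :
    ∃ j : Fin c, δ ≤ j ∧ ∃ b : ℤ, ∃ n₀ : ℤ, ∀ n ≥ n₀,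
      sInf {u : ℤ | ∃ m ∈ ℒ (n, u), ∀ r : Rsub, r ∈ p ↔ (r : T) • m = 0}
        = d j * n + b := by
  classical
  -- basic Rsub facts
  have hRmem : ∀ (l : ℤ) (t : T), t ∈ 𝒯 (0, l) → t ∈ Rsub := by
    intro l t ht
    rw [hRsub]
    exact Subring.subset_closure ⟨l, ht⟩
  have hRsupp : ∀ r : Rsub, ∀ i : ℤ × ℤ, vnPj 𝒯 (r : T) i ≠ 0 → i.1 = 0 := by
    intro r
    exact vn_Rsub_supp 𝒯 (r : T) (hRsub ▸ r.2)
  have hRcompmem : ∀ (r : Rsub) (i : ℤ × ℤ), vnPj 𝒯 (r : T) i ∈ Rsub := by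
    intro r i
    by_cases h0 : vnPj 𝒯 (r : T) i = 0
    · rw [h0]; exact Rsub.zero_mem
    · have h1 : i.1 = 0 := hRsupp r i h0
      have h2 : i = (0, i.2) := Prod.ext h1 rfl
      exact hRmem i.2 _ (h2 ▸ vnPj_mem 𝒯 (r : T) i)
  -- the fixed annihilator witness
  obtain ⟨na, hassn⟩ := hass
  obtain ⟨m₀, hm₀row, hm₀iff⟩ := hassn na le_rfl
  -- p is a graded ideal
  have hpgraded : ∀ (r : Rsub), r ∈ p → ∀ i : ℤ × ℤ,
      (⟨vnPj 𝒯 (r : T) i, hRcompmem r i⟩ : Rsub) ∈ p := by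
    suffices H : ∀ N : ℕ, ∀ r : Rsub, (vnSupp 𝒯 (r : T)).card ≤ N → r ∈ p → ∀ i : ℤ × ℤ,
        (⟨vnPj 𝒯 (r : T) i, hRcompmem r i⟩ : Rsub) ∈ p by
      intro r hr i
      exact H _ r le_rfl hr i
    intro N
    induction N with
    | zero =>
      intro r hcard hr i
      have h0 : (r : T) = 0 :=
        (vnSupp_zero_iff 𝒯).1 (Finset.card_eq_zero.1 (Nat.le_zero.1 hcard))
      have : (⟨vnPj 𝒯 (r : T) i, hRcompmem r i⟩ : Rsub) = 0 := by
        apply Subtype.ext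
        simp only [h0, vnPj_zero]
        rfl
      rw [this]
      exact zero_mem p
    | succ N ih =>
      intro r hcard hr i
      by_cases hr0 : (r : T) = 0
      · have : (⟨vnPj 𝒯 (r : T) i, hRcompmem r i⟩ : Rsub) = 0 := by
          apply Subtype.ext
          simp only [hr0, vnPj_zero]
          rfl
        rw [this]
        exact zero_mem p
      obtain ⟨k, hkM, hktop⟩ := Finset.exists_max_image (vnSupp 𝒯 (r : T)) vnKey
        (Finset.nonempty_iff_ne_empty.2 (fun hc' => hr0 ((vnSupp_zero_iff 𝒯).1 hc')))
      set t : T := vnPj 𝒯 (r : T) k with htdef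
      have htR : t ∈ Rsub := hRcompmem r k
      -- the top component is in p
      have hrm : (r : T) • m₀ = 0 := (hm₀iff r).1 hr
      obtain ⟨q, hq⟩ := vn_top_nilpotent 𝒯 ℒ hsmul (r : T) hktop m₀ hrm
      have htp : (⟨t, htR⟩ : Rsub) ∈ p := by
        apply hpprime.mem_of_pow_mem q
        rw [hm₀iff]
        rw [SubmonoidClass.coe_pow]
        exact hq
      have hrt : r - ⟨t, htR⟩ ∈ p := sub_mem hr htp
      have hcoe : ((r - ⟨t, htR⟩ : Rsub) : T) = (r : T) - t := rfl
      have hc2 : (vnSupp 𝒯 ((r - ⟨t, htR⟩ : Rsub) : T)).card ≤ N := by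
        rw [hcoe]
        have h1 := Finset.card_le_card (vnSupp_sub_pj 𝒯 k (z := (r : T)))
        rw [Finset.card_erase_of_mem hkM, ← htdef] at h1
        have h2 : 1 ≤ (vnSupp 𝒯 (r : T)).card := Finset.card_pos.2 ⟨k, hkM⟩
        omega
      by_cases hik : i = k
      · subst hik
        exact htp
      · have heq : vnPj 𝒯 ((r : T) - t) i = vnPj 𝒯 (r : T) i := by
          rw [vnPj_sub, vnPj_of_mem_ne 𝒯 (vnPj_mem 𝒯 (r : T) k) (Ne.symm hik), sub_zero]
        have h3 := ih (r - ⟨t, htR⟩) hc2 hrt i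
        have h4 : (⟨vnPj 𝒯 (r : T) i, hRcompmem r i⟩ : Rsub)
            = ⟨vnPj 𝒯 ((r - ⟨t, htR⟩ : Rsub) : T) i, hRcompmem _ i⟩ := by
          apply Subtype.ext
          show vnPj 𝒯 (r : T) i = vnPj 𝒯 ((r - ⟨t, htR⟩ : Rsub) : T) i
          rw [hcoe]
          exact heq.symm
        rw [h4]
        exact h3
  -- the submodule of elements killed by all homogeneous elements of p
  set S : Submodule T L :=
    { carrier := {z | ∀ (s : Rsub) (l : ℤ), (s : T) ∈ 𝒯 (0, l) → s ∈ p → (s : T) • z = 0}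
      add_mem' := by
        intro a b ha hb s l hs hp
        rw [smul_add, ha s l hs hp, hb s l hs hp, add_zero]
      zero_mem' := by
        intro s l hs hp
        rw [smul_zero]
      smul_mem' := by
        intro t z hz s l hs hp
        rw [smul_comm, hz s l hs hp, smul_zero] } with hSdef
  have hSmem : ∀ z : L, z ∈ S ↔
      ∀ (s : Rsub) (l : ℤ), (s : T) ∈ 𝒯 (0, l) → s ∈ p → (s : T) • z = 0 := fun z => Iff.rfl
  -- the submodule of elements killed by some homogeneous element outside p
  set K : Submodule T L :=
    { carrier := {z | ∃ (s : Rsub) (l : ℤ), (s : T) ∈ 𝒯 (0, l) ∧ s ∉ p ∧ (s : T) • z = 0}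
      add_mem' := by
        rintro a b ⟨s1, l1, hs1, hp1, hk1⟩ ⟨s2, l2, hs2, hp2, hk2⟩
        refine ⟨s1 * s2, l1 + l2, ?_, ?_, ?_⟩
        · have h2 := SetLike.mul_mem_graded hs1 hs2
          rw [show (((0 : ℤ), l1) + ((0 : ℤ), l2) : ℤ × ℤ) = ((0 : ℤ), l1 + l2) by
            rw [Prod.mk_add_mk, add_zero]] at h2
          exact h2
        · intro hc
          rcases hpprime.mem_or_mem hc with h | h
          · exact hp1 h
          · exact hp2 h
        · have hc1 : ((s1 * s2 : Rsub) : T) = (s1 : T) * (s2 : T) := rfl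
          have e1 : ((s1 : T) * (s2 : T)) • a = 0 := by
            rw [mul_comm, mul_smul, hk1, smul_zero]
          have e2 : ((s1 : T) * (s2 : T)) • b = 0 := by
            rw [mul_smul, hk2, smul_zero]
          rw [smul_add, hc1, e1, e2, add_zero]
      zero_mem' := by
        refine ⟨1, 0, ?_, ?_, smul_zero _⟩
        · have h1 : ((1 : Rsub) : T) = 1 := rfl
          rw [h1]
          exact SetLike.one_mem_graded 𝒯
        · intro hc
          exact hpprime.1 (Ideal.eq_top_iff_one p |>.2 hc)
      smul_mem' := by
        rintro t z ⟨s, l, hs, hp, hk⟩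
        exact ⟨s, l, hs, hp, by rw [smul_comm, hk, smul_zero]⟩ } with hKdef
  have hKmem : ∀ z : L, z ∈ K ↔
      ∃ (s : Rsub) (l : ℤ), (s : T) ∈ 𝒯 (0, l) ∧ s ∉ p ∧ (s : T) • z = 0 := fun z => Iff.rfl
  -- gradedness
  have hSgr : vnGr ℒ S := by
    intro z hz i
    rw [hSmem]
    intro s l hs hp
    have h1 := vnPj_smul_homog 𝒯 ℒ hsmul hs z i
    rw [(hSmem z).1 hz s l hs hp, vnPj_zero] at h1
    exact h1.symm
  have hKgr : vnGr ℒ K := by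
    intro z hz i
    obtain ⟨s, l, hs, hp, hk⟩ := (hKmem z).1 hz
    refine (hKmem _).2 ⟨s, l, hs, hp, ?_⟩
    have h1 := vnPj_smul_homog 𝒯 ℒ hsmul hs z i
    rw [hk, vnPj_zero] at h1
    exact h1.symm
  have hKSgr : vnGr ℒ (K ⊓ S) := by
    intro z hz i
    obtain ⟨h1, h2⟩ := Submodule.mem_inf.1 hz
    exact Submodule.mem_inf.2 ⟨hKgr z h1 i, hSgr z h2 i⟩
  -- the key equivalence between the v-number sets and the filtration data
  have hSset : ∀ (n u : ℤ),
      (∃ m ∈ ℒ (n, u), ∀ r : Rsub, r ∈ p ↔ (r : T) • m = 0) ↔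
      (∃ z, z ∈ S ∧ z ∈ ℒ (n, u) ∧ z ∉ K ⊓ S) := by
    intro n u
    constructor
    · rintro ⟨m, hmℒ, hmiff⟩
      refine ⟨m, (hSmem m).2 fun s l hs hp => (hmiff s).1 hp, hmℒ, ?_⟩
      intro hc
      obtain ⟨s, l, _, hps, hk⟩ := (hKmem m).1 (Submodule.mem_inf.1 hc).1
      exact hps ((hmiff s).2 hk)
    · rintro ⟨z, hzS, hzℒ, hzK⟩
      have hzK' : z ∉ K := fun hc => hzK (Submodule.mem_inf.2 ⟨hc, hzS⟩)
      refine ⟨z, hzℒ, fun r => ⟨?_, ?_⟩⟩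
      · intro hr
        have hsum : (r : T) = ∑ i ∈ vnSupp 𝒯 (r : T), vnPj 𝒯 (r : T) i :=
          (vnSupp_spec 𝒯 _).symm
        rw [hsum, Finset.sum_smul]
        refine Finset.sum_eq_zero fun i hi => ?_
        have hi1 : i.1 = 0 := hRsupp r i ((vnMem_supp_iff 𝒯).1 hi)
        have hieq : i = (0, i.2) := Prod.ext hi1 rfl
        exact (hSmem z).1 hzS ⟨vnPj 𝒯 (r : T) i, hRcompmem r i⟩ i.2
          (hieq ▸ vnPj_mem 𝒯 (r : T) i) (hpgraded r hr i)
      · intro hrz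
        by_contra hrp
        have hallp : ¬(∀ i ∈ vnSupp 𝒯 (r : T),
            (⟨vnPj 𝒯 (r : T) i, hRcompmem r i⟩ : Rsub) ∈ p) := by
          intro hall
          apply hrp
          have hre : r = ∑ i ∈ vnSupp 𝒯 (r : T),
              (⟨vnPj 𝒯 (r : T) i, hRcompmem r i⟩ : Rsub) := by
            apply Subtype.ext
            rw [AddSubmonoidClass.coe_finset_sum]
            exact (vnSupp_spec 𝒯 _).symm
          rw [hre]
          exact Ideal.sum_mem p fun i hi => hall i hi
        push_neg at hallp
        obtain ⟨i, hiM, hip⟩ := hallp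
        have hi1 : i.1 = 0 := hRsupp r i ((vnMem_supp_iff 𝒯).1 hiM)
        have hieq : i = (0, i.2) := Prod.ext hi1 rfl
        have hkill : vnPj 𝒯 (r : T) i • z = 0 := by
          have h1 := vnPj_smul_cyc 𝒯 ℒ hsmul hzℒ (r : T) (i + (n, u))
          rw [add_sub_cancel_right] at h1
          rw [← h1, hrz, vnPj_zero]
        exact hzK' ((hKmem z).2 ⟨⟨vnPj 𝒯 (r : T) i, hRcompmem r i⟩, i.2,
          hieq ▸ vnPj_mem 𝒯 (r : T) i, hip, hkill⟩)
  -- apply the graded prime filtration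
  obtain ⟨s, P, e, hPr, hKill, hIff⟩ :=
    vn_filtration 𝒯 ℒ hsmul (K ⊓ S) S hKSgr hSgr inf_le_right
  -- the filtration primes contain the low y's
  have hyP : ∀ (k : Fin s) (j : Fin c), j < δ → y j ∈ P k := by
    intro k j hj
    obtain ⟨q, hq⟩ := Ideal.mem_radical_iff.1 (hδmin j hj)
    have hkills : ∀ z : L, (y j ^ q) • z = 0 := fun z =>
      Submodule.mem_annihilator.1 hq z Submodule.mem_top
    exact (hPr k).mem_of_pow_mem q (hKill k _ hkills)
  -- least allowed index for each active prime
  set Act : Fin s → Prop := fun k => ∃ j : Fin c, y j ∉ P k with hAct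
  set AS : Fin s → Finset (Fin c) := fun k => Finset.univ.filter (fun j => y j ∉ P k) with hAS
  have hASne : ∀ k, Act k → (AS k).Nonempty := by
    rintro k ⟨j, hj⟩
    exact ⟨j, Finset.mem_filter.2 ⟨Finset.mem_univ j, hj⟩⟩
  set jk : Fin s → Fin c := fun k => if h : Act k then (AS k).min' (hASne k h) else δ with hjk
  have hjknotin : ∀ k (h : Act k), y (jk k) ∉ P k := by
    intro k h
    have h1 : jk k = (AS k).min' (hASne k h) := by rw [hjk]; exact dif_pos h
    rw [h1]
    exact (Finset.mem_filter.1 ((AS k).min'_mem (hASne k h))).2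
  have hjkle : ∀ k (h : Act k) (j : Fin c), y j ∉ P k → jk k ≤ j := by
    intro k h j hj
    have h1 : jk k = (AS k).min' (hASne k h) := by rw [hjk]; exact dif_pos h
    rw [h1]
    exact Finset.min'_le _ _ (Finset.mem_filter.2 ⟨Finset.mem_univ j, hj⟩)
  have hδjk : ∀ k (h : Act k), δ ≤ jk k := by
    intro k h
    by_contra hlt
    exact hjknotin k h (hyP k (jk k) (lt_of_not_ge hlt))
  -- lower bounds on degrees of elements outside P k
  have hWlow : ∀ k (h : Act k) (mm w : ℤ) (t : T), t ∈ 𝒯 (mm, w) → t ∉ P k →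
      0 ≤ mm ∧ mm * d (jk k) ≤ w := by
    intro k h mm w t ht htP
    have hmm : 0 ≤ mm := by
      by_contra hneg
      apply htP
      have hbot := hTnn (mm, w) (Or.inl (by omega))
      rw [hbot] at ht
      rw [AddSubgroup.mem_bot.1 ht]
      exact zero_mem _
    refine ⟨hmm, ?_⟩
    by_contra hlt
    apply htP
    refine vn_piece_subset_prime 𝒯 x y f d hx hy halg hgen (P k) ?_ t ht
    intro hmem
    have h2 := vn_E_bound 𝒯 x y f d hTnn hx (P k) (d (jk k))
      (fun j hj => hdmono (hjkle k h j hj)) (mm, w) hmem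
    exact hlt h2.2
  have hWempty : ∀ k, ¬Act k → ∀ (mm w : ℤ) (t : T), 1 ≤ mm → t ∈ 𝒯 (mm, w) → t ∈ P k := by
    intro k h mm w t hmm ht
    refine vn_piece_subset_prime 𝒯 x y f d hx hy halg hgen (P k) ?_ t ht
    intro hmem
    have h0 := vn_E_first_zero x y f d (P k)
      (fun j => by by_contra hc; exact h ⟨j, hc⟩) (mm, w) hmem
    simp only at h0
    omega
  -- upper witnesses for active primes
  have hWmem : ∀ k (h : Act k) (n : ℤ), (e k).1 ≤ n →
      ∃ t, t ∈ 𝒯 ((n, (e k).2 + (n - (e k).1) * d (jk k)) - e k) ∧ t ∉ P k := by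
    intro k h n hn
    refine ⟨y (jk k) ^ (n - (e k).1).toNat, ?_, ?_⟩
    · have h1 := SetLike.pow_mem_graded (n - (e k).1).toNat (hy (jk k))
      have h2 : ((n - (e k).1).toNat : ℤ) = n - (e k).1 := Int.toNat_of_nonneg (by omega)
      have h3 : (n - (e k).1).toNat • (((1 : ℤ), d (jk k)) : ℤ × ℤ) =
          ((n, (e k).2 + (n - (e k).1) * d (jk k)) : ℤ × ℤ) - e k := by
        have h4 : (n - (e k).1).toNat • (((1 : ℤ), d (jk k)) : ℤ × ℤ) =
            (((n - (e k).1).toNat : ℤ) * 1, ((n - (e k).1).toNat : ℤ) * d (jk k)) := by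
          rw [Prod.smul_mk, nsmul_eq_mul, nsmul_eq_mul]
        rw [h4, h2]
        have h5 : (((n, (e k).2 + (n - (e k).1) * d (jk k)) : ℤ × ℤ) - e k) =
            ((n - (e k).1, (e k).2 + (n - (e k).1) * d (jk k) - (e k).2) : ℤ × ℤ) := rfl
        rw [h5]
        apply Prod.ext
        · simp
        · simp only
          ring
      rw [h3] at h1
      exact h1
    · intro hc
      exact hjknotin k h ((hPr k).mem_of_pow_mem _ hc)
  -- uniform bound on the first coordinates of the shifts
  set amax : ℤ := ((Finset.univ.sup (fun k : Fin s => (e k).1.toNat) : ℕ) : ℤ) with hamax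
  have hamax_ge : ∀ k, (e k).1 ≤ amax := by
    intro k
    calc (e k).1 ≤ ((e k).1.toNat : ℤ) := Int.self_le_toNat _
      _ ≤ amax := by
          rw [hamax]
          exact_mod_cast Finset.le_sup (f := fun k : Fin s => (e k).1.toNat)
            (Finset.mem_univ k)
  -- the active set is nonempty
  set Λ : Finset (Fin s) := Finset.univ.filter Act with hΛdef
  set n₁ : ℤ := max na (amax + 1) with hn₁
  obtain ⟨m₁, hm₁row, hm₁iff⟩ := hassn n₁ (le_max_left _ _)
  have hm₁S : m₁ ∈ S := (hSmem m₁).2 fun s' l hs' hp' => (hm₁iff s').1 hp'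
  have hm₁K : m₁ ∉ K := by
    intro hc
    obtain ⟨s', l, _, hps', hk⟩ := (hKmem m₁).1 hc
    exact hps' ((hm₁iff s').2 hk)
  have hcomp : ∃ i, vnPj ℒ m₁ i ∉ K ⊓ S := by
    by_contra hcon
    push_neg at hcon
    apply hm₁K
    have hm : m₁ ∈ K ⊓ S := by
      rw [← vnSupp_spec ℒ m₁]
      exact Submodule.sum_mem _ fun i _ => hcon i
    exact (Submodule.mem_inf.1 hm).1
  obtain ⟨i₁, hi₁⟩ := hcomp
  have hi₁ne : vnPj ℒ m₁ i₁ ≠ 0 := by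
    intro hc
    rw [hc] at hi₁
    exact hi₁ (Submodule.zero_mem _)
  have hi₁1 : i₁.1 = n₁ := vn_row_supp ℒ n₁ m₁ hm₁row i₁ hi₁ne
  have hi₁eq : i₁ = (n₁, i₁.2) := Prod.ext hi₁1 rfl
  obtain ⟨k₁, t₁, ht₁, ht₁P⟩ := (hIff (n₁, i₁.2)).1
    ⟨vnPj ℒ m₁ i₁, hSgr m₁ hm₁S i₁, hi₁eq ▸ vnPj_mem ℒ m₁ i₁, hi₁eq ▸ hi₁⟩
  have hk₁act : Act k₁ := by
    by_contra hcon
    apply ht₁P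
    have hdeg : ((n₁, i₁.2) : ℤ × ℤ) - e k₁ = (n₁ - (e k₁).1, i₁.2 - (e k₁).2) := rfl
    refine hWempty k₁ hcon (n₁ - (e k₁).1) (i₁.2 - (e k₁).2) t₁ ?_ (hdeg ▸ ht₁)
    have h5 : amax + 1 ≤ n₁ := le_max_right _ _
    have h6 := hamax_ge k₁
    omega
  have hΛne : Λ.Nonempty := ⟨k₁, Finset.mem_filter.2 ⟨Finset.mem_univ k₁, hk₁act⟩⟩
  -- choose the eventually-minimal affine function
  obtain ⟨k₀, hk₀Λ, n₃, hn₃0, hmin⟩ := vn_min_affine Λ hΛne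
    (fun k => d (jk k)) (fun k => (e k).2 - (e k).1 * d (jk k))
  have hk₀act : Act k₀ := (Finset.mem_filter.1 hk₀Λ).2
  refine ⟨jk k₀, hδjk k₀ hk₀act, (e k₀).2 - (e k₀).1 * d (jk k₀), max n₃ (amax + 1), ?_⟩
  intro n hn
  have hn1 : amax + 1 ≤ n := le_trans (le_max_right _ _) hn
  have hn3 : n₃ ≤ n := le_trans (le_max_left _ _) hn
  apply IsLeast.csInf_eq
  constructor
  · -- the minimum is attained
    show _ ∈ {u : ℤ | ∃ m ∈ ℒ (n, u), ∀ r : Rsub, r ∈ p ↔ (r : T) • m = 0}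
    have hu : d (jk k₀) * n + ((e k₀).2 - (e k₀).1 * d (jk k₀)) =
        (e k₀).2 + (n - (e k₀).1) * d (jk k₀) := by ring
    rw [Set.mem_setOf_eq, hu]
    apply (hSset n _).2
    obtain ⟨t, ht, htP⟩ := hWmem k₀ hk₀act n (by have := hamax_ge k₀; omega)
    exact (hIff (n, (e k₀).2 + (n - (e k₀).1) * d (jk k₀))).2 ⟨k₀, t, ht, htP⟩
  · -- lower bound
    intro u hu
    obtain ⟨k, t, ht, htP⟩ := (hIff (n, u)).1 ((hSset n u).1 hu)
    have hdeg : ((n, u) : ℤ × ℤ) - e k = (n - (e k).1, u - (e k).2) := rfl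
    rw [hdeg] at ht
    have hkact : Act k := by
      by_contra hcon
      exact htP (hWempty k hcon _ _ t (by have := hamax_ge k; omega) ht)
    have hlow := hWlow k hkact _ _ t ht htP
    have hkΛ : k ∈ Λ := Finset.mem_filter.2 ⟨Finset.mem_univ k, hkact⟩
    have hcomp2 := hmin n hn3 k hkΛ
    have h7 : d (jk k) * n + ((e k).2 - (e k).1 * d (jk k)) ≤ u := by nlinarith [hlow.2]
    linarith
end
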